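/- arXiv:1803.08658 — 7 statements merged into one kernel-verified Lean document; each statement's English description precedes it below -/
import Mathlib

section
/- For any simple loopless graph G of order n and any negative real number x, (-1)^n · P(G, x) > 0, where P(G, x) is the chromatic polynomial of G. -/
open Polynomial

/-- `P` is the chromatic polynomial of `G`: for every natural number `k`,
`P` evaluated at `k` equals the number of proper `k`-colorings of `G`. -/
def IsChromPoly {W : Type*} (G : SimpleGraph W) (P : Polynomial ℝ) : Prop :=
  ∀ k : ℕ, P.eval (k : ℝ) = (Nat.card (G.Coloring (Fin k)) : ℝ)

namespace ChromAux

open SimpleGraph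

universe u

variable {V : Type u}

/-- Colorings as a subtype of functions. -/
def colSub (G : SimpleGraph V) (k : ℕ) :
    G.Coloring (Fin k) ≃ {f : V → Fin k // ∀ ⦃a b⦄, G.Adj a b → f a ≠ f b} where
  toFun c := ⟨c, fun _ _ h => c.valid h⟩
  invFun f := Coloring.mk f.1 (fun {a b} h => f.2 h)
  left_inv c := rfl
  right_inv f := rfl

lemma poly_eq_of_forall_nat (p q : ℝ[X]) (h : ∀ k : ℕ, p.eval (k : ℝ) = q.eval (k : ℝ)) :
    p = q := by
  have hinf : (Set.range ((↑) : ℕ → ℝ)).Infinite :=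
    Set.infinite_range_of_injective Nat.cast_injective
  have h0 : p - q = 0 := by
    apply Polynomial.eq_zero_of_infinite_isRoot
    apply hinf.mono
    rintro _ ⟨k, rfl⟩
    simp [Polynomial.IsRoot, h k]
  exact sub_eq_zero.mp h0

/-- The contraction of the (non-)edge `u v`, as a graph on vertices `≠ v`. -/
def contractAt (G : SimpleGraph V) (u v : V) : SimpleGraph {w : V // w ≠ v} where
  Adj a b := a ≠ b ∧ (G.Adj a.1 b.1 ∨ (a.1 = u ∧ G.Adj v b.1) ∨ (b.1 = u ∧ G.Adj v a.1))
  symm := ⟨fun a b h => ⟨h.1.symm, by tauto⟩⟩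
  loopless := ⟨fun a h => h.1 rfl⟩

section Split

variable (G : SimpleGraph V) (u v : V) (k : ℕ)

private abbrev G' := G.deleteEdges {s(u, v)}

private abbrev S' := {f : V → Fin k // ∀ ⦃a b⦄, (G' G u v).Adj a b → f a ≠ f b}

lemma not_adj_vu : ¬ (G' G u v).Adj v u := by
  simp [deleteEdges_adj, Sym2.eq_swap]

/-- Colorings of `G` correspond to colorings of `G - uv` with `f u ≠ f v`. -/
def e1 (huv : G.Adj u v) :
    {f : S' G u v k // ¬ f.1 u = f.1 v} ≃
      {f : V → Fin k // ∀ ⦃a b⦄, G.Adj a b → f a ≠ f b} where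
  toFun p := ⟨p.1.1, by
    intro a b hab
    by_cases he : s(a, b) = s(u, v)
    · rcases Sym2.eq_iff.mp he with ⟨rfl, rfl⟩ | ⟨rfl, rfl⟩
      · exact p.2
      · exact fun h => p.2 h.symm
    · exact p.1.2 (deleteEdges_adj.mpr ⟨hab, by simpa using he⟩)⟩
  invFun q := ⟨⟨q.1, fun a b hab => q.2 (deleteEdges_adj.mp hab).1⟩, q.2 huv⟩
  left_inv p := rfl
  right_inv q := rfl

/-- Colorings of `G - uv` with `f u = f v` correspond to colorings of the contraction. -/
def e2 [DecidableEq V] (huv : G.Adj u v) :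
    {f : S' G u v k // f.1 u = f.1 v} ≃
      {g : {w : V // w ≠ v} → Fin k //
        ∀ ⦃a b⦄, (contractAt (G' G u v) u v).Adj a b → g a ≠ g b} where
  toFun p := ⟨fun a => p.1.1 a.1, by
    rintro a b ⟨hne, hab | ⟨hau, hvb⟩ | ⟨hbu, hva⟩⟩
    · exact p.1.2 hab
    · dsimp only
      rw [hau, p.2]
      exact p.1.2 hvb
    · dsimp only
      rw [hbu, p.2]
      exact fun h => p.1.2 hva h.symm⟩
  invFun q := by
    refine ⟨⟨fun w => if h : w = v then q.1 ⟨u, G.ne_of_adj huv⟩ else q.1 ⟨w, h⟩, ?_⟩, ?_⟩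
    · intro a b hab
      dsimp only
      have hne : a ≠ b := (G' G u v).ne_of_adj hab
      by_cases ha : a = v <;> by_cases hb : b = v
      · exact absurd (ha.trans hb.symm) hne
      · rw [dif_pos ha, dif_neg hb]
        have hvb : (G' G u v).Adj v b := ha ▸ hab
        have hub : u ≠ b := by
          intro h
          cases h; exact not_adj_vu G u v hvb
        refine q.2 ⟨fun hh => hub (congrArg Subtype.val hh), Or.inr (Or.inl ⟨rfl, hvb⟩)⟩
      · rw [dif_pos hb, dif_neg ha]
        have hva : (G' G u v).Adj v a := hb ▸ hab.symm
        have hua : u ≠ a := by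
          intro h
          cases h; exact not_adj_vu G u v hva
        intro h
        exact q.2 ⟨fun hh => hua (congrArg Subtype.val hh),
          Or.inr (Or.inl ⟨rfl, hva⟩)⟩ h.symm
      · rw [dif_neg ha, dif_neg hb]
        exact q.2 ⟨fun hh => hne (congrArg Subtype.val hh), Or.inl hab⟩
    · dsimp only
      rw [dif_pos rfl, dif_neg (G.ne_of_adj huv)]
  left_inv p := by
    apply Subtype.ext
    apply Subtype.ext
    funext w
    dsimp only
    by_cases h : w = v
    · rw [dif_pos h, h]
      exact p.2
    · rw [dif_neg h]
  right_inv q := by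
    apply Subtype.ext
    funext a
    dsimp only
    rw [dif_neg a.2]

lemma card_split [Fintype V] (huv : G.Adj u v) :
    Nat.card ((G' G u v).Coloring (Fin k)) =
      Nat.card (G.Coloring (Fin k)) +
        Nat.card ((contractAt (G' G u v) u v).Coloring (Fin k)) := by
  classical
  have h1 : Nat.card ((G' G u v).Coloring (Fin k)) = Nat.card (S' G u v k) :=
    Nat.card_congr (colSub _ _)
  have h2 : Nat.card (S' G u v k) =
      Nat.card {f : S' G u v k // f.1 u = f.1 v} +
        Nat.card {f : S' G u v k // ¬ f.1 u = f.1 v} := by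
    rw [← Nat.card_sum]
    exact Nat.card_congr (Equiv.sumCompl (fun f : S' G u v k => f.1 u = f.1 v)).symm
  have h3 : Nat.card {f : S' G u v k // ¬ f.1 u = f.1 v} = Nat.card (G.Coloring (Fin k)) :=
    Nat.card_congr ((e1 G u v k huv).trans (colSub G k).symm)
  have h4 : Nat.card {f : S' G u v k // f.1 u = f.1 v} =
      Nat.card ((contractAt (G' G u v) u v).Coloring (Fin k)) :=
    Nat.card_congr ((e2 G u v k huv).trans (colSub (contractAt (G' G u v) u v) k).symm)
  omega

end Split

lemma edgeless_case [Fintype V] (G : SimpleGraph V) (h : ∀ a b, ¬ G.Adj a b) :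
    ∃ P : ℝ[X], IsChromPoly G P ∧
      ∀ x : ℝ, x < 0 → 0 < (-1 : ℝ) ^ (Fintype.card V) * P.eval x := by
  refine ⟨X ^ Fintype.card V, ?_, ?_⟩
  · intro k
    have e : G.Coloring (Fin k) ≃ (V → Fin k) :=
      (colSub G k).trans (Equiv.subtypeUnivEquiv (fun f a b hab => absurd hab (h a b)))
    rw [Nat.card_congr e, Nat.card_fun]
    simp [Nat.card_eq_fintype_card]
  · intro x hx
    rw [eval_pow, eval_X, ← mul_pow]
    exact pow_pos (by linarith) _

lemma key (n : ℕ) : ∀ (m : ℕ) (V : Type u) [Fintype V] (G : SimpleGraph V),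
    Fintype.card V ≤ n → Nat.card G.edgeSet ≤ m →
    ∃ P : ℝ[X], IsChromPoly G P ∧
      ∀ x : ℝ, x < 0 → 0 < (-1 : ℝ) ^ (Fintype.card V) * P.eval x := by
  induction n with
  | zero =>
    intro m V _ G hV _
    have : IsEmpty V := Fintype.card_eq_zero_iff.mp (Nat.le_zero.mp hV)
    exact edgeless_case G (fun a _ _ => this.false a)
  | succ n IHn =>
    intro m
    induction m with
    | zero =>
      intro V _ G hV hE
      refine edgeless_case G (fun a b hab => ?_)
      have hmem : s(a, b) ∈ G.edgeSet := hab
      have hfin : G.edgeSet.Finite := Set.toFinite _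
      have h0 : G.edgeSet.ncard = 0 := by
        rw [← Nat.card_coe_set_eq]; omega
      rw [Set.ncard_eq_zero hfin] at h0
      simp [h0] at hmem
    | succ m IHm =>
      intro V _ G hV hE
      classical
      by_cases hG : ∀ a b, ¬ G.Adj a b
      · exact edgeless_case G hG
      · push_neg at hG
        obtain ⟨u, v, huv⟩ := hG
        have hfin : G.edgeSet.Finite := Set.toFinite _
        have hmem : s(u, v) ∈ G.edgeSet := huv
        -- deletion
        have hE' : Nat.card (G' G u v).edgeSet ≤ m := by
          rw [Nat.card_coe_set_eq, edgeSet_deleteEdges,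
            Set.ncard_diff_singleton_of_mem hmem]
          rw [Nat.card_coe_set_eq] at hE
          have h1 : 0 < G.edgeSet.ncard := (Set.ncard_pos hfin).mpr ⟨_, hmem⟩
          omega
        obtain ⟨Q, hQ, hQpos⟩ := IHm V (G' G u v) hV hE'
        -- contraction
        have hcardV' : Fintype.card {w : V // w ≠ v} = Fintype.card V - 1 := by
          rw [Fintype.card_subtype_compl, Fintype.card_subtype_eq]
        have hposV : 1 ≤ Fintype.card V := Fintype.card_pos_iff.mpr ⟨v⟩
        have hV' : Fintype.card {w : V // w ≠ v} ≤ n := by omega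
        obtain ⟨R, hR, hRpos⟩ :=
          IHn (Nat.card (contractAt (G' G u v) u v).edgeSet) {w : V // w ≠ v}
            (contractAt (G' G u v) u v) hV' le_rfl
        refine ⟨Q - R, ?_, ?_⟩
        · intro j
          have hsplit := card_split G u v j huv
          rw [eval_sub, hQ j, hR j]
          have hc := congrArg (fun t : ℕ => (t : ℝ)) hsplit
          push_cast at hc ⊢
          linarith
        · intro x hx
          obtain ⟨c, hc⟩ : ∃ c, Fintype.card V = c + 1 := ⟨Fintype.card V - 1, by omega⟩
          have h1 := hQpos x hx
          have h2 := hRpos x hx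
          rw [hcardV', hc] at h2
          simp only [Nat.add_sub_cancel] at h2
          rw [hc] at h1 ⊢
          rw [eval_sub]
          rw [pow_succ] at h1 ⊢
          nlinarith

end ChromAux

theorem stmt0 {V : Type*} [Fintype V] (G : SimpleGraph V) (P : Polynomial ℝ)
    (hP : IsChromPoly G P) (x : ℝ) (hx : x < 0) :
    0 < (-1 : ℝ) ^ (Fintype.card V) * P.eval x := by
  obtain ⟨P0, hP0, hpos⟩ :=
    ChromAux.key (Fintype.card V) (Nat.card G.edgeSet) V G le_rfl le_rfl
  have hPP : P = P0 := ChromAux.poly_eq_of_forall_nat P P0 (fun k => by rw [hP k, hP0 k])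
  rw [hPP]
  exact hpos x hx
end

section
/- For any connected simple graph G of order n that is not a tree, and any real x < 0, P'(G, x)/P(G, x) > 1/x + (n−1)/(x−1). -/
open Polynomial

namespace ChromAux

open SimpleGraph

universe u

variable {V : Type u}

/-- Merge vertex `v` into vertex `u`: the graph on `{w // w ≠ v}` obtained by
identifying `v` with `u`. -/
def mergeG (H : SimpleGraph V) (u v : V) : SimpleGraph {w : V // w ≠ v} where
  Adj a b := a ≠ b ∧ (H.Adj a b ∨ ((a : V) = u ∧ H.Adj v b) ∨ ((b : V) = u ∧ H.Adj (a : V) v))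
  symm := ⟨by
    rintro a b ⟨hab, h | ⟨h1, h2⟩ | ⟨h1, h2⟩⟩
    · exact ⟨hab.symm, Or.inl h.symm⟩
    · exact ⟨hab.symm, Or.inr (Or.inr ⟨h1, h2.symm⟩)⟩
    · exact ⟨hab.symm, Or.inr (Or.inl ⟨h1, h2.symm⟩)⟩⟩
  loopless := ⟨fun a h => h.1 rfl⟩

lemma mergeG_adj (H : SimpleGraph V) (u v : V) (a b : {w : V // w ≠ v}) :
    (mergeG H u v).Adj a b ↔
      a ≠ b ∧ (H.Adj a b ∨ ((a : V) = u ∧ H.Adj v b) ∨ ((b : V) = u ∧ H.Adj (a : V) v)) :=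
  Iff.rfl

lemma merge_connected {H : SimpleGraph V} {u v : V} (huv : u ≠ v) (h : H.Connected) :
    (mergeG H u v).Connected := by
  classical
  let φ : V → {w : V // w ≠ v} := fun x => if hx : x = v then ⟨u, huv⟩ else ⟨x, hx⟩
  have key : ∀ (a b : V), H.Walk a b → (mergeG H u v).Reachable (φ a) (φ b) := by
    intro a b w
    induction w with
    | nil => exact Reachable.refl _
    | @cons a c b hadj p ih =>
      refine Reachable.trans ?_ ih
      by_cases hac : φ a = φ c
      · rw [hac]
      · refine Adj.reachable ?_
        rw [mergeG_adj]
        refine ⟨hac, ?_⟩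
        by_cases ha : a = v
        · by_cases hc : c = v
          · exact absurd (by rw [ha, hc]) hac
          · refine Or.inr (Or.inl ⟨?_, ?_⟩)
            · simp [φ, ha]
            · simp only [φ, dif_neg hc]
              rw [← ha]; exact hadj
        · by_cases hc : c = v
          · refine Or.inr (Or.inr ⟨?_, ?_⟩)
            · simp [φ, hc]
            · simp only [φ, dif_neg ha]
              rw [← hc]; exact hadj
          · refine Or.inl ?_
            simp only [φ, dif_neg ha, dif_neg hc]
            exact hadj
  rw [connected_iff]
  refine ⟨?_, ⟨⟨u, huv⟩⟩⟩
  rintro ⟨x, hx⟩ ⟨y, hy⟩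
  obtain ⟨w⟩ := h.preconnected x y
  have hx' : φ x = ⟨x, hx⟩ := dif_neg hx
  have hy' : φ y = ⟨y, hy⟩ := dif_neg hy
  have := key x y w
  rwa [hx', hy'] at this

lemma merge_ncard_le [Fintype V] (H : SimpleGraph V) (u v : V) :
    (mergeG H u v).edgeSet.ncard ≤ H.edgeSet.ncard := by
  classical
  let ι : {w : V // w ≠ v} → V := Subtype.val
  let ι' : {w : V // w ≠ v} → V := fun x => if (x : V) = u then v else x
  have hι : Function.Injective ι := Subtype.val_injective
  have hι' : Function.Injective ι' := by
    intro x y hxy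
    by_cases hx : (x : V) = u <;> by_cases hy : (y : V) = u
    · exact Subtype.ext (hx.trans hy.symm)
    · simp only [ι', if_pos hx, if_neg hy] at hxy; exact absurd hxy.symm y.2
    · simp only [ι', if_pos hy, if_neg hx] at hxy; exact absurd hxy x.2
    · simp only [ι', if_neg hx, if_neg hy] at hxy; exact Subtype.ext hxy
  have hv : ∀ e : Sym2 {w : V // w ≠ v}, v ∉ Sym2.map ι e := by
    intro e
    induction e using Sym2.ind with
    | _ a b =>
      rw [Sym2.map_pair_eq, Sym2.mem_iff]
      rintro (h | h)
      · exact a.2 h.symm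
      · exact b.2 h.symm
  have key : ∀ e ∈ (mergeG H u v).edgeSet, Sym2.map ι e ∉ H.edgeSet →
      Sym2.map ι' e ∈ H.edgeSet ∧ v ∈ Sym2.map ι' e := by
    intro e he hm
    induction e using Sym2.ind with
    | _ a b =>
      rw [mem_edgeSet, mergeG_adj] at he
      rw [Sym2.map_pair_eq, mem_edgeSet] at hm
      obtain ⟨hab, h | ⟨h1, h2⟩ | ⟨h1, h2⟩⟩ := he
      · exact absurd h hm
      · have hbu : (b : V) ≠ u := fun hb => hab (Subtype.ext (h1.trans hb.symm))
        rw [Sym2.map_pair_eq]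
        have ha' : ι' a = v := by simp [ι', h1]
        have hb' : ι' b = (b : V) := by simp [ι', hbu]
        rw [ha', hb']
        exact ⟨H.mem_edgeSet.mpr h2, Sym2.mem_iff.mpr (Or.inl rfl)⟩
      · have hau : (a : V) ≠ u := fun ha => hab (Subtype.ext (ha.trans h1.symm))
        rw [Sym2.map_pair_eq]
        have hb' : ι' b = v := by simp [ι', h1]
        have ha' : ι' a = (a : V) := by simp [ι', hau]
        rw [ha', hb']
        exact ⟨H.mem_edgeSet.mpr h2, Sym2.mem_iff.mpr (Or.inr rfl)⟩
  apply Set.ncard_le_ncard_of_injOn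
    (fun e => if Sym2.map ι e ∈ H.edgeSet then Sym2.map ι e else Sym2.map ι' e)
  · intro e he
    by_cases hm : Sym2.map ι e ∈ H.edgeSet
    · simpa [hm] using hm
    · simpa [hm] using (key e he hm).1
  · intro e1 he1 e2 he2 heq
    simp only at heq
    by_cases h1 : Sym2.map ι e1 ∈ H.edgeSet <;> by_cases h2 : Sym2.map ι e2 ∈ H.edgeSet
    · rw [if_pos h1, if_pos h2] at heq; exact Sym2.map.injective hι heq
    · rw [if_pos h1, if_neg h2] at heq
      exact absurd (heq ▸ (key e2 he2 h2).2) (hv e1)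
    · rw [if_neg h1, if_pos h2] at heq
      exact absurd (heq ▸ (key e1 he1 h1).2) (hv e2)
    · rw [if_neg h1, if_neg h2] at heq; exact Sym2.map.injective hι' heq

@[simp] lemma relHom_coe_mk {α β : Type*} {r : α → α → Prop} {s : β → β → Prop}
    (f : α → β) (h : ∀ {a b}, r a b → s (f a) (f b)) (a : α) :
    (RelHom.mk f @h) a = f a := rfl

@[simp] lemma coloring_mk_apply {G : SimpleGraph V} {α : Type*} (f : V → α)
    (h : ∀ {a b : V}, G.Adj a b → f a ≠ f b) (w : V) :
    (Coloring.mk f h) w = f w := rfl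

open Classical in
/-- Colorings of the merged graph correspond to colorings of `H` giving `u` and `v`
the same color. -/
noncomputable def mergeColEquiv (H : SimpleGraph V) {u v : V} (huv : u ≠ v)
    (hna : ¬ H.Adj u v) (k : ℕ) :
    {f : H.Coloring (Fin k) // f u = f v} ≃ (mergeG H u v).Coloring (Fin k) where
  toFun := fun p => Coloring.mk (fun w => p.1 w)
    (by
      rintro ⟨a, ha⟩ ⟨b, hb⟩ hadj
      rw [mergeG_adj] at hadj
      obtain ⟨hab, h | ⟨h1, h2⟩ | ⟨h1, h2⟩⟩ := hadj
      · exact p.1.valid h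
      · simp only at h1 h2 ⊢
        rw [h1, p.2]
        exact p.1.valid h2
      · simp only at h1 h2 ⊢
        rw [h1]
        intro hh
        exact p.1.valid h2 (hh.trans p.2)
      )
  invFun := fun g =>
    ⟨Coloring.mk (fun w => if hw : w = v then g ⟨u, huv⟩ else g ⟨w, hw⟩)
      (by
        intro a b hadj
        by_cases ha : a = v
        · by_cases hb : b = v
          · rw [ha, hb] at hadj; exact absurd hadj (H.irrefl)
          · rw [dif_pos ha, dif_neg hb]
            apply g.valid
            rw [mergeG_adj]
            constructor
            · intro hh
              have hub : u = b := congrArg Subtype.val hh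
              exact hna (by rw [hub, ← ha]; exact hadj.symm)
            · exact Or.inr (Or.inl ⟨rfl, ha ▸ hadj⟩)
        · by_cases hb : b = v
          · rw [dif_neg ha, dif_pos hb]
            apply g.valid
            rw [mergeG_adj]
            constructor
            · intro hh
              have hau : a = u := congrArg Subtype.val hh
              exact hna (by rw [← hau, ← hb]; exact hadj)
            · exact Or.inr (Or.inr ⟨rfl, hb ▸ hadj⟩)
          · rw [dif_neg ha, dif_neg hb]
            apply g.valid
            rw [mergeG_adj]
            exact ⟨fun hh => hadj.ne (congrArg Subtype.val hh), Or.inl hadj⟩),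
      by simp [Coloring.mk, huv]⟩
  left_inv := by
    rintro ⟨c, hc⟩
    apply Subtype.ext
    apply DFunLike.ext
    intro w
    by_cases hw : w = v
    · simp [Coloring.mk, hw, hc]
    · simp [Coloring.mk, hw]
  right_inv := by
    intro g
    apply DFunLike.ext
    rintro ⟨w, hw⟩
    simp [Coloring.mk, hw]

/-- Colorings of `G` correspond to colorings of `G` minus the edge `uv` which give `u` and `v`
different colors. -/
def delColEquiv (G : SimpleGraph V) {u v : V} (hadj : G.Adj u v) (k : ℕ) :
    G.Coloring (Fin k) ≃ {f : (G \ fromEdgeSet {s(u,v)}).Coloring (Fin k) // f u ≠ f v} where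
  toFun := fun c =>
    ⟨Coloring.mk (fun w => c w) (fun {a b} h => c.valid ((sdiff_adj _ _ _ _).mp h).1),
      c.valid hadj⟩
  invFun := fun p => Coloring.mk (fun w => p.1 w)
    (by
      intro a b h
      by_cases he : s(a, b) = s(u, v)
      · rcases Sym2.eq_iff.mp he with ⟨rfl, rfl⟩ | ⟨rfl, rfl⟩
        · exact p.2
        · exact p.2.symm
      · exact p.1.valid ((sdiff_adj _ _ _ _).mpr ⟨h, by simp [fromEdgeSet_adj, he]⟩))
  left_inv := fun c => DFunLike.ext _ _ fun w => rfl
  right_inv := fun p => Subtype.ext (DFunLike.ext _ _ fun w => rfl)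

lemma card_del_merge [Fintype V] (G : SimpleGraph V) {u v : V} (hadj : G.Adj u v) (k : ℕ) :
    Nat.card ((G \ fromEdgeSet {s(u,v)}).Coloring (Fin k)) =
      Nat.card (G.Coloring (Fin k)) +
      Nat.card ((mergeG (G \ fromEdgeSet {s(u,v)}) u v).Coloring (Fin k)) := by
  classical
  set D := G \ fromEdgeSet {s(u,v)} with hD
  have hna : ¬ D.Adj u v := by
    rw [hD, sdiff_adj]
    rintro ⟨h1, h2⟩
    exact h2 ((fromEdgeSet_adj _).mpr ⟨rfl, hadj.ne⟩)
  have e1 : D.Coloring (Fin k) ≃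
      {f : D.Coloring (Fin k) // f u ≠ f v} ⊕ {f : D.Coloring (Fin k) // ¬ f u ≠ f v} :=
    (Equiv.sumCompl _).symm
  have h2 : Nat.card (D.Coloring (Fin k)) =
      Nat.card {f : D.Coloring (Fin k) // f u ≠ f v} +
      Nat.card {f : D.Coloring (Fin k) // f u = f v} := by
    rw [Nat.card_congr e1, Nat.card_sum]
    congr 1
    exact Nat.card_congr (Equiv.subtypeEquivRight (fun f => not_not))
  rw [h2, ← Nat.card_congr (delColEquiv G hadj k), Nat.card_congr (mergeColEquiv D hadj.ne hna k)]

lemma card_noedge [Fintype V] (G : SimpleGraph V) (hno : ∀ a b : V, ¬ G.Adj a b) (k : ℕ) :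
    Nat.card (G.Coloring (Fin k)) = k ^ Fintype.card V := by
  have e : G.Coloring (Fin k) ≃ (V → Fin k) :=
    { toFun := fun c => c
      invFun := fun f => Coloring.mk f (fun {a b} h => absurd h (hno a b))
      left_inv := fun c => DFunLike.ext _ _ fun w => rfl
      right_inv := fun f => rfl }
  rw [Nat.card_congr e, Nat.card_fun, Nat.card_eq_fintype_card, Nat.card_eq_fintype_card,
    Fintype.card_fin]

lemma poly_eq_of_nat_eval {P Q : ℝ[X]} (h : ∀ k : ℕ, P.eval (k : ℝ) = Q.eval (k : ℝ)) :
    P = Q := by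
  have hPQ : P - Q = 0 := by
    apply Polynomial.eq_zero_of_infinite_isRoot
    apply Set.Infinite.mono (s := Set.range (fun k : ℕ => (k : ℝ)))
    · rintro x ⟨k, rfl⟩
      simp [Polynomial.IsRoot, h k]
    · exact Set.infinite_range_of_injective Nat.cast_injective
  exact sub_eq_zero.mp hPQ

lemma chrom_exists : ∀ (m : ℕ) (V : Type u) [Fintype V] (G : SimpleGraph V),
    G.edgeSet.ncard ≤ m → ∃ P : ℝ[X], IsChromPoly G P := by
  intro m
  induction m with
  | zero =>
    intro V _ G hG
    have hempty : G.edgeSet = ∅ := (Set.ncard_eq_zero (Set.toFinite _)).mp (Nat.le_zero.mp hG)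
    have hno : ∀ a b : V, ¬ G.Adj a b := by
      intro a b hab
      have : s(a, b) ∈ G.edgeSet := G.mem_edgeSet.mpr hab
      rw [hempty] at this
      exact this
    refine ⟨X ^ (Fintype.card V), fun k => ?_⟩
    rw [eval_pow, eval_X, card_noedge G hno k]
    push_cast
    ring
  | succ m ih =>
    intro V _ G hG
    classical
    by_cases hno : ∀ a b : V, ¬ G.Adj a b
    · refine ⟨X ^ (Fintype.card V), fun k => ?_⟩
      rw [eval_pow, eval_X, card_noedge G hno k]
      push_cast
      ring
    · push_neg at hno
      obtain ⟨u, v, hadj⟩ := hno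
      set D := G \ fromEdgeSet {s(u,v)} with hDdef
      have hmemE : s(u,v) ∈ G.edgeSet := G.mem_edgeSet.mpr hadj
      have hDedge : D.edgeSet = G.edgeSet \ {s(u,v)} := by
        rw [hDdef, edgeSet_sdiff, edgeSet_fromEdgeSet, edgeSet_sdiff_sdiff_isDiag]
      have hDcard : D.edgeSet.ncard ≤ m := by
        have h1 := Set.ncard_diff_singleton_add_one hmemE (Set.toFinite _)
        rw [hDedge]
        omega
      have hMcard : (mergeG D u v).edgeSet.ncard ≤ m :=
        le_trans (merge_ncard_le D u v) hDcard
      obtain ⟨PD, hPD⟩ := ih _ D hDcard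
      obtain ⟨PM, hPM⟩ := ih _ (mergeG D u v) hMcard
      refine ⟨PD - PM, fun k => ?_⟩
      have hcount := card_del_merge G hadj k
      rw [eval_sub, hPD k, hPM k]
      rw [← hDdef] at hcount
      rw [hcount]
      push_cast
      ring

lemma delete_connected {G : SimpleGraph V} {u v : V} (hadj : G.Adj u v)
    (hnb : ¬ G.IsBridge s(u,v)) (hc : G.Connected) :
    (G \ fromEdgeSet {s(u,v)}).Connected := by
  set D := G \ fromEdgeSet {s(u,v)} with hD
  have hr : D.Reachable u v := by
    by_contra h
    exact hnb (isBridge_iff.mpr h)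
  have step : ∀ a b : V, G.Adj a b → D.Reachable a b := by
    intro a b hab
    by_cases he : s(a, b) = s(u, v)
    · rcases Sym2.eq_iff.mp he with ⟨rfl, rfl⟩ | ⟨rfl, rfl⟩
      · exact hr
      · exact hr.symm
    · exact Adj.reachable ((sdiff_adj _ _ _ _).mpr ⟨hab, by simp [fromEdgeSet_adj, he]⟩)
  rw [connected_iff] at hc ⊢
  refine ⟨?_, hc.2⟩
  intro a b
  obtain ⟨w⟩ := hc.1 a b
  induction w with
  | nil => exact Reachable.refl _
  | cons h p ih => exact (step _ _ h).trans ih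

lemma exists_leaf [Fintype V] {T : SimpleGraph V} (hc : T.Connected) (ha : T.IsAcyclic)
    (h2 : 2 ≤ Fintype.card V) : ∃ u w, T.Adj u w ∧ ∀ b, T.Adj u b → b = w := by
  classical
  have hdeg : ∀ x : V, 0 < T.degree x := by
    intro x
    rw [T.degree_pos_iff_exists_adj]
    obtain ⟨y, hy⟩ := Fintype.exists_ne_of_one_lt_card (by omega) x
    obtain ⟨w⟩ := hc.preconnected x y
    cases w with
    | nil => exact absurd rfl hy.symm
    | cons h p => exact ⟨_, h⟩
  have hsum : ∑ x, T.degree x = 2 * T.edgeFinset.card := T.sum_degrees_eq_twice_card_edges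
  have htree : T.edgeFinset.card + 1 = Fintype.card V := IsTree.card_edgeFinset ⟨hc, ha⟩
  have hone : ∃ u : V, T.degree u = 1 := by
    by_contra h
    push_neg at h
    have h2' : ∀ x : V, 2 ≤ T.degree x := by
      intro x
      have h1 := hdeg x
      have h2 := h x
      omega
    have hlow : Fintype.card V * 2 ≤ ∑ x, T.degree x := by
      calc Fintype.card V * 2 = ∑ _x : V, 2 := by
            rw [Finset.sum_const, Finset.card_univ, smul_eq_mul]
        _ ≤ ∑ x, T.degree x := Finset.sum_le_sum (fun x _ => h2' x)
    omega
  obtain ⟨u, hu⟩ := hone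
  have hcard1 : (T.neighborFinset u).card = 1 := hu
  obtain ⟨w, hw⟩ := Finset.card_eq_one.mp hcard1
  refine ⟨u, w, ?_, ?_⟩
  · have : w ∈ T.neighborFinset u := by rw [hw]; exact Finset.mem_singleton_self w
    exact (T.mem_neighborFinset u w).mp this
  · intro b hb
    have : b ∈ T.neighborFinset u := (T.mem_neighborFinset u b).mpr hb
    rw [hw] at this
    exact Finset.mem_singleton.mp this

lemma merge_leaf_adj {T : SimpleGraph V} {u w : V} (hleaf : ∀ b, T.Adj u b → b = w)
    (a b : {x : V // x ≠ u}) : (mergeG T w u).Adj a b ↔ T.Adj a b := by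
  rw [mergeG_adj]
  constructor
  · rintro ⟨hab, h | ⟨h1, h2⟩ | ⟨h1, h2⟩⟩
    · exact h
    · exact absurd (Subtype.ext (h1.trans (hleaf _ h2).symm)) hab
    · exact absurd (Subtype.ext ((hleaf _ h2.symm).trans h1.symm)) hab
  · intro h
    exact ⟨fun hh => h.ne (congrArg Subtype.val hh), Or.inl h⟩

open Classical in
/-- Colorings of a graph with a leaf `u` (with unique neighbor `w`): choose a coloring of
the rest and a color for `u` different from that of `w`. -/
noncomputable def leafColEquiv {T : SimpleGraph V} {u w : V} (hadj : T.Adj u w)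
    (hleaf : ∀ b, T.Adj u b → b = w) (k : ℕ) :
    T.Coloring (Fin k) ≃
      Σ c : (mergeG T w u).Coloring (Fin k), {j : Fin k // j ≠ c ⟨w, hadj.ne'⟩} where
  toFun c :=
    ⟨Coloring.mk (fun a => c a) (fun {a b} h => c.valid ((merge_leaf_adj hleaf a b).mp h)),
      c u, by simpa [Coloring.mk] using c.valid hadj⟩
  invFun p := Coloring.mk
      (fun x => if hx : x = u then (p.2 : Fin k) else p.1 ⟨x, hx⟩)
      (by
        intro a b h
        by_cases hA : a = u
        · have hbu : b ≠ u := fun hbu => T.irrefl (hbu ▸ hA ▸ h)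
          rw [dif_pos hA, dif_neg hbu]
          have hbw : b = w := hleaf b (hA ▸ h)
          have : (⟨b, hbu⟩ : {x : V // x ≠ u}) = ⟨w, hadj.ne'⟩ := Subtype.ext hbw
          rw [this]
          exact p.2.2
        · by_cases hB : b = u
          · rw [dif_neg hA, dif_pos hB]
            have haw : a = w := hleaf a (hB ▸ h.symm)
            have : (⟨a, hA⟩ : {x : V // x ≠ u}) = ⟨w, hadj.ne'⟩ := Subtype.ext haw
            rw [this]
            exact p.2.2.symm
          · rw [dif_neg hA, dif_neg hB]
            exact p.1.valid ((merge_leaf_adj hleaf _ _).mpr h))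
  left_inv c := by
    apply DFunLike.ext
    intro x
    by_cases hx : x = u
    · simp [Coloring.mk, hx]
    · simp [Coloring.mk, hx]
  right_inv p := by
    refine Sigma.subtype_ext ?_ ?_
    · apply DFunLike.ext
      rintro ⟨x, hx⟩
      simp [Coloring.mk, hx]
    · simp [Coloring.mk]

lemma card_leaf [Fintype V] {T : SimpleGraph V} {u w : V} (hadj : T.Adj u w)
    (hleaf : ∀ b, T.Adj u b → b = w) (k : ℕ) :
    (Nat.card (T.Coloring (Fin k)) : ℝ) =
      (Nat.card ((mergeG T w u).Coloring (Fin k)) : ℝ) * ((k : ℝ) - 1) := by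
  classical
  rcases Nat.eq_zero_or_pos k with rfl | hk
  · have h1 : Nat.card (T.Coloring (Fin 0)) = 0 := by
      have : IsEmpty (T.Coloring (Fin 0)) := ⟨fun c => (c u).elim0⟩
      simp [Nat.card_of_isEmpty]
    have h2 : Nat.card ((mergeG T w u).Coloring (Fin 0)) = 0 := by
      have : IsEmpty ((mergeG T w u).Coloring (Fin 0)) := ⟨fun c => (c ⟨w, hadj.ne'⟩).elim0⟩
      simp [Nat.card_of_isEmpty]
    rw [h1, h2]
    simp
  · have hnat : Nat.card (T.Coloring (Fin k)) =
        Nat.card ((mergeG T w u).Coloring (Fin k)) * (k - 1) := by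
      rw [Nat.card_congr (leafColEquiv hadj hleaf k), Nat.card_eq_fintype_card,
        Fintype.card_sigma]
      have hfib : ∀ c : (mergeG T w u).Coloring (Fin k),
          Fintype.card {j : Fin k // j ≠ c ⟨w, hadj.ne'⟩} = k - 1 := by
        intro c
        rw [Fintype.card_subtype_compl, Fintype.card_fin, Fintype.card_subtype_eq]
      simp only [hfib]
      rw [Finset.sum_const, Finset.card_univ, smul_eq_mul, Nat.card_eq_fintype_card]
    rw [hnat]
    push_cast [Nat.cast_sub hk]
    ring

lemma tree_card : ∀ (n : ℕ) (V : Type u) [Fintype V] (T : SimpleGraph V),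
    Fintype.card V = n → T.Connected → T.IsAcyclic → ∀ k : ℕ,
    (Nat.card (T.Coloring (Fin k)) : ℝ) = (k : ℝ) * ((k : ℝ) - 1) ^ (n - 1) := by
  intro n
  induction n with
  | zero =>
    intro V _ T hn hc _ _
    have := hc.nonempty
    have : 0 < Fintype.card V := Fintype.card_pos
    omega
  | succ m ih =>
    intro V _ T hn hc ha k
    classical
    rcases Nat.eq_zero_or_pos m with rfl | hm
    · -- card V = 1
      have hsub : Subsingleton V := by
        rw [← Fintype.card_le_one_iff_subsingleton, hn]
      have hno : ∀ a b : V, ¬ T.Adj a b := fun a b hab => hab.ne (Subsingleton.elim a b)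
      rw [card_noedge T hno k, hn]
      push_cast
      ring
    · obtain ⟨u, w, hadj, hleaf⟩ := exists_leaf hc ha (by omega)
      have hcard' : Fintype.card {x : V // x ≠ u} = m := by
        have : Fintype.card {x : V // x ≠ u} = Fintype.card V - 1 := by
          rw [Fintype.card_subtype_compl, Fintype.card_subtype_eq]
        omega
      have hwu : w ≠ u := hadj.ne'
      have hc' : (mergeG T w u).Connected := merge_connected hwu hc
      have ha' : (mergeG T w u).IsAcyclic := by
        intro x c hcyc
        let f : (mergeG T w u) →g T :=
          ⟨Subtype.val, fun {a b} h => (merge_leaf_adj hleaf a b).mp h⟩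
        have hfinj : Function.Injective ⇑f := by
          intro a b hab
          exact Subtype.ext hab
        exact ha (c.map f)
          ((SimpleGraph.Walk.map_isCycle_iff_of_injective hfinj).mpr hcyc)
      rw [card_leaf hadj hleaf k, ih _ (mergeG T w u) hcard' hc' ha' k]
      have hmm : m - 1 + 1 = m := by omega
      rw [mul_assoc, ← pow_succ, hmm, Nat.add_sub_cancel]

lemma tree_poly {V : Type u} [Fintype V] {T : SimpleGraph V} (hc : T.Connected)
    (ha : T.IsAcyclic) {P : ℝ[X]} (hP : IsChromPoly T P) :
    P = X * (X - 1) ^ (Fintype.card V - 1) := by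
  apply poly_eq_of_nat_eval
  intro k
  rw [hP k, tree_card (Fintype.card V) V T rfl hc ha k]
  simp [eval_mul, eval_pow]

lemma tree_eval_pos {n : ℕ} (hn : 1 ≤ n) {x : ℝ} (hx : x < 0) :
    0 < (-1 : ℝ)^n * (X * (X - 1) ^ (n - 1) : ℝ[X]).eval x := by
  obtain ⟨m, rfl⟩ := Nat.exists_eq_add_of_le hn
  simp only [eval_mul, eval_pow, eval_sub, eval_one, eval_X]
  have h1 : 1 + m - 1 = m := by omega
  rw [h1]
  have key : (-1 : ℝ)^(1 + m) * (x * (x - 1)^m) = (-x) * ((-1) * (x - 1))^m := by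
    rw [pow_add, pow_one, mul_pow]
    ring
  rw [key, show (-1 : ℝ) * (x - 1) = 1 - x by ring]
  have hx1 : (0:ℝ) < -x := by linarith
  have hx2 : (0:ℝ) < 1 - x := by linarith
  exact mul_pos hx1 (pow_pos hx2 m)

lemma tree_ratio {n : ℕ} (hn : 1 ≤ n) {x : ℝ} (hx : x < 0) :
    (derivative (X * (X - 1) ^ (n - 1) : ℝ[X])).eval x /
      (X * (X - 1) ^ (n - 1) : ℝ[X]).eval x = 1/x + ((n : ℝ) - 1)/(x - 1) := by
  have hx0 : x ≠ 0 := ne_of_lt hx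
  have hx1 : x - 1 ≠ 0 := sub_ne_zero.mpr (by linarith)
  obtain ⟨m, rfl⟩ := Nat.exists_eq_add_of_le hn
  have h1 : 1 + m - 1 = m := by omega
  rw [h1]
  have hder : derivative (X * (X - 1) ^ m : ℝ[X]) =
      (X - 1) ^ m + X * (C (m : ℝ) * (X - 1) ^ (m - 1)) := by
    rw [derivative_mul, derivative_X, derivative_pow]
    simp [derivative_sub, derivative_X, derivative_one]
  rw [hder]
  simp only [eval_add, eval_mul, eval_pow, eval_sub, eval_one, eval_X, eval_C]
  rcases Nat.eq_zero_or_pos m with rfl | hm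
  · simp [hx0]
  · obtain ⟨j, rfl⟩ := Nat.exists_eq_succ_of_ne_zero (Nat.pos_iff_ne_zero.mp hm)
    simp only [Nat.add_sub_cancel, Nat.succ_sub_one]
    have hpne : (x - 1) ^ j ≠ 0 := pow_ne_zero _ hx1
    field_simp
    push_cast
    simp only [Nat.succ_eq_add_one]
    ring

lemma tree_case {V : Type u} [Fintype V] (G : SimpleGraph V) (hc : G.Connected)
    (hacyc : G.IsAcyclic) (P : ℝ[X]) (hP : IsChromPoly G P) (x : ℝ) (hx : x < 0) :
    (0 < (-1 : ℝ)^(Fintype.card V) * P.eval x ∧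
      1/x + ((Fintype.card V : ℝ) - 1)/(x - 1) ≤ (derivative P).eval x / P.eval x) ∧
    (¬ G.IsAcyclic →
      1/x + ((Fintype.card V : ℝ) - 1)/(x - 1) < (derivative P).eval x / P.eval x) := by
  have : Nonempty V := hc.nonempty
  have hn : 1 ≤ Fintype.card V := Fintype.card_pos
  have hPeq := tree_poly hc hacyc hP
  rw [hPeq]
  exact ⟨⟨tree_eval_pos hn hx, le_of_eq (tree_ratio hn hx).symm⟩, fun h => absurd hacyc h⟩

lemma main_induction : ∀ (m : ℕ) (V : Type u) [Fintype V] (G : SimpleGraph V),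
    G.edgeSet.ncard ≤ m → G.Connected → ∀ P : ℝ[X], IsChromPoly G P → ∀ x : ℝ, x < 0 →
    (0 < (-1 : ℝ)^(Fintype.card V) * P.eval x ∧
      1/x + ((Fintype.card V : ℝ) - 1)/(x - 1) ≤ (derivative P).eval x / P.eval x) ∧
    (¬ G.IsAcyclic →
      1/x + ((Fintype.card V : ℝ) - 1)/(x - 1) < (derivative P).eval x / P.eval x) := by
  intro m
  induction m with
  | zero =>
    intro V _ G hG hc P hP x hx
    have hempty : G.edgeSet = ∅ := (Set.ncard_eq_zero (Set.toFinite _)).mp (Nat.le_zero.mp hG)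
    have hacyc : G.IsAcyclic := by
      intro v c hcyc
      cases c with
      | nil => exact hcyc.ne_nil rfl
      | cons h p =>
        have : s(v, _) ∈ G.edgeSet := G.mem_edgeSet.mpr h
        rw [hempty] at this
        exact this
    exact tree_case G hc hacyc P hP x hx
  | succ m ih =>
    intro V _ G hG hc P hP x hx
    classical
    by_cases hacyc : G.IsAcyclic
    · exact tree_case G hc hacyc P hP x hx
    · have hbr : ¬ ∀ ⦃a b : V⦄, G.Adj a b → G.IsBridge s(a, b) :=
        fun h => hacyc (isAcyclic_iff_forall_adj_isBridge.mpr h)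
      push_neg at hbr
      obtain ⟨u, v, hadj, hnb⟩ := hbr
      set D := G \ fromEdgeSet {s(u,v)} with hDdef
      set M := mergeG D u v with hMdef
      have hne : u ≠ v := hadj.ne
      have hDconn : D.Connected := delete_connected hadj hnb hc
      have hMconn : M.Connected := merge_connected hne hDconn
      have hmemE : s(u,v) ∈ G.edgeSet := G.mem_edgeSet.mpr hadj
      have hDedge : D.edgeSet = G.edgeSet \ {s(u,v)} := by
        rw [hDdef, edgeSet_sdiff, edgeSet_fromEdgeSet, edgeSet_sdiff_sdiff_isDiag]
      have hDcard : D.edgeSet.ncard ≤ m := by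
        have h1 := Set.ncard_diff_singleton_add_one hmemE (Set.toFinite _)
        rw [hDedge]
        omega
      have hMcard : M.edgeSet.ncard ≤ m := le_trans (merge_ncard_le D u v) hDcard
      obtain ⟨PD, hPD⟩ := chrom_exists (D.edgeSet.ncard) _ D le_rfl
      obtain ⟨PM, hPM⟩ := chrom_exists (M.edgeSet.ncard) _ M le_rfl
      have hPsub : PD = P + PM := by
        apply poly_eq_of_nat_eval
        intro k
        have hcount := card_del_merge G hadj k
        rw [← hDdef, ← hMdef] at hcount
        rw [hPD k, eval_add, hP k, hPM k, hcount]
        push_cast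
        ring
      obtain ⟨⟨hApos, hAratio⟩, -⟩ := ih V D hDcard hDconn PD hPD x hx
      obtain ⟨⟨hBpos, hBratio⟩, -⟩ := ih _ M hMcard hMconn PM hPM x hx
      set nV := Fintype.card V with hnV
      have hnV2 : 2 ≤ nV := by
        rw [hnV]
        exact Fintype.one_lt_card_iff_nontrivial.mpr ⟨⟨u, v, hne⟩⟩
      have hcardM : Fintype.card {w : V // w ≠ v} = nV - 1 := by
        rw [Fintype.card_subtype_compl, Fintype.card_subtype_eq, hnV]
      rw [hcardM] at hBpos hBratio
      have hcast : ((nV - 1 : ℕ) : ℝ) = (nV : ℝ) - 1 := by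
        rw [Nat.cast_sub (by omega), Nat.cast_one]
      rw [hcast] at hBratio
      -- abbreviations
      set A := PD.eval x with hA
      set A' := (derivative PD).eval x with hA'
      set B := PM.eval x with hB
      set B' := (derivative PM).eval x with hB'
      set s : ℝ := (-1 : ℝ)^nV with hs
      set c : ℝ := 1/x + ((nV : ℝ) - 1)/(x - 1) with hcdef
      have hs0 : s ≠ 0 := by
        rw [hs]
        exact pow_ne_zero _ (by norm_num)
      obtain ⟨nn, hnn⟩ : ∃ nn, nV = nn + 1 := ⟨nV - 1, by omega⟩
      have hst : (-1 : ℝ)^(nV - 1) = -s := by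
        rw [hs, hnn, Nat.add_sub_cancel, pow_succ]
        ring
      rw [hst] at hBpos
      -- hBpos : 0 < -s * B
      have hA0 : A ≠ 0 := by
        intro h
        rw [h, mul_zero] at hApos
        exact lt_irrefl 0 hApos
      have hB0 : B ≠ 0 := by
        intro h
        rw [h, mul_zero] at hBpos
        exact lt_irrefl 0 hBpos
      have hcc' : c < 1/x + (((nV : ℝ) - 1) - 1)/(x - 1) := by
        have hx1 : x - 1 < 0 := by linarith
        have hx1' : x - 1 ≠ 0 := ne_of_lt hx1
        have hd : (1/x + (((nV : ℝ) - 1) - 1)/(x - 1)) - c = (-1)/(x - 1) := by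
          rw [hcdef]
          field_simp
          ring
        have : (0:ℝ) < (-1)/(x - 1) := div_pos_of_neg_of_neg (by norm_num) hx1
        linarith
      have hcB : c < B'/B := lt_of_lt_of_le hcc' hBratio
      have hPeval : P.eval x = A - B := by
        have hPPD : P = PD - PM := by rw [hPsub]; ring
        rw [hPPD, eval_sub]
      have hPder : (derivative P).eval x = A' - B' := by
        have hPPD : P = PD - PM := by rw [hPsub]; ring
        rw [hPPD, derivative_sub, eval_sub]
      have hsum : s * (A - B) = s * A + (-s) * B := by ring
      have hposdenom : 0 < s * (A - B) := by
        rw [hsum]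
        have h1 : 0 < -s * B := hBpos
        linarith [hApos, h1]
      have e1 : c * (s * A) ≤ s * A' := by
        have h1 := mul_le_mul_of_nonneg_right hAratio (le_of_lt hApos)
        have h2 : A'/A * (s * A) = s * A' := by
          field_simp
        calc c * (s * A) ≤ A'/A * (s * A) := h1
          _ = s * A' := h2
      have e2 : c * ((-s) * B) < (-s) * B' := by
        have h1 := mul_lt_mul_of_pos_right hcB hBpos
        have h2 : B'/B * (-s * B) = -s * B' := by
          field_simp
        calc c * (-s * B) < B'/B * (-s * B) := h1
          _ = -s * B' := h2
      have hkey : c * (s * (A - B)) < s * (A' - B') := by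
        have h3 : c * (s * (A - B)) = c * (s * A) + c * ((-s) * B) := by ring
        have h4 : s * (A' - B') = s * A' + (-s) * B' := by ring
        rw [h3, h4]
        linarith
      have hstrict : c < (derivative P).eval x / P.eval x := by
        rw [hPder, hPeval]
        have hdiv : (A' - B') / (A - B) = (s * (A' - B')) / (s * (A - B)) :=
          (mul_div_mul_left _ _ hs0).symm
        rw [hdiv]
        rw [lt_div_iff₀ hposdenom]
        exact hkey
      have hpos : 0 < s * P.eval x := by
        rw [hPeval]
        exact hposdenom
      exact ⟨⟨hpos, le_of_lt hstrict⟩, fun _ => hstrict⟩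

end ChromAux

theorem stmt7 {V : Type*} [Fintype V] (G : SimpleGraph V)
    (hconn : G.Connected) (hnt : ¬ G.IsAcyclic)
    (P : Polynomial ℝ) (hP : IsChromPoly G P) (x : ℝ) (hx : x < 0) :
    1 / x + ((Fintype.card V : ℝ) - 1) / (x - 1) <
      (Polynomial.derivative P).eval x / P.eval x := by
  obtain ⟨-, hstrict⟩ :=
    ChromAux.main_induction (G.edgeSet.ncard) V G le_rfl hconn P hP x hx
  exact hstrict hnt
end

section
/- For any simple graph G of order n, (−1)^n P(G, −1) equals the number of acyclic orientations of G. -/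
open Polynomial Relation

section RelLemmas
variable {α : Type*}

lemma transGen_le_of_closed {p q : α → α → Prop} (hpq : ∀ a b, p a b → q a b)
    (hq : ∀ a b c, q a b → q b c → q a c) {a b : α} (h : TransGen p a b) : q a b := by
  induction h with
  | single h => exact hpq _ _ h
  | tail _ h ih => exact hq _ _ _ ih (hpq _ _ h)

lemma transGen_map {β : Type*} {p : α → α → Prop} {q : β → β → Prop} (f : α → β)
    (h : ∀ a b, p a b → q (f a) (f b)) {a b : α} (hab : TransGen p a b) :
    TransGen q (f a) (f b) := by
  induction hab with
  | single h' => exact TransGen.single (h _ _ h')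
  | tail _ h' ih => exact ih.tail (h _ _ h')

lemma transGen_mono' {p q : α → α → Prop} (hpq : ∀ a b, p a b → q a b) {a b : α}
    (h : TransGen p a b) : TransGen q a b := by
  induction h with
  | single h' => exact TransGen.single (hpq _ _ h')
  | tail _ h' ih => exact ih.tail (hpq _ _ h')

lemma union_arc_decomp {r : α → α → Prop} {u v : α} {a b : α}
    (h : TransGen (fun x y => r x y ∨ (x = u ∧ y = v)) a b) :
    TransGen r a b ∨ (ReflTransGen r a u ∧ ReflTransGen r v b) := by
  induction h with
  | single h' =>
    rcases h' with h' | ⟨rfl, rfl⟩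
    · exact Or.inl (TransGen.single h')
    · exact Or.inr ⟨ReflTransGen.refl, ReflTransGen.refl⟩
  | tail _ h' ih =>
    rcases h' with h' | ⟨rfl, rfl⟩
    · rcases ih with ih | ⟨h1, h2⟩
      · exact Or.inl (ih.tail h')
      · exact Or.inr ⟨h1, h2.tail h'⟩
    · rcases ih with ih | ⟨h1, _⟩
      · exact Or.inr ⟨ih.to_reflTransGen, ReflTransGen.refl⟩
      · exact Or.inr ⟨h1, ReflTransGen.refl⟩

/-- Adding a single arc `(u,v)` to an acyclic relation with no path `v ⇝ u`
keeps it acyclic. -/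
lemma union_arc_acyclic {r : α → α → Prop} {u v : α} (hne : u ≠ v)
    (hacy : ∀ a, ¬ TransGen r a a) (hvu : ¬ TransGen r v u) (a : α) :
    ¬ TransGen (fun x y => r x y ∨ (x = u ∧ y = v)) a a := by
  intro h
  rcases union_arc_decomp h with h | ⟨h1, h2⟩
  · exact hacy a h
  · have : ReflTransGen r v u := h2.trans h1
    rcases reflTransGen_iff_eq_or_transGen.1 this with h3 | h3
    · exact hne h3
    · exact hvu h3

end RelLemmas

section PolyLemmas

lemma poly_unique {Q R : Polynomial ℝ} (h : ∀ k : ℕ, 1 ≤ k → Q.eval (k : ℝ) = R.eval (k : ℝ)) :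
    Q = R := by
  have h0 : Q - R = 0 := by
    apply Polynomial.eq_zero_of_infinite_isRoot
    refine Set.infinite_of_injective_forall_mem
      (f := fun k : ℕ => ((k + 1 : ℕ) : ℝ)) ?_ ?_
    · intro a b hab
      simpa using Nat.cast_injective hab
    · intro k
      simp only [Set.mem_setOf_eq, Polynomial.IsRoot, Polynomial.eval_sub]
      rw [h (k+1) (by omega)]
      ring
  exact sub_eq_zero.mp h0
open Polynomial

/-- D is an acyclic orientation of G: every arc of D is an edge of G,
every edge of G gets exactly one direction, and there is no directed cycle. -/
def IsAcyclicOrientation {W : Type*} (G : SimpleGraph W) (D : W → W → Prop) : Prop :=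
  (∀ a b, D a b → G.Adj a b) ∧ (∀ a b, G.Adj a b → (D a b ↔ ¬ D b a)) ∧
    ∀ a, ¬ Relation.TransGen D a a
section Orient
variable {V : Type*} {G : SimpleGraph V} {u v : V}

/-- Contraction of the edge `u-v`, keeping `v` as an isolated vertex. -/
def Gcon (G : SimpleGraph V) (u v : V) : SimpleGraph V where
  Adj a b := a ≠ v ∧ b ≠ v ∧ a ≠ b ∧
    (G.Adj a b ∨ (a = u ∧ G.Adj v b) ∨ (b = u ∧ G.Adj a v))
  symm := by
    refine ⟨?_⟩
    rintro a b ⟨h1, h2, h3, h4⟩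
    refine ⟨h2, h1, h3.symm, ?_⟩
    rcases h4 with h | ⟨rfl, h⟩ | ⟨rfl, h⟩
    · exact Or.inl h.symm
    · exact Or.inr (Or.inr ⟨rfl, h.symm⟩)
    · exact Or.inr (Or.inl ⟨rfl, h.symm⟩)
  loopless := ⟨fun a h => h.2.2.1 rfl⟩

lemma Gcon_adj {a b : V} : (Gcon G u v).Adj a b ↔ a ≠ v ∧ b ≠ v ∧ a ≠ b ∧
    (G.Adj a b ∨ (a = u ∧ G.Adj v b) ∨ (b = u ∧ G.Adj a v)) := Iff.rfl

lemma G1_adj {a b : V} : (G.deleteEdges {s(u,v)}).Adj a b ↔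
    G.Adj a b ∧ ¬(a = u ∧ b = v) ∧ ¬(a = v ∧ b = u) := by
  rw [SimpleGraph.deleteEdges_adj]
  simp only [Set.mem_singleton_iff, Sym2.eq_iff]
  tauto

/-- restriction of an orientation: forget the direction of the edge `u-v`. -/
def rho (u v : V) (D : V → V → Prop) : V → V → Prop :=
  fun a b => D a b ∧ ¬(a = u ∧ b = v) ∧ ¬(a = v ∧ b = u)

/-- contraction of an orientation. -/
def kap (G : SimpleGraph V) (u v : V) (D : V → V → Prop) : V → V → Prop :=
  fun a b => (Gcon G u v).Adj a b ∧ (D a b ∨ (a = u ∧ D v b) ∨ (b = u ∧ D a v))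

/-- expansion of an orientation of the contraction, with the edge `u-v`
oriented from `v` to `u`. -/
def sig (G : SimpleGraph V) (u v : V) (D2 : V → V → Prop) : V → V → Prop :=
  fun a b => (a = v ∧ b = u) ∨ (G.Adj a b ∧ a ≠ v ∧ b ≠ v ∧ D2 a b) ∨
    (a = v ∧ b ≠ u ∧ G.Adj v b ∧ D2 u b) ∨ (b = v ∧ a ≠ u ∧ G.Adj a v ∧ D2 a u)

section lems
variable {D D2 : V → V → Prop}

lemma rho_ao (huv : G.Adj u v) (hD : IsAcyclicOrientation G D) :
    IsAcyclicOrientation (G.deleteEdges {s(u,v)}) (rho u v D) := by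
  refine ⟨fun a b h => G1_adj.2 ⟨hD.1 a b h.1, h.2.1, h.2.2⟩, ?_, ?_⟩
  · intro a b hab
    obtain ⟨hG, h1, h2⟩ := G1_adj.1 hab
    have e1 : rho u v D a b ↔ D a b := by unfold rho; tauto
    have e2 : rho u v D b a ↔ D b a := by
      unfold rho
      constructor
      · tauto
      · intro h; exact ⟨h, fun hc => h2 ⟨hc.2, hc.1⟩, fun hc => h1 ⟨hc.2, hc.1⟩⟩
    rw [e1, e2]
    exact hD.2.1 a b hG
  · intro a h
    exact hD.2.2 a (transGen_mono' (fun x y hx => hx.1) h)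

lemma acyclic_excl (hD : IsAcyclicOrientation G D) {x y : V} (h1 : D x y) (h2 : D y x) :
    False :=
  hD.2.2 x (Relation.TransGen.head h1 (Relation.TransGen.single h2))

lemma kap_ao (huv : G.Adj u v) (hD : IsAcyclicOrientation G D) (hvu : D v u)
    (hsvu : ¬ Relation.TransGen (rho u v D) v u) :
    IsAcyclicOrientation (Gcon G u v) (kap G u v D) := by
  have hne : u ≠ v := huv.ne
  set ρ := rho u v D with hρdef
  have hρle : ∀ x y, ρ x y → D x y := fun x y h => h.1
  have hsuv : ¬ Relation.TransGen ρ u v := fun h =>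
    hD.2.2 v (Relation.TransGen.head hvu (transGen_mono' hρle h))
  have hirr : ∀ a, ¬ Relation.TransGen ρ a a := fun a h =>
    hD.2.2 a (transGen_mono' hρle h)
  have hRTvu : ¬ Relation.ReflTransGen ρ v u := by
    intro h
    rcases Relation.reflTransGen_iff_eq_or_transGen.1 h with h' | h'
    · exact hne h'
    · exact hsvu h'
  have hRTuv : ¬ Relation.ReflTransGen ρ u v := by
    intro h
    rcases Relation.reflTransGen_iff_eq_or_transGen.1 h with h' | h'
    · exact hne h'.symm
    · exact hsuv h'
  -- the auxiliary strict order
  set A : V → V → Prop := fun x y => Relation.TransGen ρ x y ∨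
      (Relation.ReflTransGen ρ x u ∧ Relation.ReflTransGen ρ v y ∧ (x ≠ u ∨ v ≠ y)) ∨
      (Relation.ReflTransGen ρ x v ∧ Relation.ReflTransGen ρ u y ∧ (x ≠ v ∨ u ≠ y))
    with hAdef
  have hRT_strict : ∀ x y : V, Relation.ReflTransGen ρ x y → x ≠ y →
      Relation.TransGen ρ x y := by
    intro x y h hxy
    rcases Relation.reflTransGen_iff_eq_or_transGen.1 h with h' | h'
    · exact absurd h'.symm hxy
    · exact h'
  have h_sub : ∀ a b, kap G u v D a b → A a b := by
    rintro a b ⟨⟨hav, hbv, hnab, -⟩, hor⟩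
    rcases hor with h | ⟨rfl, h⟩ | ⟨rfl, h⟩
    · exact Or.inl (Relation.TransGen.single
        ⟨h, fun hc => hbv hc.2, fun hc => hav hc.1⟩)
    · refine Or.inr (Or.inl ⟨Relation.ReflTransGen.refl, ?_, Or.inr (Ne.symm hbv)⟩)
      exact Relation.ReflTransGen.single
        ⟨h, fun hc => hne hc.1.symm, fun hc => (Ne.symm hnab) hc.2⟩
    · refine Or.inr (Or.inr ⟨?_, Relation.ReflTransGen.refl, Or.inl hav⟩)
      exact Relation.ReflTransGen.single
        ⟨h, fun hc => hnab hc.1, fun hc => hav hc.1⟩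
  have h_trans : ∀ x y z, A x y → A y z → A x z := by
    rintro x y z (h1 | ⟨h1a, h1b, h1c⟩ | ⟨h1a, h1b, h1c⟩)
      (h2 | ⟨h2a, h2b, h2c⟩ | ⟨h2a, h2b, h2c⟩)
    · exact Or.inl (h1.trans h2)
    · -- s x y ; y→u, v→z
      refine Or.inr (Or.inl ⟨h1.to_reflTransGen.trans h2a, h2b, ?_⟩)
      by_contra hc
      push_neg at hc
      obtain ⟨rfl, -⟩ := hc
      exact hirr x (h1.trans_left h2a)
    · refine Or.inr (Or.inr ⟨h1.to_reflTransGen.trans h2a, h2b, ?_⟩)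
      by_contra hc
      push_neg at hc
      obtain ⟨rfl, -⟩ := hc
      exact hirr x (h1.trans_left h2a)
    · -- x→u, v→y ; s y z
      refine Or.inr (Or.inl ⟨h1a, h1b.trans h2.to_reflTransGen, ?_⟩)
      by_contra hc
      push_neg at hc
      obtain ⟨-, rfl⟩ := hc
      exact hirr v (Relation.TransGen.trans_right h1b h2)
    · -- x→u, v→y ; y→u, v→z : RT v u
      exact absurd (h1b.trans h2a) hRTvu
    · -- x→u, v→y ; y→v, u→z : y = v forced
      have hyv : y = v := by
        by_contra hyv
        exact hirr v ((hRT_strict v y h1b (fun h => hyv h.symm)).trans_left h2a)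
      subst hyv
      have hxu : x ≠ u := by
        rcases h1c with h | h
        · exact h
        · exact absurd rfl h
      have huz : u ≠ z := by
        rcases h2c with h | h
        · exact absurd rfl h
        · exact h
      exact Or.inl ((hRT_strict x u h1a hxu).trans (hRT_strict u z h2b huz))
    · -- x→v, u→y ; s y z
      refine Or.inr (Or.inr ⟨h1a, h1b.trans h2.to_reflTransGen, ?_⟩)
      by_contra hc
      push_neg at hc
      obtain ⟨-, rfl⟩ := hc
      exact hirr u (Relation.TransGen.trans_right h1b h2)
    · -- x→v, u→y ; y→u, v→z : y = u forced
      have hyu : y = u := by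
        by_contra hyu
        exact hirr u ((hRT_strict u y h1b (fun h => hyu h.symm)).trans_left h2a)
      subst hyu
      have hxv : x ≠ v := by
        rcases h1c with h | h
        · exact h
        · exact absurd rfl h
      have hvz : v ≠ z := by
        rcases h2c with h | h
        · exact absurd rfl h
        · exact h
      exact Or.inl ((hRT_strict x v h1a hxv).trans (hRT_strict v z h2b hvz))
    · -- x→v, u→y ; y→v, u→z : RT u v
      exact absurd (h1b.trans h2a) hRTuv
  refine ⟨fun a b h => h.1, ?_, ?_⟩
  · intro a b hab
    obtain ⟨hav, hbv, hnab, hor⟩ := Gcon_adj.1 hab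
    have hexcl : ¬ (kap G u v D a b ∧ kap G u v D b a) := by
      rintro ⟨⟨-, k1⟩, ⟨-, k2⟩⟩
      rcases k1 with k1 | ⟨hau, k1⟩ | ⟨hbu, k1⟩ <;>
        rcases k2 with k2 | ⟨hbu2, k2⟩ | ⟨hau2, k2⟩
      · exact acyclic_excl hD k1 k2
      · refine hsvu (hbu2 ▸ Relation.TransGen.head
          (⟨k2, fun hc => hne hc.1.symm, fun hc => hnab (hc.2.trans hbu2.symm)⟩ :
            ρ v a)
          (Relation.TransGen.single
            (⟨k1, fun hc => hbv hc.2, fun hc => hav hc.1⟩ : ρ a b)))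
      · refine hsuv (hau2 ▸ Relation.TransGen.head
          (⟨k1, fun hc => hbv hc.2, fun hc => hav hc.1⟩ : ρ a b)
          (Relation.TransGen.single
            (⟨k2, fun hc => hnab (hau2.trans hc.1.symm), fun hc => hbv hc.1⟩ : ρ b v)))
      · refine hsvu (hau ▸ Relation.TransGen.head
          (⟨k1, fun hc => hne hc.1.symm, fun hc => hnab (hau.trans hc.2.symm)⟩ :
            ρ v b)
          (Relation.TransGen.single
            (⟨k2, fun hc => hav hc.2, fun hc => hbv hc.1⟩ : ρ b a)))
      · exact hnab (hau.trans hbu2.symm)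
      · exact acyclic_excl hD k1 k2
      · refine hsuv (hbu ▸ Relation.TransGen.head
          (⟨k2, fun hc => hav hc.2, fun hc => hbv hc.1⟩ : ρ b a)
          (Relation.TransGen.single
            (⟨k1, fun hc => hnab (hc.1.trans hbu.symm), fun hc => hav hc.1⟩ : ρ a v)))
      · exact acyclic_excl hD k1 k2
      · exact hnab (hau2.trans hbu.symm)
    have htot : kap G u v D a b ∨ kap G u v D b a := by
      rcases hor with hG | ⟨rfl, hG⟩ | ⟨rfl, hG⟩
      · by_cases hd : D a b
        · exact Or.inl ⟨hab, Or.inl hd⟩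
        · have : D b a := by
            have := hD.2.1 a b hG
            tauto
          exact Or.inr ⟨hab.symm, Or.inl this⟩
      · by_cases hd : D v b
        · exact Or.inl ⟨hab, Or.inr (Or.inl ⟨rfl, hd⟩)⟩
        · have : D b v := by
            have := hD.2.1 v b hG
            tauto
          exact Or.inr ⟨hab.symm, Or.inr (Or.inr ⟨rfl, this⟩)⟩
      · by_cases hd : D a v
        · exact Or.inl ⟨hab, Or.inr (Or.inr ⟨rfl, hd⟩)⟩
        · have : D v a := by
            have := hD.2.1 a v hG
            tauto
          exact Or.inr ⟨hab.symm, Or.inr (Or.inl ⟨rfl, this⟩)⟩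
    constructor
    · intro h h'
      exact hexcl ⟨h, h'⟩
    · intro h
      rcases htot with h' | h'
      · exact h'
      · exact absurd h' h
  · intro a h
    have hA : A a a := transGen_le_of_closed h_sub h_trans h
    rcases hA with h' | ⟨h1, h2, -⟩ | ⟨h1, h2, -⟩
    · exact hirr a h'
    · exact hRTvu (h2.trans h1)
    · exact hRTuv (h2.trans h1)

end lems
end Orient
section Orient2
variable {V : Type*} [DecidableEq V] {G : SimpleGraph V} {u v : V} {D D2 : V → V → Prop}

lemma sig_uv_false (hne : u ≠ v) : ¬ sig G u v D2 u v := by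
  rintro (⟨h1, -⟩ | ⟨-, -, h2, -⟩ | ⟨h1, -⟩ | ⟨-, h2, -⟩)
  · exact hne h1
  · exact h2 rfl
  · exact hne h1
  · exact h2 rfl

lemma rho_sig_map (hne : u ≠ v) {a b : V} (h : rho u v (sig G u v D2) a b) :
    D2 ((fun x => if x = v then u else x) a) ((fun x => if x = v then u else x) b) := by
  obtain ⟨hs, hn1, hn2⟩ := h
  rcases hs with ⟨hav, hbu⟩ | ⟨hG, hav, hbv, hd⟩ | ⟨hav, hbu, hG, hd⟩ | ⟨hbv, hau, hG, hd⟩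
  · exact absurd ⟨hav, hbu⟩ hn2
  · simpa only [if_neg hav, if_neg hbv] using hd
  · have hbv : b ≠ v := hG.ne'
    simpa only [hav, if_pos rfl, if_true, if_neg hbv] using hd
  · have hav : a ≠ v := hG.ne
    simpa only [hbv, if_pos rfl, if_true, if_neg hav] using hd

lemma sig_acyclic (huv : G.Adj u v) (hD2 : IsAcyclicOrientation (Gcon G u v) D2)
    (a : V) : ¬ Relation.TransGen (sig G u v D2) a a := by
  classical
  have hne : u ≠ v := huv.ne
  have hreq : ∀ x y, sig G u v D2 x y ↔
      (rho u v (sig G u v D2) x y ∨ (x = v ∧ y = u)) := by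
    intro x y
    constructor
    · intro h
      by_cases h2 : x = v ∧ y = u
      · exact Or.inr h2
      · refine Or.inl ⟨h, ?_, h2⟩
        rintro ⟨rfl, rfl⟩
        exact sig_uv_false hne h
    · rintro (h | ⟨rfl, rfl⟩)
      · exact h.1
      · exact Or.inl ⟨rfl, rfl⟩
  have hρacy : ∀ x, ¬ Relation.TransGen (rho u v (sig G u v D2)) x x := by
    intro x hx
    exact hD2.2.2 _ (transGen_map _ (fun a b h => rho_sig_map hne h) hx)
  have hρuv : ¬ Relation.TransGen (rho u v (sig G u v D2)) u v := by
    intro hx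
    have := transGen_map _ (fun a b h => rho_sig_map hne h) hx
    simp only [if_neg hne, if_pos rfl] at this
    exact hD2.2.2 u this
  intro h
  have h' : Relation.TransGen
      (fun x y => rho u v (sig G u v D2) x y ∨ (x = v ∧ y = u)) a a :=
    transGen_mono' (fun x y hx => (hreq x y).1 hx) h
  exact union_arc_acyclic (Ne.symm hne) hρacy hρuv a h'

lemma sig_ao (huv : G.Adj u v) (hD2 : IsAcyclicOrientation (Gcon G u v) D2) :
    IsAcyclicOrientation G (sig G u v D2) := by
  have hne : u ≠ v := huv.ne
  have hcon : ∀ x y, D2 x y → (Gcon G u v).Adj x y := hD2.1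
  have hexcl2 : ∀ x y, D2 x y → D2 y x → False := fun x y h1 h2 =>
    (hD2.2.1 x y (hcon _ _ h1)).mp h1 h2
  refine ⟨?_, ?_, sig_acyclic huv hD2⟩
  · rintro a b (⟨rfl, rfl⟩ | ⟨hG, -⟩ | ⟨rfl, -, hG, -⟩ | ⟨rfl, -, hG, -⟩)
    · exact huv.symm
    · exact hG
    · exact hG
    · exact hG
  · intro a b hG
    have hexcl : ¬ (sig G u v D2 a b ∧ sig G u v D2 b a) := by
      rintro ⟨k1, k2⟩
      rcases k1 with ⟨hav, hbu⟩ | ⟨hG1, hav, hbv, hd1⟩ | ⟨hav, hbu, hG1, hd1⟩ |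
          ⟨hbv, hau, hG1, hd1⟩ <;>
        rcases k2 with ⟨hbv2, hau2⟩ | ⟨hG2, hbv2, hav2, hd2⟩ | ⟨hbv2, hau2, hG2, hd2⟩ |
          ⟨hav2, hbu2, hG2, hd2⟩
      · exact hne (hbu.symm.trans hbv2)
      · exact hav2 hav
      · exact hne (hbu.symm.trans hbv2)
      · exact hbu2 hbu
      · exact hbv hbv2
      · exact hexcl2 _ _ hd1 hd2
      · exact hbv hbv2
      · exact hav hav2
      · exact hG1.ne' hbv2
      · exact hav2 hav
      · exact hG1.ne' hbv2
      · exact hexcl2 _ _ hd1 hd2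
      · exact hau hau2
      · exact hbv2 hbv
      · exact hexcl2 _ _ hd1 hd2
      · exact hG1.ne hav2
    have htot : sig G u v D2 a b ∨ sig G u v D2 b a := by
      by_cases hav : a = v
      · by_cases hbu : b = u
        · exact Or.inl (Or.inl ⟨hav, hbu⟩)
        · have hGvb : G.Adj v b := hav ▸ hG
          have hadj : (Gcon G u v).Adj u b :=
            ⟨hne, hGvb.ne', fun h => hbu h.symm, Or.inr (Or.inl ⟨rfl, hGvb⟩)⟩
          by_cases hd : D2 u b
          · exact Or.inl (Or.inr (Or.inr (Or.inl ⟨hav, hbu, hGvb, hd⟩)))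
          · have : D2 b u := by have := hD2.2.1 u b hadj; tauto
            exact Or.inr (Or.inr (Or.inr (Or.inr ⟨hav, hbu, hGvb.symm, this⟩)))
      · by_cases hbv : b = v
        · by_cases hau : a = u
          · exact Or.inr (Or.inl ⟨hbv, hau⟩)
          · have hGav : G.Adj a v := hbv ▸ hG
            have hadj : (Gcon G u v).Adj a u :=
              ⟨hav, hne, hau, Or.inr (Or.inr ⟨rfl, hGav⟩)⟩
            by_cases hd : D2 a u
            · exact Or.inl (Or.inr (Or.inr (Or.inr ⟨hbv, hau, hGav, hd⟩)))
            · have : D2 u a := by have := hD2.2.1 a u hadj; tauto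
              exact Or.inr (Or.inr (Or.inr (Or.inl ⟨hbv, hau, hGav.symm, this⟩)))
        · have hadj : (Gcon G u v).Adj a b := ⟨hav, hbv, hG.ne, Or.inl hG⟩
          by_cases hd : D2 a b
          · exact Or.inl (Or.inr (Or.inl ⟨hG, hav, hbv, hd⟩))
          · have : D2 b a := by have := hD2.2.1 a b hadj; tauto
            exact Or.inr (Or.inr (Or.inl ⟨hG.symm, hbv, hav, this⟩))
    constructor
    · intro h h'
      exact hexcl ⟨h, h'⟩
    · intro h
      rcases htot with h' | h'
      · exact h'
      · exact absurd h' h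
end Orient2
section Orient3
variable {V : Type*} {G : SimpleGraph V} {u v : V} {D D' D2 : V → V → Prop}

lemma mk_ao (h1 : ∀ a b, D a b → G.Adj a b) (h2 : ∀ a b, G.Adj a b → D a b ∨ D b a)
    (h3 : ∀ a, ¬ Relation.TransGen D a a) : IsAcyclicOrientation G D :=
  ⟨h1, fun a b hG =>
    ⟨fun h hh => h3 a (Relation.TransGen.head h (Relation.TransGen.single hh)),
     fun h => (h2 a b hG).resolve_right h⟩, h3⟩

lemma orient_eq_aux (hρ : rho u v D = rho u v D') (he : D u v → D' u v)
    (he2 : D v u → D' v u) {x y : V} (hxy : D x y) : D' x y := by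
  by_cases hc1 : x = u ∧ y = v
  · obtain ⟨hx, hy⟩ := hc1
    subst hx; subst hy
    exact he hxy
  · by_cases hc2 : x = v ∧ y = u
    · obtain ⟨hx, hy⟩ := hc2
      subst hx; subst hy
      exact he2 hxy
    · have h := congrFun (congrFun hρ x) y
      have : rho u v D' x y := h ▸ (⟨hxy, hc1, hc2⟩ : rho u v D x y)
      exact this.1

lemma kap_sig (hne : u ≠ v) (hD2 : IsAcyclicOrientation (Gcon G u v) D2) (a b : V) :
    kap G u v (sig G u v D2) a b ↔ D2 a b := by
  constructor
  · rintro ⟨⟨hav, hbv, hnab, -⟩, hor⟩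
    rcases hor with hs | ⟨hau, hs⟩ | ⟨hbu, hs⟩
    · rcases hs with ⟨h1, -⟩ | ⟨-, -, -, hd⟩ | ⟨h1, -⟩ | ⟨h1, -⟩
      · exact absurd h1 hav
      · exact hd
      · exact absurd h1 hav
      · exact absurd h1 hbv
    · rcases hs with ⟨-, hbu⟩ | ⟨-, hvv, -, -⟩ | ⟨-, -, -, hd⟩ | ⟨h1, -⟩
      · exact absurd (hau.trans hbu.symm) hnab
      · exact absurd rfl hvv
      · exact hau.symm ▸ hd
      · exact absurd h1 hbv
    · rcases hs with ⟨h1, -⟩ | ⟨-, -, hvv, -⟩ | ⟨h1, -⟩ | ⟨-, -, -, hd⟩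
      · exact absurd h1 hav
      · exact absurd rfl hvv
      · exact absurd h1 hav
      · exact hbu.symm ▸ hd
  · intro hd
    obtain ⟨hav, hbv, hnab, hor⟩ := hD2.1 a b hd
    refine ⟨⟨hav, hbv, hnab, hor⟩, ?_⟩
    rcases hor with hG | ⟨hau, hG⟩ | ⟨hbu, hG⟩
    · exact Or.inl (Or.inr (Or.inl ⟨hG, hav, hbv, hd⟩))
    · refine Or.inr (Or.inl ⟨hau, Or.inr (Or.inr (Or.inl
        ⟨rfl, fun h => hnab (hau.trans h.symm), hG, hau ▸ hd⟩))⟩)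
    · refine Or.inr (Or.inr ⟨hbu, Or.inr (Or.inr (Or.inr
        ⟨rfl, fun h => hnab (h.trans hbu.symm), hG, hbu ▸ hd⟩))⟩)

lemma sig_kap (huv : G.Adj u v) (hD : IsAcyclicOrientation G D) (hvu : D v u)
    (hsvu : ¬ Relation.TransGen (rho u v D) v u) (a b : V) :
    sig G u v (kap G u v D) a b ↔ D a b := by
  have hne : u ≠ v := huv.ne
  set ρ := rho u v D with hρdef
  have hρle : ∀ x y, ρ x y → D x y := fun x y h => h.1
  have hsuv : ¬ Relation.TransGen ρ u v := fun h =>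
    hD.2.2 v (Relation.TransGen.head hvu (transGen_mono' hρle h))
  constructor
  · rintro (⟨hav, hbu⟩ | ⟨hG, hav, hbv, hk⟩ | ⟨hav, hbu, hG, hk⟩ | ⟨hbv, hau, hG, hk⟩)
    · exact hav.symm ▸ hbu.symm ▸ hvu
    · obtain ⟨⟨-, -, hnab, -⟩, hor⟩ := hk
      rcases hor with hd | ⟨hau, hd⟩ | ⟨hbu, hd⟩
      · exact hd
      · by_contra hnd
        have hba : D b a := by have := hD.2.1 a b hG; tauto
        refine hsvu (hau ▸ Relation.TransGen.head
          (⟨hd, fun hc => hne hc.1.symm, fun hc => hnab (hau.trans hc.2.symm)⟩ : ρ v b)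
          (Relation.TransGen.single
            (⟨hba, fun hc => hav hc.2, fun hc => hbv hc.1⟩ : ρ b a)))
      · by_contra hnd
        have hba : D b a := by have := hD.2.1 a b hG; tauto
        refine hsuv (hbu ▸ Relation.TransGen.head
          (⟨hba, fun hc => hav hc.2, fun hc => hbv hc.1⟩ : ρ b a)
          (Relation.TransGen.single
            (⟨hd, fun hc => hnab (hc.1.trans hbu.symm), fun hc => hav hc.1⟩ : ρ a v)))
    · obtain ⟨⟨-, hbv, hub, -⟩, hor⟩ := hk
      rcases hor with hd | ⟨-, hd⟩ | ⟨hbu2, -⟩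
      · -- D u b ; need D a b = D v b
        by_contra hnd
        have hnd' : ¬ D v b := fun h => hnd (hav.symm ▸ h)
        have hbv' : D b v := by have := hD.2.1 v b hG; tauto
        refine hsuv (Relation.TransGen.head
          (⟨hd, fun hc => hbv hc.2, fun hc => hne hc.1⟩ : ρ u b)
          (Relation.TransGen.single
            (⟨hbv', fun hc => hbu hc.1, fun hc => hbv hc.1⟩ : ρ b v)))
      · exact hav.symm ▸ hd
      · exact absurd hbu2 hbu
    · obtain ⟨hav2, -, hau2, -⟩ := hk.1
      rcases hk.2 with hd | ⟨hau3, -⟩ | ⟨-, hd⟩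
      · -- D a u ; need D a b = D a v
        by_contra hnd
        have hnd' : ¬ D a v := fun h => hnd (hbv.symm ▸ h)
        have hva : D v a := by have := hD.2.1 a v hG; tauto
        refine hsvu (Relation.TransGen.head
          (⟨hva, fun hc => hne hc.1.symm, fun hc => hau hc.2⟩ : ρ v a)
          (Relation.TransGen.single
            (⟨hd, fun hc => hau hc.1, fun hc => hav2 hc.1⟩ : ρ a u)))
      · exact absurd hau3 hau
      · exact hbv.symm ▸ hd
  · intro hd
    have hG := hD.1 a b hd
    by_cases hav : a = v
    · by_cases hbu : b = u
      · exact Or.inl ⟨hav, hbu⟩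
      · have hGvb : G.Adj v b := hav ▸ hG
        refine Or.inr (Or.inr (Or.inl ⟨hav, hbu, hGvb, ⟨⟨hne, hGvb.ne',
          fun h => hbu h.symm, Or.inr (Or.inl ⟨rfl, hGvb⟩)⟩,
          Or.inr (Or.inl ⟨rfl, hav ▸ hd⟩)⟩⟩))
    · by_cases hbv : b = v
      · by_cases hau : a = u
        · exact absurd (hau ▸ hbv ▸ hd) (fun h => acyclic_excl hD h hvu)
        · have hGav : G.Adj a v := hbv ▸ hG
          refine Or.inr (Or.inr (Or.inr ⟨hbv, hau, hGav, ⟨⟨hav, hne, hau,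
            Or.inr (Or.inr ⟨rfl, hGav⟩)⟩, Or.inr (Or.inr ⟨rfl, hbv ▸ hd⟩)⟩⟩))
      · exact Or.inr (Or.inl ⟨hG, hav, hbv,
          ⟨⟨hav, hbv, hG.ne, Or.inl hG⟩, Or.inl hd⟩⟩)

end Orient3
section Count
variable {V : Type*} {G : SimpleGraph V} {u v : V}

theorem ao_count [Fintype V] (huv : G.Adj u v) :
    Nat.card {D : V → V → Prop // IsAcyclicOrientation G D}
      = Nat.card {D : V → V → Prop //
            IsAcyclicOrientation (G.deleteEdges {s(u,v)}) D}
        + Nat.card {D : V → V → Prop // IsAcyclicOrientation (Gcon G u v) D} := by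
  classical
  have hne : u ≠ v := huv.ne
  rw [← Nat.card_sum]
  refine Nat.card_eq_of_bijective (fun Dp =>
    if h : Dp.1 u v ∨ Relation.TransGen (rho u v Dp.1) v u
    then Sum.inl ⟨rho u v Dp.1, rho_ao huv Dp.2⟩
    else Sum.inr ⟨kap G u v Dp.1, kap_ao huv Dp.2
      (Classical.byContradiction fun hn =>
        (not_or.1 h).1 ((Dp.2.2.1 u v huv).mpr hn))
      ((not_or.1 h).2)⟩) ⟨?_, ?_⟩
  · -- injectivity
    rintro ⟨D1, hD1⟩ ⟨D2, hD2⟩ heq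
    dsimp only at heq
    by_cases h1 : D1 u v ∨ Relation.TransGen (rho u v D1) v u <;>
      by_cases h2 : D2 u v ∨ Relation.TransGen (rho u v D2) v u
    · rw [dif_pos h1, dif_pos h2] at heq
      have hρ : rho u v D1 = rho u v D2 := congrArg Subtype.val (Sum.inl.inj heq)
      have horient : (D1 u v ↔ D2 u v) ∧ (D1 v u ↔ D2 v u) := by
        by_cases hp : Relation.TransGen (rho u v D1) v u
        · have hp2 : Relation.TransGen (rho u v D2) v u := hρ ▸ hp
          have hn1 : ¬ D1 u v := fun h => hD1.2.2 u
            (Relation.TransGen.head h (transGen_mono' (fun x y hx => hx.1) hp))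
          have hn2 : ¬ D2 u v := fun h => hD2.2.2 u
            (Relation.TransGen.head h (transGen_mono' (fun x y hx => hx.1) hp2))
          have e1 := hD1.2.1 u v huv
          have e2 := hD2.2.1 u v huv
          exact ⟨iff_of_false hn1 hn2, by tauto⟩
        · have hp2 : ¬ Relation.TransGen (rho u v D2) v u := hρ ▸ hp
          have ht1 : D1 u v := h1.resolve_right hp
          have ht2 : D2 u v := h2.resolve_right hp2
          have e1 := hD1.2.1 u v huv
          have e2 := hD2.2.1 u v huv
          exact ⟨iff_of_true ht1 ht2, by tauto⟩
      refine Subtype.ext (funext fun x => funext fun y => propext ?_)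
      exact ⟨orient_eq_aux hρ horient.1.mp horient.2.mp,
        orient_eq_aux hρ.symm horient.1.mpr horient.2.mpr⟩
    · rw [dif_pos h1, dif_neg h2] at heq
      exact absurd heq (by simp)
    · rw [dif_neg h1, dif_pos h2] at heq
      exact absurd heq (by simp)
    · rw [dif_neg h1, dif_neg h2] at heq
      have hκ : kap G u v D1 = kap G u v D2 := congrArg Subtype.val (Sum.inr.inj heq)
      have hvu1 : D1 v u := Classical.byContradiction fun hn =>
        (not_or.1 h1).1 ((hD1.2.1 u v huv).mpr hn)
      have hvu2 : D2 v u := Classical.byContradiction fun hn =>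
        (not_or.1 h2).1 ((hD2.2.1 u v huv).mpr hn)
      refine Subtype.ext (funext fun x => funext fun y => propext ?_)
      show D1 x y ↔ D2 x y
      rw [← sig_kap huv hD1 hvu1 (not_or.1 h1).2 x y,
        ← sig_kap huv hD2 hvu2 (not_or.1 h2).2 x y, hκ]
  · -- surjectivity
    rintro (⟨D1, hD1⟩ | ⟨D2, hD2⟩)
    · have hD1uv : ¬ D1 u v := fun h => (G1_adj.1 (hD1.1 _ _ h)).2.1 ⟨rfl, rfl⟩
      have hD1vu : ¬ D1 v u := fun h => (G1_adj.1 (hD1.1 _ _ h)).2.2 ⟨rfl, rfl⟩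
      by_cases hp : Relation.TransGen D1 v u
      · set D : V → V → Prop := fun x y => D1 x y ∨ (x = v ∧ y = u) with hDdef
        have hacy : ∀ a, ¬ Relation.TransGen D a a :=
          union_arc_acyclic (Ne.symm hne) hD1.2.2
            (fun hh => hD1.2.2 u (hh.trans hp))
        have hAO : IsAcyclicOrientation G D := by
          refine mk_ao ?_ ?_ hacy
          · rintro a b (h | ⟨rfl, rfl⟩)
            · exact (G1_adj.1 (hD1.1 _ _ h)).1
            · exact huv.symm
          · intro a b hG
            by_cases hc : (a = u ∧ b = v) ∨ (a = v ∧ b = u)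
            · rcases hc with ⟨h3, h4⟩ | ⟨h3, h4⟩
              · exact Or.inr (Or.inr ⟨h4, h3⟩)
              · exact Or.inl (Or.inr ⟨h3, h4⟩)
            · have hG1 : (G.deleteEdges {s(u,v)}).Adj a b := G1_adj.2
                ⟨hG, fun hh => hc (Or.inl hh), fun hh => hc (Or.inr hh)⟩
              rcases (em (D1 a b)) with h | h
              · exact Or.inl (Or.inl h)
              · exact Or.inr (Or.inl ((hD1.2.1 b a hG1.symm).mpr h))
        have hρ : rho u v D = D1 := by
          funext x y
          apply propext
          constructor
          · rintro ⟨h | ⟨hxv, hyu⟩, hn1, hn2⟩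
            · exact h
            · exact absurd ⟨hxv, hyu⟩ hn2
          · intro h
            exact ⟨Or.inl h, fun hc => (G1_adj.1 (hD1.1 x y h)).2.1 hc,
              fun hc => (G1_adj.1 (hD1.1 x y h)).2.2 hc⟩
        refine ⟨⟨D, hAO⟩, ?_⟩
        dsimp only
        rw [dif_pos (Or.inr (by rw [hρ]; exact hp))]
        exact congrArg Sum.inl (Subtype.ext hρ)
      · set D : V → V → Prop := fun x y => D1 x y ∨ (x = u ∧ y = v) with hDdef
        have hacy : ∀ a, ¬ Relation.TransGen D a a :=
          union_arc_acyclic hne hD1.2.2 hp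
        have hAO : IsAcyclicOrientation G D := by
          refine mk_ao ?_ ?_ hacy
          · rintro a b (h | ⟨rfl, rfl⟩)
            · exact (G1_adj.1 (hD1.1 _ _ h)).1
            · exact huv
          · intro a b hG
            by_cases hc : (a = u ∧ b = v) ∨ (a = v ∧ b = u)
            · rcases hc with ⟨h3, h4⟩ | ⟨h3, h4⟩
              · exact Or.inl (Or.inr ⟨h3, h4⟩)
              · exact Or.inr (Or.inr ⟨h4, h3⟩)
            · have hG1 : (G.deleteEdges {s(u,v)}).Adj a b := G1_adj.2
                ⟨hG, fun hh => hc (Or.inl hh), fun hh => hc (Or.inr hh)⟩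
              rcases (em (D1 a b)) with h | h
              · exact Or.inl (Or.inl h)
              · exact Or.inr (Or.inl ((hD1.2.1 b a hG1.symm).mpr h))
        have hρ : rho u v D = D1 := by
          funext x y
          apply propext
          constructor
          · rintro ⟨h | ⟨hxv, hyu⟩, hn1, hn2⟩
            · exact h
            · exact absurd ⟨hxv, hyu⟩ hn1
          · intro h
            exact ⟨Or.inl h, fun hc => (G1_adj.1 (hD1.1 x y h)).2.1 hc,
              fun hc => (G1_adj.1 (hD1.1 x y h)).2.2 hc⟩
        refine ⟨⟨D, hAO⟩, ?_⟩
        dsimp only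
        rw [dif_pos (Or.inl (Or.inr ⟨rfl, rfl⟩))]
        exact congrArg Sum.inl (Subtype.ext hρ)
    · refine ⟨⟨sig G u v D2, sig_ao huv hD2⟩, ?_⟩
      dsimp only
      have hcond : ¬ (sig G u v D2 u v ∨
          Relation.TransGen (rho u v (sig G u v D2)) v u) := by
        rintro (h | h)
        · exact sig_uv_false hne h
        · have := transGen_map _ (fun a b hh => rho_sig_map hne hh) h
          simp only [if_pos rfl, if_neg hne] at this
          exact hD2.2.2 u this
      rw [dif_neg hcond]
      exact congrArg Sum.inr (Subtype.ext (funext fun x => funext fun y =>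
        propext (kap_sig hne hD2 x y)))
end Count
section Colorings
variable {V : Type*} {G : SimpleGraph V} {u v : V}

/-- proper colorings as a subtype of functions -/
def PC (G : SimpleGraph V) (k : ℕ) : Type _ :=
  {f : V → Fin k // ∀ a b, G.Adj a b → f a ≠ f b}

instance [Fintype V] (G : SimpleGraph V) (k : ℕ) : Finite (PC G k) := by
  unfold PC; infer_instance

lemma card_coloring_eq (G : SimpleGraph V) (k : ℕ) :
    Nat.card (G.Coloring (Fin k)) = Nat.card (PC G k) := by
  refine Nat.card_congr ⟨fun c => ⟨c, fun a b h => c.valid h⟩,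
    fun f => SimpleGraph.Coloring.mk f.1 (fun {a b} h => f.2 a b h), fun c => rfl,
    fun f => rfl⟩

lemma card_PC_del [Fintype V] (huv : G.Adj u v) (k : ℕ) :
    Nat.card (PC (G.deleteEdges {s(u,v)}) k)
      = Nat.card (PC G k) + Nat.card {f : PC (Gcon G u v) k // f.1 u = f.1 v} := by
  classical
  have hne : u ≠ v := huv.ne
  rw [← Nat.card_sum]
  refine Nat.card_congr ⟨fun f => if h : f.1 u = f.1 v
      then Sum.inr ⟨⟨f.1, ?_⟩, h⟩ else Sum.inl ⟨f.1, ?_⟩, ?_, ?_, ?_⟩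
  · -- proper for Gcon when f u = f v
    rintro a b ⟨hav, hbv, hnab, hor⟩
    rcases hor with hG | ⟨hau, hG⟩ | ⟨hbu, hG⟩
    · exact f.2 a b (G1_adj.2 ⟨hG, fun hc => hbv hc.2, fun hc => hav hc.1⟩)
    · have := f.2 v b (G1_adj.2 ⟨hG, fun hc => hne hc.1.symm,
        fun hc => hnab (hau.trans hc.2.symm)⟩)
      rw [hau, h]
      exact this
    · have := f.2 a v (G1_adj.2 ⟨hG, fun hc => hnab (hc.1.trans hbu.symm),
        fun hc => hav hc.1⟩)
      rw [hbu, h]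
      intro hc
      exact this (hc.trans rfl) -- f a = f u = f v
  · -- proper for G when f u ≠ f v
    intro a b hG
    by_cases hc1 : a = u ∧ b = v
    · rw [hc1.1, hc1.2]; exact h
    · by_cases hc2 : a = v ∧ b = u
      · rw [hc2.1, hc2.2]; exact fun hh => h hh.symm
      · exact f.2 a b (G1_adj.2 ⟨hG, hc1, hc2⟩)
  · -- invFun
    rintro (g | ⟨g, hg⟩)
    · exact ⟨g.1, fun a b hab => g.2 a b (G1_adj.1 hab).1⟩
    · refine ⟨g.1, fun a b hab => ?_⟩
      obtain ⟨hG, hn1, hn2⟩ := G1_adj.1 hab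
      by_cases hav : a = v
      · have hG2 : (Gcon G u v).Adj u b := ⟨hne, (hav ▸ hG).ne', fun hh =>
          hn2 ⟨hav, hh.symm⟩, Or.inr (Or.inl ⟨rfl, hav ▸ hG⟩)⟩
        have := g.2 u b hG2
        rw [hav, ← hg]
        exact this
      · by_cases hbv : b = v
        · have hG2 : (Gcon G u v).Adj a u := ⟨hav, hne, fun hh =>
            hn1 ⟨hh, hbv⟩, Or.inr (Or.inr ⟨rfl, hbv ▸ hG⟩)⟩
          have := g.2 a u hG2
          rw [hbv, ← hg]
          exact this
        · exact g.2 a b ⟨hav, hbv, hG.ne, Or.inl hG⟩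
  · -- left inverse
    intro f
    dsimp only
    by_cases h : f.1 u = f.1 v
    · rw [dif_pos h]; rfl
    · rw [dif_neg h]; rfl
  · -- right inverse
    rintro (g | ⟨g, hg⟩) <;> dsimp only
    · have h : ¬ g.1 u = g.1 v := g.2 u v huv
      rw [dif_neg h]
      rfl
    · rw [dif_pos hg]
      rfl

lemma card_PC_con_mul [Fintype V] (hne : u ≠ v) (k : ℕ) :
    Nat.card (PC (Gcon G u v) k)
      = k * Nat.card {f : PC (Gcon G u v) k // f.1 u = f.1 v} := by
  classical
  have hiso' : ∀ (f : V → Fin k) (c : Fin k), (∀ a b, (Gcon G u v).Adj a b → f a ≠ f b) →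
      ∀ a b, (Gcon G u v).Adj a b →
        Function.update f v c a ≠ Function.update f v c b := by
    intro f c hf a b hab
    rw [Function.update_of_ne hab.1, Function.update_of_ne hab.2.1]
    exact hf a b hab
  have e : PC (Gcon G u v) k ≃ Fin k × {f : PC (Gcon G u v) k // f.1 u = f.1 v} := by
    refine ⟨fun g => (g.1 v, ⟨⟨Function.update g.1 v (g.1 u), hiso' g.1 (g.1 u) g.2⟩, by
        simp only [Function.update_of_ne hne, Function.update_self]⟩),
      fun p => ⟨Function.update p.2.1.1 v p.1, hiso' p.2.1.1 p.1 p.2.1.2⟩, ?_, ?_⟩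
    · intro g
      refine Subtype.ext (funext fun x => ?_)
      dsimp only
      by_cases hx : x = v
      · rw [hx]
        simp only [Function.update_self]
      · simp only [Function.update_of_ne hx]
    · rintro ⟨c, ⟨g, hg⟩⟩
      dsimp only
      refine Prod.ext ?_ ?_
      · simp only [Function.update_self]
      · refine Subtype.ext (Subtype.ext (funext fun x => ?_))
        dsimp only
        by_cases hx : x = v
        · rw [hx]
          simp only [Function.update_self, Function.update_of_ne hne, hg]
        · simp only [Function.update_of_ne hx]
  rw [Nat.card_congr e, Nat.card_prod, Nat.card_eq_fintype_card, Fintype.card_fin]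

lemma card_PC_con_sub [Fintype V] (hne : u ≠ v) (k : ℕ) :
    Nat.card {f : PC (Gcon G u v) k // f.1 u = f.1 v}
      = Nat.card (PC ((Gcon G u v).comap (Subtype.val : {x : V // x ≠ v} → V)) k) := by
  classical
  refine Nat.card_congr ⟨fun f => ⟨fun x => f.1.1 x.1, fun a b hab => f.1.2 _ _ hab⟩,
    fun g => ⟨⟨fun x => if hx : x = v then g.1 ⟨u, hne⟩ else g.1 ⟨x, hx⟩, ?_⟩, ?_⟩, ?_, ?_⟩
  · intro a b hab
    dsimp only
    rw [dif_neg hab.1, dif_neg hab.2.1]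
    exact g.2 ⟨a, hab.1⟩ ⟨b, hab.2.1⟩ hab
  · dsimp only
    rw [dif_neg hne, dif_pos rfl]
  · rintro ⟨f, hf⟩
    refine Subtype.ext (Subtype.ext (funext fun x => ?_))
    dsimp only
    by_cases hx : x = v
    · rw [dif_pos hx, hx]
      exact hf
    · rw [dif_neg hx]
  · intro g
    refine Subtype.ext (funext fun x => ?_)
    dsimp only
    rw [dif_neg x.2]
end Colorings
section EdgeCounts
variable {V : Type*} {G : SimpleGraph V} {u v : V}

lemma edge_del_lt [Fintype V] (huv : G.Adj u v) :
    (G.deleteEdges {s(u,v)}).edgeSet.ncard < G.edgeSet.ncard := by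
  classical
  rw [SimpleGraph.edgeSet_deleteEdges]
  exact Set.ncard_lt_ncard (Set.sdiff_singleton_ssubset.2 (G.mem_edgeSet.2 huv))
    (Set.toFinite _)

lemma edge_con_lt [Fintype V] (huv : G.Adj u v) :
    (Gcon G u v).edgeSet.ncard < G.edgeSet.ncard := by
  classical
  have hne : u ≠ v := huv.ne
  set F : Sym2 V → Sym2 V := fun e =>
    if e ∈ G.edgeSet then e else Sym2.map (fun x => if x = u then v else x) e with hF
  have key1 : ∀ e, e ∈ G.edgeSet → F e = e := by
    intro e he
    simp only [hF]
    rw [if_pos he]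
  have key2 : ∀ e, e ∉ G.edgeSet →
      F e = Sym2.map (fun x => if x = u then v else x) e := by
    intro e he
    simp only [hF]
    rw [if_neg he]
  have hrep : ∀ e ∈ (Gcon G u v).edgeSet, (e ∈ G.edgeSet ∧ ∀ x ∈ e, x ≠ v) ∨
      (∃ b, b ≠ u ∧ b ≠ v ∧ e = s(u, b) ∧ G.Adj v b ∧ e ∉ G.edgeSet) := by
    intro e
    induction e using Sym2.ind with
    | _ a b =>
      intro he
      obtain ⟨hav, hbv, hnab, hor⟩ := (SimpleGraph.mem_edgeSet _).1 he
      by_cases hmem : s(a,b) ∈ G.edgeSet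
      · refine Or.inl ⟨hmem, fun x hx => ?_⟩
        rcases Sym2.mem_iff.1 hx with rfl | rfl
        · exact hav
        · exact hbv
      · rcases hor with hG | ⟨hau, hG⟩ | ⟨hbu, hG⟩
        · exact absurd ((SimpleGraph.mem_edgeSet _).2 hG) hmem
        · exact Or.inr ⟨b, fun h => hnab (hau.trans h.symm), hbv,
            by rw [hau], hG, hmem⟩
        · exact Or.inr ⟨a, fun h => hnab (h.trans hbu.symm), hav,
            by rw [hbu, Sym2.eq_swap], hG.symm, hmem⟩
  have himg : ∀ e ∈ (Gcon G u v).edgeSet, F e ∈ G.edgeSet \ {s(u,v)} := by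
    intro e he
    rcases hrep e he with ⟨hmem, hv⟩ | ⟨b, hbu, hbv, rfl, hG, hmem⟩
    · rw [key1 _ hmem]
      refine ⟨hmem, fun hc => ?_⟩
      have : v ∈ e := by
        rw [Set.mem_singleton_iff.1 hc]
        exact Sym2.mem_mk_right u v
      exact hv v this rfl
    · rw [key2 _ hmem]
      simp only [Sym2.map_pair_eq, if_pos rfl, if_neg hbu]
      refine ⟨(SimpleGraph.mem_edgeSet _).2 hG, fun hc => ?_⟩
      rcases Sym2.eq_iff.1 (Set.mem_singleton_iff.1 hc) with ⟨hc1, -⟩ | ⟨-, hc2⟩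
      · exact hne hc1.symm
      · exact hbu hc2
  have hinj : Set.InjOn F (Gcon G u v).edgeSet := by
    intro e1 he1 e2 he2 hF12
    rcases hrep e1 he1 with ⟨hm1, hv1⟩ | ⟨b1, hbu1, hbv1, rfl, hG1, hm1⟩ <;>
      rcases hrep e2 he2 with ⟨hm2, hv2⟩ | ⟨b2, hbu2, hbv2, rfl, hG2, hm2⟩
    · rwa [key1 _ hm1, key1 _ hm2] at hF12
    · rw [key1 _ hm1, key2 _ hm2] at hF12
      simp only [Sym2.map_pair_eq, if_pos rfl, if_neg hbu2] at hF12
      exfalso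
      refine hv1 v ?_ rfl
      rw [hF12]
      exact Sym2.mem_mk_left v b2
    · rw [key2 _ hm1, key1 _ hm2] at hF12
      simp only [Sym2.map_pair_eq, if_pos rfl, if_neg hbu1] at hF12
      exfalso
      refine hv2 v ?_ rfl
      rw [← hF12]
      exact Sym2.mem_mk_left v b1
    · rw [key2 _ hm1, key2 _ hm2] at hF12
      simp only [Sym2.map_pair_eq, if_pos rfl, if_neg hbu1, if_neg hbu2] at hF12
      rcases Sym2.eq_iff.1 hF12 with ⟨-, h2⟩ | ⟨h1, -⟩
      · rw [h2]
      · exact absurd h1.symm hbv2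
  calc (Gcon G u v).edgeSet.ncard = (F '' (Gcon G u v).edgeSet).ncard :=
        (Set.ncard_image_of_injOn hinj).symm
    _ ≤ (G.edgeSet \ {s(u,v)}).ncard := Set.ncard_le_ncard
        (fun e he => by obtain ⟨e', he', rfl⟩ := he; exact himg e' he')
        (Set.toFinite _)
    _ < G.edgeSet.ncard := Set.ncard_lt_ncard
        (Set.sdiff_singleton_ssubset.2 (G.mem_edgeSet.2 huv)) (Set.toFinite _)

lemma edge_comap_le [Fintype V] {p : V → Prop} :
    ((Gcon G u v).comap (Subtype.val : {x : V // p x} → V)).edgeSet.ncard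
      ≤ (Gcon G u v).edgeSet.ncard := by
  classical
  set F : Sym2 {x : V // p x} → Sym2 V := Sym2.map Subtype.val with hF
  have hinj : Set.InjOn F (((Gcon G u v).comap
      (Subtype.val : {x : V // p x} → V)).edgeSet) :=
    fun e1 _ e2 _ h => Sym2.map.injective Subtype.val_injective h
  have himg : ∀ e ∈ ((Gcon G u v).comap (Subtype.val : {x : V // p x} → V)).edgeSet,
      F e ∈ (Gcon G u v).edgeSet := by
    intro e
    induction e using Sym2.ind with
    | _ a b =>
      intro he
      rw [hF]
      rw [Sym2.map_pair_eq]
      exact (SimpleGraph.mem_edgeSet _).2 ((SimpleGraph.mem_edgeSet _).1 he)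
  calc (((Gcon G u v).comap (Subtype.val : {x : V // p x} → V)).edgeSet).ncard
      = (F '' _).ncard := (Set.ncard_image_of_injOn hinj).symm
    _ ≤ (Gcon G u v).edgeSet.ncard := Set.ncard_le_ncard
        (fun e he => by obtain ⟨e', he', rfl⟩ := he; exact himg e' he')
        (Set.toFinite _)
end EdgeCounts

section BotCase
variable {V : Type*} {G : SimpleGraph V}

lemma ao_card_bot [Fintype V] (h : ∀ a b, ¬ G.Adj a b) :
    Nat.card {D : V → V → Prop // IsAcyclicOrientation G D} = 1 := by
  have hbot : IsAcyclicOrientation G (fun _ _ => False) := by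
    refine ⟨fun a b hf => hf.elim, fun a b hG => (h a b hG).elim, fun a ht => ?_⟩
    cases ht with
    | single h' => exact h'
    | tail _ h' => exact h'
  have huniq : ∀ Dp : {D : V → V → Prop // IsAcyclicOrientation G D},
      Dp = ⟨fun _ _ => False, hbot⟩ := by
    rintro ⟨D, hD⟩
    refine Subtype.ext (funext fun x => funext fun y => propext ?_)
    exact ⟨fun hd => h x y (hD.1 x y hd), False.elim⟩
  haveI : Unique {D : V → V → Prop // IsAcyclicOrientation G D} :=
    ⟨⟨⟨fun _ _ => False, hbot⟩⟩, huniq⟩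
  exact Nat.card_unique

lemma col_card_bot [Fintype V] (h : ∀ a b, ¬ G.Adj a b) (k : ℕ) :
    Nat.card (PC G k) = k ^ (Fintype.card V) := by
  classical
  have e : PC G k ≃ (V → Fin k) :=
    Equiv.subtypeUnivEquiv (fun f a b hab => (h a b hab).elim)
  rw [Nat.card_congr e, Nat.card_eq_fintype_card, Fintype.card_fun, Fintype.card_fin]
end BotCase
section Main

lemma main_bot {V : Type u} [Fintype V] (G : SimpleGraph V) (h : ∀ a b, ¬ G.Adj a b) :
    ∃ Q : Polynomial ℝ,
      (∀ k : ℕ, 1 ≤ k → Q.eval (k : ℝ) = (Nat.card (PC G k) : ℝ)) ∧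
      (Nonempty V → Q.eval 0 = 0) ∧
      (-1 : ℝ) ^ (Fintype.card V) * Q.eval (-1)
        = (Nat.card {D : V → V → Prop // IsAcyclicOrientation G D} : ℝ) := by
  refine ⟨X ^ (Fintype.card V), ?_, ?_, ?_⟩
  · intro k hk
    rw [col_card_bot h k, Polynomial.eval_pow, Polynomial.eval_X]
    push_cast
    ring
  · intro hne
    rw [Polynomial.eval_pow, Polynomial.eval_X]
    exact zero_pow (Fintype.card_pos_iff.2 hne).ne'
  · rw [ao_card_bot h, Polynomial.eval_pow, Polynomial.eval_X, ← mul_pow]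
    norm_num

lemma main_aux (m : ℕ) : ∀ (V : Type u) [Fintype V] (G : SimpleGraph V),
    G.edgeSet.ncard ≤ m →
    ∃ Q : Polynomial ℝ,
      (∀ k : ℕ, 1 ≤ k → Q.eval (k : ℝ) = (Nat.card (PC G k) : ℝ)) ∧
      (Nonempty V → Q.eval 0 = 0) ∧
      (-1 : ℝ) ^ (Fintype.card V) * Q.eval (-1)
        = (Nat.card {D : V → V → Prop // IsAcyclicOrientation G D} : ℝ) := by
  induction m with
  | zero =>
    intro V _ G hG
    refine main_bot G ?_
    have hemp : G.edgeSet = ∅ := (Set.ncard_eq_zero (Set.toFinite _)).1 (by omega)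
    intro a b hab
    have : s(a,b) ∈ G.edgeSet := (SimpleGraph.mem_edgeSet _).2 hab
    rw [hemp] at this
    exact this
  | succ m ih =>
    intro V _ G hG
    classical
    by_cases hbot : ∀ a b, ¬ G.Adj a b
    · exact main_bot G hbot
    · push_neg at hbot
      obtain ⟨u, v, huv⟩ := hbot
      have hne : u ≠ v := huv.ne
      obtain ⟨Q1, hQ1, hQ10, hQ1a⟩ := ih V (G.deleteEdges {s(u,v)})
        (by have := edge_del_lt huv; omega)
      obtain ⟨Q2, hQ2, hQ20, hQ2a⟩ := ih V (Gcon G u v)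
        (by have := edge_con_lt huv; omega)
      obtain ⟨Q', hQ', hQ'0, -⟩ := ih {x : V // x ≠ v}
        ((Gcon G u v).comap (Subtype.val : {x : V // x ≠ v} → V))
        (by
          have h1 := edge_comap_le (G := G) (u := u) (v := v) (p := fun x => x ≠ v)
          have h2 := edge_con_lt huv
          omega)
      obtain ⟨R, hR⟩ : (X : Polynomial ℝ) ∣ Q2 := by
        rw [Polynomial.X_dvd_iff, Polynomial.coeff_zero_eq_eval_zero]
        exact hQ20 ⟨u⟩
      have hRk : ∀ k : ℕ, 1 ≤ k → R.eval (k : ℝ)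
          = (Nat.card {f : PC (Gcon G u v) k // f.1 u = f.1 v} : ℝ) := by
        intro k hk
        have h1 := hQ2 k hk
        rw [hR, card_PC_con_mul hne k, Polynomial.eval_mul, Polynomial.eval_X] at h1
        have hk0 : (k : ℝ) ≠ 0 := Nat.cast_ne_zero.2 (by omega)
        push_cast at h1
        exact mul_left_cancel₀ hk0 h1
      have hR0 : R.eval 0 = 0 := by
        have hRQ' : R = Q' := poly_unique (fun k hk => by
          rw [hRk k hk, hQ' k hk, card_PC_con_sub hne k])
        rw [hRQ']
        exact hQ'0 ⟨⟨u, hne⟩⟩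
      refine ⟨Q1 - R, ?_, ?_, ?_⟩
      · intro k hk
        rw [Polynomial.eval_sub, hQ1 k hk, hRk k hk, card_PC_del huv k]
        push_cast
        ring
      · intro hne'
        rw [Polynomial.eval_sub, hQ10 hne', hR0]
        ring
      · have hQ2R : Q2.eval (-1) = - R.eval (-1) := by
          rw [hR, Polynomial.eval_mul, Polynomial.eval_X]
          ring
        have e1 : (-1:ℝ) ^ (Fintype.card V) * R.eval (-1)
            = -(Nat.card {D : V → V → Prop //
                IsAcyclicOrientation (Gcon G u v) D} : ℝ) := by
          rw [← hQ2a, hQ2R]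
          ring
        rw [Polynomial.eval_sub, mul_sub, e1, hQ1a, ao_count huv]
        push_cast
        ring
end Main

theorem stmt11 {V : Type*} [Fintype V] (G : SimpleGraph V) (P : Polynomial ℝ)
    (hP : IsChromPoly G P) :
    (-1 : ℝ) ^ (Fintype.card V) * P.eval (-1) =
      (Nat.card {D : V → V → Prop // IsAcyclicOrientation G D} : ℝ) := by
  obtain ⟨Q, hQ, -, hQa⟩ := main_aux (G.edgeSet.ncard) V G le_rfl
  have hPQ : P = Q := poly_unique (fun k hk => by
    rw [hP k, card_coloring_eq]
    exact (hQ k hk).symm)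
  rw [hPQ]
  exact hQa
end PolyLemmas
end

section
/- Let G be a 2-connected simple graph of order n ≥ 3 that is neither complete nor a cycle. Then there exist two non-adjacent vertices u_1, u_2 of G such that G − {u_1, u_2} is connected. -/
open Polynomial

section Aux

variable {V : Type*} {G : SimpleGraph V}

/-- `a` and `b` are joined by a walk in `G` whose support lies in `s`. -/
def GReach (G : SimpleGraph V) (s : Set V) (a b : V) : Prop :=
  ∃ p : G.Walk a b, ∀ v ∈ p.support, v ∈ s

namespace GReach

lemma start_mem {s : Set V} {a b : V} (h : GReach G s a b) : a ∈ s :=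
  h.choose_spec a h.choose.start_mem_support

lemma refl {s : Set V} {a : V} (ha : a ∈ s) : GReach G s a a :=
  ⟨SimpleGraph.Walk.nil, by simpa using ha⟩

lemma symm {s : Set V} {a b : V} (h : GReach G s a b) : GReach G s b a := by
  obtain ⟨p, hp⟩ := h
  exact ⟨p.reverse, by simpa using hp⟩

lemma end_mem {s : Set V} {a b : V} (h : GReach G s a b) : b ∈ s :=
  h.symm.start_mem

lemma trans {s : Set V} {a b c : V} (h1 : GReach G s a b) (h2 : GReach G s b c) :
    GReach G s a c := by
  obtain ⟨p, hp⟩ := h1; obtain ⟨q, hq⟩ := h2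
  refine ⟨p.append q, fun v hv => ?_⟩
  rcases (SimpleGraph.Walk.mem_support_append_iff p q).mp hv with h | h
  exacts [hp v h, hq v h]

lemma mono {s t : Set V} (hst : s ⊆ t) {a b : V} (h : GReach G s a b) : GReach G t a b :=
  ⟨h.choose, fun v hv => hst (h.choose_spec v hv)⟩

lemma of_adj {s : Set V} {a b : V} (h : G.Adj a b) (ha : a ∈ s) (hb : b ∈ s) :
    GReach G s a b := by
  refine ⟨h.toWalk, fun v hv => ?_⟩
  simp only [SimpleGraph.Walk.support_cons, SimpleGraph.Walk.support_nil,
    List.mem_cons, List.mem_singleton] at hv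
  rcases hv with rfl | hv
  · exact ha
  · simp at hv; subst hv; exact hb

private lemma reach_ind {s : Set V} : ∀ {a b : V} (p : G.Walk a b)
    (hp : ∀ v ∈ p.support, v ∈ s),
    (G.induce s).Reachable ⟨a, hp a p.start_mem_support⟩ ⟨b, hp b p.end_mem_support⟩ := by
  intro a b p
  induction p with
  | nil => intro hp; exact SimpleGraph.Reachable.refl _
  | @cons a c b hadj q ih =>
      intro hp
      have hc : c ∈ s := hp c (by simp)
      have h1 : (G.induce s).Adj ⟨a, hp a (by simp)⟩ ⟨c, hc⟩ := by
        simpa using hadj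
      exact h1.reachable.trans (ih (fun v hv => hp v (by simp [hv])))

lemma reachable_induce {s : Set V} {a b : V} (ha : a ∈ s) (hb : b ∈ s)
    (h : GReach G s a b) : (G.induce s).Reachable ⟨a, ha⟩ ⟨b, hb⟩ := by
  obtain ⟨p, hp⟩ := h
  exact reach_ind p hp

lemma of_reachable_induce {s : Set V} {a b : V} {ha : a ∈ s} {hb : b ∈ s}
    (h : (G.induce s).Reachable ⟨a, ha⟩ ⟨b, hb⟩) : GReach G s a b := by
  obtain ⟨p⟩ := h
  refine ⟨p.map (SimpleGraph.Embedding.induce s).toHom, fun v hv => ?_⟩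
  erw [SimpleGraph.Walk.support_map] at hv
  obtain ⟨u, hu, rfl⟩ := List.mem_map.mp hv
  exact u.2

lemma induce_connected_of_hub {s : Set V} {r : V} (hr : r ∈ s)
    (h : ∀ v ∈ s, GReach G s v r) : (G.induce s).Connected := by
  have : Nonempty ↥s := ⟨⟨r, hr⟩⟩
  refine ⟨fun a b => ?_⟩
  have h1 := reachable_induce a.2 hr (h a a.2)
  have h2 := reachable_induce b.2 hr (h b b.2)
  exact h1.trans h2.symm

end GReach

lemma exists_removable [Finite V] {s : Set V} {r v₀ : V}
    (hconn : (G.induce s).Connected) (hr : r ∈ s) (hv₀ : v₀ ∈ s) (hne : v₀ ≠ r) :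
    ∃ x ∈ s, x ≠ r ∧ ∀ y ∈ s, y ≠ x → GReach G (s \ {x}) y r := by
  classical
  set H := G.induce s with hH
  have : Nonempty ↥s := ⟨⟨r, hr⟩⟩
  obtain ⟨x, hx⟩ := Finite.exists_max (fun u : ↥s => H.dist ⟨r, hr⟩ u)
  have hdpos : 0 < H.dist ⟨r, hr⟩ ⟨v₀, hv₀⟩ :=
    hconn.pos_dist_of_ne (by simp [Ne.symm hne])
  have hxr : (x : V) ≠ r := by
    intro hh
    have hx0 : H.dist ⟨r, hr⟩ x = 0 := by
      have : x = (⟨r, hr⟩ : ↥s) := Subtype.ext hh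
      rw [this]; exact SimpleGraph.dist_self
    have := hx ⟨v₀, hv₀⟩
    omega
  refine ⟨x, x.2, hxr, ?_⟩
  intro y hy hyx
  have hreach : H.Reachable ⟨r, hr⟩ ⟨y, hy⟩ := hconn.preconnected _ _
  obtain ⟨p, hp⟩ := hreach.exists_walk_length_eq_dist
  have hxs : x ∉ p.support := by
    intro hxsup
    have h1 : H.dist ⟨r, hr⟩ x ≤ (p.takeUntil x hxsup).length := SimpleGraph.dist_le _
    have h2 : H.dist x ⟨y, hy⟩ ≤ (p.dropUntil x hxsup).length := SimpleGraph.dist_le _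
    have h3 : (p.takeUntil x hxsup).length + (p.dropUntil x hxsup).length = p.length := by
      rw [← SimpleGraph.Walk.length_append, SimpleGraph.Walk.take_spec]
    have h4 : H.dist ⟨r, hr⟩ ⟨y, hy⟩ ≤ H.dist ⟨r, hr⟩ x := hx _
    have h5 : (p.dropUntil x hxsup).length = 0 := by omega
    have h6 := SimpleGraph.Walk.eq_of_length_eq_zero h5
    exact hyx (congrArg Subtype.val h6).symm
  apply GReach.symm
  refine ⟨p.map (SimpleGraph.Embedding.induce s).toHom, fun v hv => ?_⟩
  erw [SimpleGraph.Walk.support_map] at hv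
  obtain ⟨u, hu, rfl⟩ := List.mem_map.mp hv
  exact ⟨u.2, fun h => hxs ((Subtype.ext h : u = x) ▸ hu)⟩

end Aux

theorem stmt13 {V : Type*} [Fintype V] [DecidableEq V] (G : SimpleGraph V)
    [DecidableRel G.Adj]
    (hn : 3 ≤ Fintype.card V)
    (h2conn : ∀ v : V, (G.induce {w | w ≠ v}).Connected)
    (hnc : G ≠ ⊤)
    (hncyc : ¬ (G.Connected ∧ ∀ v, G.degree v = 2)) :
    ∃ u₁ u₂ : V, u₁ ≠ u₂ ∧ ¬ G.Adj u₁ u₂ ∧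
      (G.induce {w | w ≠ u₁ ∧ w ≠ u₂}).Connected := by
  classical
  by_contra hcon
  push_neg at hcon
  -- Step 1: every vertex has two distinct neighbors
  have hmin : ∀ v : V, ∃ y z : V, y ≠ z ∧ G.Adj v y ∧ G.Adj v z := by
    intro v
    by_contra hc
    push_neg at hc
    obtain ⟨y, hyv, hy⟩ : ∃ y, y ≠ v ∧ ∀ c, G.Adj v c → c = y := by
      by_cases hA : ∃ c, G.Adj v c
      · obtain ⟨c, hc'⟩ := hA
        refine ⟨c, hc'.ne', fun d hd => ?_⟩
        by_contra hdc
        exact hc d c hdc hd hc'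
      · push_neg at hA
        obtain ⟨y, hy⟩ := Fintype.exists_ne_of_one_lt_card (by omega) v
        exact ⟨y, hy, fun c hc' => absurd hc' (hA c)⟩
    obtain ⟨u, huv, huy⟩ : ∃ u, u ≠ v ∧ u ≠ y := by
      by_contra h
      push_neg at h
      have hsub : (Finset.univ : Finset V) ⊆ {v, y} := by
        intro u _
        by_cases h' : u = v
        · simp [h']
        · simp [h u h']
      have := Finset.card_le_card hsub
      have h2 : ({v, y} : Finset V).card ≤ 2 := Finset.card_insert_le _ _ |>.trans (by simp)
      rw [Finset.card_univ] at this
      omega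
    have hre : GReach G {u | u ≠ y} v u :=
      GReach.of_reachable_induce
        ((h2conn y).preconnected ⟨v, Ne.symm hyv⟩ ⟨u, huy⟩)
    obtain ⟨p, hp⟩ := hre
    cases p with
    | nil => exact huv rfl
    | cons hadj q =>
      rename_i c
      have hcy := hy _ hadj
      have hcs : c ∈ {u | u ≠ y} := hp c (by simp)
      exact hcs hcy
  -- Step 2: G is connected
  have hGconn : G.Connected := by
    have hne : Nonempty V := Fintype.card_pos_iff.mp (by omega)
    obtain ⟨v⟩ := hne
    have key : ∀ a : V, G.Reachable a v := by
      intro a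
      by_cases hav : a = v
      · exact hav ▸ SimpleGraph.Reachable.refl _
      · obtain ⟨y, z, hyz, hvy, hvz⟩ := hmin v
        have h1 : GReach G {u | u ≠ v} a y :=
          GReach.of_reachable_induce
            ((h2conn v).preconnected ⟨a, hav⟩ ⟨y, hvy.ne'⟩)
        obtain ⟨p, _⟩ := h1
        exact (SimpleGraph.Walk.reachable p).trans hvy.symm.reachable
    have : Nonempty V := ⟨v⟩
    exact ⟨fun a b => (key a).trans (key b).symm⟩
  -- Step 3: a vertex of degree ≥ 3
  have hdeg2 : ∀ v, 2 ≤ G.degree v := by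
    intro v
    obtain ⟨y, z, hyz, hvy, hvz⟩ := hmin v
    have hsub : ({y, z} : Finset V) ⊆ G.neighborFinset v := by
      intro u hu
      simp only [Finset.mem_insert, Finset.mem_singleton] at hu
      rcases hu with rfl | rfl <;> simpa [SimpleGraph.mem_neighborFinset]
    have h2 : ({y, z} : Finset V).card = 2 := by
      rw [Finset.card_insert_of_notMem (by simpa using hyz), Finset.card_singleton]
    calc 2 = ({y, z} : Finset V).card := h2.symm
    _ ≤ (G.neighborFinset v).card := Finset.card_le_card hsub
  obtain ⟨w, hw⟩ : ∃ w, G.degree w ≠ 2 := by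
    by_contra h
    push_neg at h
    exact hncyc ⟨hGconn, h⟩
  have hw3 : 3 ≤ G.degree w := by
    have := hdeg2 w
    omega
  by_cases hA : ∀ x, x ≠ w → G.Adj w x
  · -- Case A: w is adjacent to all other vertices
    obtain ⟨a, b, hab, hnadj⟩ : ∃ a b, a ≠ b ∧ ¬ G.Adj a b := by
      by_contra h
      push_neg at h
      apply hnc
      ext u v
      simp only [SimpleGraph.top_adj]
      exact ⟨fun h' => h'.ne, fun h' => h u v h'⟩
    have haw : a ≠ w := by
      rintro rfl
      exact hnadj (hA b hab.symm)
    have hbw : b ≠ w := by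
      rintro rfl
      exact hnadj (hA a hab).symm
    refine absurd ?_ (hcon a b hab hnadj)
    refine GReach.induce_connected_of_hub (r := w) ⟨haw.symm, hbw.symm⟩ ?_
    intro v hv
    by_cases hvw : v = w
    · subst hvw; exact GReach.refl ⟨haw.symm, hbw.symm⟩
    · exact GReach.of_adj (hA v hvw).symm hv ⟨haw.symm, hbw.symm⟩
  · -- Case B
    push_neg at hA
    obtain ⟨z, hzw, hznadj⟩ := hA
    have hnc2 := hcon w z (Ne.symm hzw) hznadj
    -- a neighbor of w that lies in s := {u | u ≠ w ∧ u ≠ z}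
    obtain ⟨y₀, hy₀⟩ : ∃ y₀, G.Adj w y₀ := by
      have : 0 < (G.neighborFinset w).card := by
        have := hw3; unfold SimpleGraph.degree at this; omega
      obtain ⟨y₀, hy₀⟩ := Finset.card_pos.mp this
      exact ⟨y₀, (SimpleGraph.mem_neighborFinset _ _ _).mp hy₀⟩
    have hy₀s : y₀ ∈ {u | u ≠ w ∧ u ≠ z} :=
      ⟨hy₀.ne', fun h => hznadj (h ▸ hy₀)⟩
    obtain ⟨⟨p, hps⟩, ⟨q, hqs⟩, hpq⟩ :
        ∃ a b : ↥{u | u ≠ w ∧ u ≠ z}, ¬ (G.induce {u | u ≠ w ∧ u ≠ z}).Reachable a b := by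
      by_contra h
      push_neg at h
      have hne : Nonempty ↥{u | u ≠ w ∧ u ≠ z} := ⟨⟨y₀, hy₀s⟩⟩
      exact hnc2 ⟨fun a b => h a b⟩
    set s : Set V := {u | u ≠ w ∧ u ≠ z} with hs
    have hnreach : ¬ GReach G s p q := fun h => hpq (GReach.reachable_induce hps hqs h)
    -- every vertex of s can reach z staying inside its own component plus z
    have attach : ∀ c, c ∈ s → GReach G ({d | GReach G s c d} ∪ {z}) c z := by
      intro c hcs
      have hSw : GReach G {u | u ≠ w} c z :=
        GReach.of_reachable_induce ((h2conn w).preconnected ⟨c, hcs.1⟩ ⟨z, hzw⟩)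
      obtain ⟨p0, hp0⟩ := hSw
      have hzsup : z ∈ p0.support := p0.end_mem_support
      refine ⟨p0.takeUntil z hzsup, ?_⟩
      intro v hv
      by_cases hvz : v = z
      · exact Or.inr hvz
      · left
        set t := p0.takeUntil z hzsup with ht
        have hz2 : z ∉ (t.takeUntil v hv).support := by
          intro hz2
          have hcount := SimpleGraph.Walk.count_support_takeUntil_eq_one p0 hzsup
          have hsupp : t.support = (t.takeUntil v hv).support
              ++ (t.dropUntil v hv).support.tail := by
            conv_lhs => rw [← t.take_spec hv]
            rw [SimpleGraph.Walk.support_append]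
          have hdrop : z ∈ (t.dropUntil v hv).support.tail := by
            have hz3 : z ∈ (t.dropUntil v hv).support :=
              SimpleGraph.Walk.end_mem_support _
            rw [SimpleGraph.Walk.support_eq_cons] at hz3
            rcases List.mem_cons.mp hz3 with h | h
            · exact absurd h.symm hvz
            · exact h
          rw [hsupp, List.count_append] at hcount
          have c1 : 0 < (t.takeUntil v hv).support.count z := List.count_pos_iff.mpr hz2
          have c2 : 0 < (t.dropUntil v hv).support.tail.count z := List.count_pos_iff.mpr hdrop
          omega
        refine ⟨(t.takeUntil v hv), fun u hu => ?_⟩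
        have hu1 : u ∈ {u | u ≠ w} :=
          hp0 u (SimpleGraph.Walk.support_takeUntil_subset _ _
            ((SimpleGraph.Walk.support_takeUntil_subset _ _) hu))
        exact ⟨hu1, fun h => hz2 (h ▸ hu)⟩
    -- each component together with z induces a connected graph
    have hconnD : ∀ c, c ∈ s → (G.induce ({d | GReach G s c d} ∪ {z})).Connected := by
      intro c hcs
      refine GReach.induce_connected_of_hub (r := z) (Or.inr rfl) ?_
      intro v hv
      rcases hv with hv | hv
      · have hvs : v ∈ s := hv.end_mem
        refine (attach v hvs).mono ?_
        rintro u (hu | hu)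
        · exact Or.inl (hv.trans hu)
        · exact Or.inr hu
      · rcases hv with rfl
        exact GReach.refl (Or.inr rfl)
    have hpz : p ≠ z := hps.2
    have hqz : q ≠ z := hqs.2
    obtain ⟨x, hxD, hxz, hxrem⟩ :=
      exists_removable (hconnD p hps) (Or.inr rfl) (Or.inl (GReach.refl hps)) hpz
    obtain ⟨x', hx'D, hx'z, hx'rem⟩ :=
      exists_removable (hconnD q hqs) (Or.inr rfl) (Or.inl (GReach.refl hqs)) hqz
    have hxCp : GReach G s p x := by
      rcases hxD with h | h
      · exact h
      · exact absurd h hxz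
    have hx'Cq : GReach G s q x' := by
      rcases hx'D with h | h
      · exact h
      · exact absurd h hx'z
    have hxs : x ∈ s := hxCp.end_mem
    have hx's : x' ∈ s := hx'Cq.end_mem
    have hxx' : x ≠ x' := by
      rintro rfl
      exact hnreach (hxCp.trans hx'Cq.symm)
    have hnadjxx' : ¬ G.Adj x x' := fun h =>
      hnreach (hxCp.trans ((GReach.of_adj h hxs hx's).trans hx'Cq.symm))
    refine absurd ?_ (hcon x x' hxx' hnadjxx')
    have hzT : z ∈ {u | u ≠ x ∧ u ≠ x'} := ⟨Ne.symm hxz, Ne.symm hx'z⟩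
    -- every vertex of s (other than x, x') reaches z avoiding x, x'
    have hreachT : ∀ v, v ∈ s → v ≠ x → v ≠ x' →
        GReach G {u | u ≠ x ∧ u ≠ x'} v z := by
      intro v hvs hvx hvx'
      by_cases hvp : GReach G s p v
      · refine (hxrem v (Or.inl hvp) hvx).mono ?_
        rintro u ⟨hu, hux⟩
        simp only [Set.mem_singleton_iff] at hux
        refine ⟨hux, ?_⟩
        rcases hu with hu | hu
        · rintro rfl
          exact hnreach (hu.trans hx'Cq.symm)
        · rcases hu with rfl
          exact Ne.symm hx'z
      · by_cases hvq : GReach G s q v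
        · refine (hx'rem v (Or.inl hvq) hvx').mono ?_
          rintro u ⟨hu, hux'⟩
          simp only [Set.mem_singleton_iff] at hux'
          refine ⟨?_, hux'⟩
          rcases hu with hu | hu
          · rintro rfl
            exact hnreach (hxCp.trans hu.symm)
          · rcases hu with rfl
            exact Ne.symm hxz
        · refine (attach v hvs).mono ?_
          rintro u (hu | hu)
          · constructor
            · rintro rfl
              exact hvp (hxCp.trans hu.symm)
            · rintro rfl
              exact hvq (hx'Cq.trans hu.symm)
          · rcases hu with rfl
            exact hzT
    refine GReach.induce_connected_of_hub (r := z) hzT ?_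
    intro v hv
    by_cases hvw : v = w
    · subst hvw
      obtain ⟨y, hwy, hyx, hyx'⟩ : ∃ y, G.Adj v y ∧ y ≠ x ∧ y ≠ x' := by
        by_contra h
        push_neg at h
        have hsub : G.neighborFinset v ⊆ {x, x'} := by
          intro y hy
          rw [SimpleGraph.mem_neighborFinset] at hy
          simp only [Finset.mem_insert, Finset.mem_singleton]
          by_cases h1 : y = x
          · exact Or.inl h1
          · exact Or.inr (h y hy h1)
        have hc1 := Finset.card_le_card hsub
        have hc2 : ({x, x'} : Finset V).card ≤ 2 :=
          (Finset.card_insert_le _ _).trans (by simp)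
        have := hw3
        unfold SimpleGraph.degree at this
        omega
      have hys : y ∈ s := ⟨hwy.ne', fun h => hznadj (h ▸ hwy)⟩
      exact (GReach.of_adj hwy hv ⟨hyx, hyx'⟩).trans (hreachT y hys hyx hyx')
    · by_cases hvz : v = z
      · subst hvz; exact GReach.refl hzT
      · exact hreachT v ⟨hvw, hvz⟩ hv.1 hv.2
end

section
/- Let G be a simple graph of order n ≥ 3 with c components, where 2 ≤ c ≤ n − 1. Then for every integer i with c ≤ i ≤ n − 1, there exists a partition V_1, V_2, …, V_i of V(G) such that G[V_j] is connected for all j = 2, …, i, and G[V_1] has exactly two components, one of which is a single vertex. -/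
open Polynomial

section Aux

open SimpleGraph

lemma induce_singleton_connected {V : Type*} (G : SimpleGraph V) (v : V) :
    (G.induce ({v} : Set V)).Connected := by
  rw [SimpleGraph.connected_iff]
  refine ⟨fun a b => ?_, ⟨⟨v, rfl⟩⟩⟩
  have : a = b := Subtype.ext (by rw [a.2, b.2])
  exact this ▸ SimpleGraph.Reachable.refl a

lemma supp_induce_connected {V : Type*} [DecidableEq V] (G : SimpleGraph V)
    (C : G.ConnectedComponent) : (G.induce C.supp).Connected := by
  obtain ⟨u, hu⟩ := C.exists_rep
  apply SimpleGraph.induce_connected_of_patches u (show u ∈ C.supp from hu)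
  intro w hw
  have hr : G.Reachable u w := SimpleGraph.ConnectedComponent.exact (by
    show G.connectedComponentMk u = G.connectedComponentMk w
    rw [show G.connectedComponentMk u = C from hu, hw])
  obtain ⟨p⟩ := hr
  refine ⟨{x | x ∈ p.support}, ?_, p.start_mem_support, p.end_mem_support, ?_⟩
  · intro x hx
    have hux : G.Reachable u x := (p.takeUntil x hx).reachable
    show G.connectedComponentMk x = C
    rw [← (show G.connectedComponentMk u = C from hu)]
    exact SimpleGraph.ConnectedComponent.sound hux.symm
  · exact (p.connected_induce_support).preconnected _ _


lemma exists_delete_vertex_connected {W : Type*} [Fintype W] (H : SimpleGraph W)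
    (hc : H.Connected) (h2 : 2 ≤ Fintype.card W) :
    ∃ v : W, (H.induce {w | w ≠ v}).Connected := by
  classical
  obtain ⟨u⟩ := hc.nonempty
  obtain ⟨v, -, hv⟩ := Finset.exists_max_image Finset.univ (H.dist u) ⟨u, Finset.mem_univ u⟩
  obtain ⟨w0, hw0⟩ := Fintype.exists_ne_of_one_lt_card (by omega) u
  have hvu : v ≠ u := by
    have h1 : 0 < H.dist u w0 := (hc.preconnected u w0).pos_dist_of_ne (Ne.symm hw0)
    have h3 := hv w0 (Finset.mem_univ _)
    intro h
    rw [h, SimpleGraph.dist_self] at h3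
    omega
  have humem : u ∈ {w | w ≠ v} := Ne.symm hvu
  have key : ∀ n (w : W) (hw : w ∈ {x | x ≠ v}), H.dist u w = n →
      (H.induce {x | x ≠ v}).Reachable ⟨u, humem⟩ ⟨w, hw⟩ := by
    intro n
    induction n using Nat.strong_induction_on with
    | _ n ih =>
      intro w hw hdist
      rcases Nat.eq_zero_or_pos n with h0 | hpos
      · subst h0
        have huw : u = w := ((hc.preconnected u w).dist_eq_zero_iff).mp hdist
        subst huw
        exact SimpleGraph.Reachable.refl _
      · obtain ⟨p, hp⟩ := (hc.preconnected u w).exists_walk_length_eq_dist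
        have hwu : w ≠ u := by
          intro h; subst h; rw [SimpleGraph.dist_self] at hdist; omega
        obtain ⟨x, hadj, q, hq⟩ := SimpleGraph.Walk.exists_eq_cons_of_ne hwu p.reverse
        have hlen : q.length + 1 = n := by
          have := congrArg SimpleGraph.Walk.length hq
          simpa [hp, hdist] using this.symm
        have hdx : H.dist u x ≤ n - 1 := by
          have h5 := SimpleGraph.dist_le q.reverse
          rw [SimpleGraph.Walk.length_reverse] at h5
          omega
        have hx : x ∈ {y | y ≠ v} := by
          intro hxv
          have h4 : n ≤ H.dist u v := hdist ▸ hv w (Finset.mem_univ _)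
          rw [hxv] at hdx
          omega
        have hreach := ih (H.dist u x) (by omega) x hx rfl
        have hadj2 : (H.induce {y | y ≠ v}).Adj ⟨x, hx⟩ ⟨w, hw⟩ := hadj.symm
        exact hreach.trans hadj2.reachable
  refine ⟨v, ?_⟩
  rw [SimpleGraph.connected_iff]
  exact ⟨fun a b => (key _ a.1 a.2 rfl).symm.trans (key _ b.1 b.2 rfl), ⟨⟨u, humem⟩⟩⟩


lemma exists_erase_connected {V : Type*} [DecidableEq V] (G : SimpleGraph V) (s : Finset V)
    (hconn : (G.induce (s : Set V)).Connected) (h2 : 2 ≤ s.card) :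
    ∃ v ∈ s, (G.induce ((s.erase v : Finset V) : Set V)).Connected := by
  classical
  have hcard : Fintype.card (↑(s : Set V)) = s.card := by
    simp
  obtain ⟨v, hv⟩ := exists_delete_vertex_connected (G.induce (s : Set V)) hconn (by omega)
  refine ⟨v.1, v.2, ?_⟩
  have hmem : ∀ y : V, y ∈ (↑(s.erase v.1) : Set V) → y ∈ s ∧ y ≠ v.1 := by
    intro y hy
    have := Finset.mem_erase.mp (Finset.mem_coe.mp hy)
    exact ⟨this.2, this.1⟩
  let e : {w : (s : Set V) // w ≠ v} ≃ ((s.erase v.1 : Finset V) : Set V) :=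
    { toFun := fun x => ⟨x.1.1, Finset.mem_coe.mpr (Finset.mem_erase.mpr
        ⟨fun h => x.2 (Subtype.ext h), x.1.2⟩)⟩
      invFun := fun y => ⟨⟨y.1, (hmem y.1 y.2).1⟩,
        fun h => (hmem y.1 y.2).2 (congrArg Subtype.val h)⟩
      left_inv := fun x => by apply Subtype.ext; apply Subtype.ext; rfl
      right_inv := fun y => rfl }
  have iso : ((G.induce (s : Set V)).induce {w | w ≠ v}) ≃g
      G.induce ((s.erase v.1 : Finset V) : Set V) := ⟨e, Iff.rfl⟩
  exact iso.connected_iff.mp hv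


lemma split_family {V : Type*} [Fintype V] [DecidableEq V] (G : SimpleGraph V) :
    ∀ (d k : ℕ) (F : Finset (Finset V)),
      k = F.card + d →
      (∀ s ∈ F, s.Nonempty) →
      (∀ s ∈ F, (G.induce (s : Set V)).Connected) →
      ((F : Set (Finset V)).Pairwise Disjoint) →
      k ≤ (F.biUnion id).card →
      ∃ M : Finset (Finset V), M.card = k ∧ (∀ s ∈ M, s.Nonempty) ∧
        (∀ s ∈ M, (G.induce (s : Set V)).Connected) ∧
        ((M : Set (Finset V)).Pairwise Disjoint) ∧
        (∀ s ∈ M, ∃ t ∈ F, s ⊆ t) ∧ M.biUnion id = F.biUnion id := by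
  intro d
  induction d with
  | zero =>
    intro k F hk h1 h2 h3 h4
    exact ⟨F, by omega, h1, h2, h3, fun s hs => ⟨s, hs, le_refl s⟩, rfl⟩
  | succ d ih =>
    intro k F hk h1 h2 h3 h4
    have hbig : ∃ s ∈ F, 2 ≤ s.card := by
      by_contra h
      push_neg at h
      have hle : (F.biUnion id).card ≤ F.card := by
        calc (F.biUnion id).card ≤ ∑ s ∈ F, (id s).card := Finset.card_biUnion_le
          _ ≤ ∑ _s ∈ F, 1 := Finset.sum_le_sum (fun s hs => by
              have := h s hs; simpa using by omega)
          _ = F.card := by simp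
      omega
    obtain ⟨s, hsF, hs2⟩ := hbig
    obtain ⟨v, hvs, hvc⟩ := exists_erase_connected G s (h2 s hsF) hs2
    have hens : (s.erase v).Nonempty := by
      rw [← Finset.card_pos, Finset.card_erase_of_mem hvs]; omega
    have hns : ∀ t ∈ F.erase s, Disjoint s t := fun t ht =>
      h3 hsF (Finset.mem_of_mem_erase ht) (Ne.symm (Finset.ne_of_mem_erase ht))
    have h1a : ({v} : Finset V) ∉ insert (s.erase v) (F.erase s) := by
      simp only [Finset.mem_insert]
      rintro (h | h)
      · exact Finset.notMem_erase v s (h ▸ Finset.mem_singleton_self v)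
      · exact (Finset.disjoint_left.mp (hns _ h) hvs) (Finset.mem_singleton_self v)
    have herase_ne : s.erase v ∉ F.erase s := by
      intro h
      obtain ⟨x, hx⟩ := hens
      exact (Finset.disjoint_left.mp (hns _ h) (Finset.mem_of_mem_erase hx)) hx
    set F' := insert ({v} : Finset V) (insert (s.erase v) (F.erase s)) with hF'
    have hcard' : F'.card = F.card + 1 := by
      rw [hF', Finset.card_insert_of_notMem h1a, Finset.card_insert_of_notMem herase_ne,
        Finset.card_erase_of_mem hsF]
      have : 1 ≤ F.card := Finset.card_pos.mpr ⟨s, hsF⟩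
      omega
    have hbi : F'.biUnion id = F.biUnion id := by
      ext x
      simp only [hF', Finset.mem_biUnion, Finset.mem_insert, id]
      constructor
      · rintro ⟨t, (rfl | rfl | ht), hx⟩
        · exact ⟨s, hsF, by rwa [Finset.mem_singleton.mp hx]⟩
        · exact ⟨s, hsF, Finset.mem_of_mem_erase hx⟩
        · exact ⟨t, Finset.mem_of_mem_erase ht, hx⟩
      · rintro ⟨t, htF, hx⟩
        by_cases hts : t = s
        · subst hts
          by_cases hxv : x = v
          · exact ⟨{v}, Or.inl rfl, by simp [hxv]⟩
          · exact ⟨t.erase v, Or.inr (Or.inl rfl), Finset.mem_erase.mpr ⟨hxv, hx⟩⟩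
        · exact ⟨t, Or.inr (Or.inr (Finset.mem_erase.mpr ⟨hts, htF⟩)), hx⟩
    have d1 : Disjoint ({v} : Finset V) (s.erase v) := by
      simp [Finset.disjoint_singleton_left]
    have d2 : ∀ t ∈ F.erase s, Disjoint ({v} : Finset V) t := fun t ht => by
      simp only [Finset.disjoint_singleton_left]
      exact Finset.disjoint_left.mp (hns t ht) hvs
    have d3 : ∀ t ∈ F.erase s, Disjoint (s.erase v) t := fun t ht =>
      (hns t ht).mono_left (Finset.erase_subset v s)
    have hpw : (F' : Set (Finset V)).Pairwise Disjoint := by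
      intro a ha b hb hab
      simp only [hF', Finset.coe_insert, Set.mem_insert_iff, Finset.mem_coe] at ha hb
      rcases ha with rfl | rfl | ha
      · rcases hb with rfl | rfl | hb
        · exact absurd rfl hab
        · exact d1
        · exact d2 _ hb
      · rcases hb with rfl | rfl | hb
        · exact d1.symm
        · exact absurd rfl hab
        · exact d3 _ hb
      · rcases hb with rfl | rfl | hb
        · exact (d2 _ ha).symm
        · exact (d3 _ ha).symm
        · exact h3 (Finset.mem_of_mem_erase ha) (Finset.mem_of_mem_erase hb) hab
    have h1' : ∀ t ∈ F', t.Nonempty := by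
      intro t ht
      simp only [hF', Finset.mem_insert] at ht
      rcases ht with rfl | rfl | ht
      · exact ⟨v, Finset.mem_singleton_self v⟩
      · exact hens
      · exact h1 t (Finset.mem_of_mem_erase ht)
    have h2' : ∀ t ∈ F', (G.induce (t : Set V)).Connected := by
      intro t ht
      simp only [hF', Finset.mem_insert] at ht
      rcases ht with rfl | rfl | ht
      · rw [Finset.coe_singleton]; exact induce_singleton_connected G v
      · exact hvc
      · exact h2 t (Finset.mem_of_mem_erase ht)
    obtain ⟨M, hM1, hM2, hM3, hM4, hM5, hM6⟩ :=
      ih k F' (by omega) h1' h2' hpw (by rw [hbi]; exact h4)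
    refine ⟨M, hM1, hM2, hM3, hM4, ?_, by rw [hM6, hbi]⟩
    intro t ht
    obtain ⟨t', ht', hsub⟩ := hM5 t ht
    simp only [hF', Finset.mem_insert] at ht'
    rcases ht' with rfl | rfl | ht'
    · exact ⟨s, hsF, hsub.trans (Finset.singleton_subset_iff.mpr hvs)⟩
    · exact ⟨s, hsF, hsub.trans (Finset.erase_subset v s)⟩
    · exact ⟨t', Finset.mem_of_mem_erase ht', hsub⟩


end Aux

open SimpleGraph in
theorem stmt15 {V : Type*} [Fintype V] [DecidableEq V] (G : SimpleGraph V)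
    (hn : 3 ≤ Fintype.card V)
    (c : ℕ) (hc : c = Nat.card G.ConnectedComponent)
    (h2c : 2 ≤ c) (hcn : c ≤ Fintype.card V - 1)
    (i : ℕ) (hci : c ≤ i) (hin : i ≤ Fintype.card V - 1) :
    ∃ parts : Fin i → Finset V,
      (∀ j, (parts j).Nonempty) ∧
      (∀ j k, j ≠ k → Disjoint (parts j) (parts k)) ∧
      Finset.univ.biUnion parts = Finset.univ ∧
      (∀ j : Fin i, j ≠ ⟨0, by omega⟩ → (G.induce ((parts j : Finset V) : Set V)).Connected) ∧
      (∃ v ∈ parts ⟨0, by omega⟩,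
        (∀ w ∈ parts ⟨0, by omega⟩, w ≠ v → ¬ G.Adj v w) ∧
        ((parts ⟨0, by omega⟩).erase v).Nonempty ∧
        (G.induce (((parts ⟨0, by omega⟩).erase v : Finset V) : Set V)).Connected) := by
  classical
  set n := Fintype.card V with hn'
  have hfin : Finite G.ConnectedComponent := Quot.finite _
  have hft : Fintype G.ConnectedComponent := Fintype.ofFinite _
  have hcc : c = Fintype.card G.ConnectedComponent := by
    rw [hc, Nat.card_eq_fintype_card]
  have hnontriv : Nontrivial G.ConnectedComponent := by
    apply Fintype.one_lt_card_iff_nontrivial.mp; omega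
  obtain ⟨C, D, hCD⟩ := exists_pair_ne G.ConnectedComponent
  -- the component finsets
  set f : G.ConnectedComponent → Finset V :=
    fun C => Finset.univ.filter (fun x => G.connectedComponentMk x = C) with hf
  have hmemf : ∀ (x : V) (C' : G.ConnectedComponent),
      x ∈ f C' ↔ G.connectedComponentMk x = C' := by
    intro x C'; simp [hf]
  have hfne : ∀ C', (f C').Nonempty := by
    intro C'
    obtain ⟨x, hx⟩ := C'.exists_rep
    exact ⟨x, (hmemf x C').mpr hx⟩
  have hfinj : Function.Injective f := by
    intro C₁ C₂ h
    obtain ⟨x, hx⟩ := hfne C₁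
    have hx2 : x ∈ f C₂ := h ▸ hx
    rw [hmemf] at hx hx2
    rw [← hx, hx2]
  have hfcoe : ∀ C', ((f C' : Finset V) : Set V) = C'.supp := by
    intro C'
    ext x
    simp [hf, ConnectedComponent.mem_supp_iff]
  have hfconn : ∀ C', (G.induce ((f C' : Finset V) : Set V)).Connected := by
    intro C'; rw [hfcoe]; exact supp_induce_connected G C'
  have hfdisj : ∀ C₁ C₂, C₁ ≠ C₂ → Disjoint (f C₁) (f C₂) := by
    intro C₁ C₂ hne
    rw [Finset.disjoint_left]
    intro x hx1 hx2
    rw [hmemf] at hx1 hx2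
    exact hne (hx1 ▸ hx2)
  -- choose v' in f D with connected (or empty) erase
  have hv'ex : ∃ v' ∈ f D, ((f D).erase v' = ∅) ∨
      (G.induce (((f D).erase v' : Finset V) : Set V)).Connected := by
    by_cases h2 : 2 ≤ (f D).card
    · obtain ⟨v', hv1, hv2⟩ := exists_erase_connected G (f D) (hfconn D) h2
      exact ⟨v', hv1, Or.inr hv2⟩
    · obtain ⟨v', hv1⟩ := hfne D
      have h1 : (f D).card = 1 := by
        have := Finset.card_pos.mpr (hfne D); omega
      refine ⟨v', hv1, Or.inl ?_⟩
      rw [Finset.card_eq_one] at h1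
      obtain ⟨w, hw⟩ := h1
      rw [hw, Finset.mem_singleton] at hv1
      rw [hw, hv1]
      simp
  obtain ⟨v', hv'D, hv'or⟩ := hv'ex
  have hmkv' : G.connectedComponentMk v' = D := (hmemf v' D).mp hv'D
  set E : Finset V := (f D).erase v' with hE
  set P : Finset (Finset V) := Finset.univ.image f with hP
  set F₀ : Finset (Finset V) := (P.erase (f D)) ∪ (if E.Nonempty then {E} else ∅) with hF₀
  have hmemF₀ : ∀ t, t ∈ F₀ ↔ (∃ C', C' ≠ D ∧ t = f C') ∨ (E.Nonempty ∧ t = E) := by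
    intro t
    rw [hF₀, Finset.mem_union]
    constructor
    · rintro (ht | ht)
      · rw [Finset.mem_erase] at ht
        obtain ⟨hne, ht2⟩ := ht
        rw [hP, Finset.mem_image] at ht2
        obtain ⟨C', -, rfl⟩ := ht2
        exact Or.inl ⟨C', fun h => hne (by rw [h]), rfl⟩
      · by_cases hEn : E.Nonempty
        · rw [if_pos hEn, Finset.mem_singleton] at ht
          exact Or.inr ⟨hEn, ht⟩
        · rw [if_neg hEn] at ht; simp at ht
    · rintro (⟨C', hne, rfl⟩ | ⟨hEn, rfl⟩)
      · refine Or.inl (Finset.mem_erase.mpr ⟨fun h => hne (hfinj h), ?_⟩)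
        rw [hP, Finset.mem_image]; exact ⟨C', Finset.mem_univ _, rfl⟩
      · rw [if_pos hEn]; exact Or.inr (Finset.mem_singleton_self _)
  have hEsub : E ⊆ f D := Finset.erase_subset _ _
  have hF₀ne : ∀ t ∈ F₀, t.Nonempty := by
    intro t ht
    rcases (hmemF₀ t).mp ht with ⟨C', -, rfl⟩ | ⟨hEn, rfl⟩
    · exact hfne C'
    · exact hEn
  have hF₀conn : ∀ t ∈ F₀, (G.induce (t : Set V)).Connected := by
    intro t ht
    rcases (hmemF₀ t).mp ht with ⟨C', -, rfl⟩ | ⟨hEn, rfl⟩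
    · exact hfconn C'
    · rcases hv'or with h | h
      · rw [h] at hEn; simp at hEn
      · exact h
  have hF₀disj : ((F₀ : Set (Finset V)).Pairwise Disjoint) := by
    intro a ha b hb hab
    rw [Finset.mem_coe] at ha hb
    rcases (hmemF₀ a).mp ha with ⟨C₁, hne1, rfl⟩ | ⟨-, rfl⟩ <;>
      rcases (hmemF₀ b).mp hb with ⟨C₂, hne2, rfl⟩ | ⟨-, rfl⟩
    · exact hfdisj C₁ C₂ (fun h => hab (by rw [h]))
    · exact ((hfdisj C₁ D hne1).mono_right hEsub)
    · exact (hfdisj D C₂ (Ne.symm hne2)).mono_left hEsub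
    · exact absurd rfl hab
  have hPcard : P.card = c := by
    rw [hP, Finset.card_image_of_injective _ hfinj, Finset.card_univ, hcc]
  have hF₀card : F₀.card ≤ c := by
    calc F₀.card ≤ (P.erase (f D)).card + (if E.Nonempty then ({E} : Finset (Finset V)) else ∅).card :=
          Finset.card_union_le _ _
      _ ≤ (P.card - 1) + 1 := by
          gcongr
          · rw [Finset.card_erase_of_mem]
            rw [hP, Finset.mem_image]; exact ⟨D, Finset.mem_univ _, rfl⟩
          · split <;> simp
      _ ≤ c := by omega
  have hbiF₀ : F₀.biUnion id = Finset.univ.erase v' := by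
    ext x
    rw [Finset.mem_biUnion, Finset.mem_erase]
    constructor
    · rintro ⟨t, ht, hx⟩
      rcases (hmemF₀ t).mp ht with ⟨C', hne, rfl⟩ | ⟨-, rfl⟩
      · refine ⟨?_, Finset.mem_univ _⟩
        intro h
        subst h
        exact hne ((hmemf x C').mp hx ▸ hmkv' ▸ ((hmemf x C').mp hx).symm ▸ rfl)
      · exact ⟨(Finset.mem_erase.mp hx).1, Finset.mem_univ _⟩
    · rintro ⟨hxv, -⟩
      by_cases hxD : G.connectedComponentMk x = D
      · refine ⟨E, (hmemF₀ E).mpr (Or.inr ⟨⟨x, ?_⟩, rfl⟩), ?_⟩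
        · exact Finset.mem_erase.mpr ⟨hxv, (hmemf x D).mpr hxD⟩
        · exact Finset.mem_erase.mpr ⟨hxv, (hmemf x D).mpr hxD⟩
      · exact ⟨f (G.connectedComponentMk x),
          (hmemF₀ _).mpr (Or.inl ⟨_, hxD, rfl⟩),
          (hmemf x _).mpr rfl⟩
  have hbicard : (F₀.biUnion id).card = n - 1 := by
    rw [hbiF₀, Finset.card_erase_of_mem (Finset.mem_univ _), Finset.card_univ]
  obtain ⟨M, hM1, hM2, hM3, hM4, hM5, hM6⟩ :=
    split_family G (i - F₀.card) i F₀ (by omega) hF₀ne hF₀conn hF₀disj (by omega)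
  rw [hbiF₀] at hM6
  -- find the part containing a vertex of component C
  obtain ⟨a, hamk⟩ := C.exists_rep
  have haE : a ∈ Finset.univ.erase v' := by
    refine Finset.mem_erase.mpr ⟨?_, Finset.mem_univ _⟩
    intro h; subst h; exact hCD (hamk ▸ hmkv' ▸ rfl)
  have haM : a ∈ M.biUnion id := hM6 ▸ haE
  obtain ⟨Q, hQM, haQ⟩ := Finset.mem_biUnion.mp haM
  obtain ⟨t, htF₀, hQt⟩ := hM5 Q hQM
  have hQC : ∀ w ∈ Q, G.connectedComponentMk w = C := by
    have hat : a ∈ t := hQt haQ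
    rcases (hmemF₀ t).mp htF₀ with ⟨C', hne, rfl⟩ | ⟨-, rfl⟩
    · have : C' = C := by rw [← (hmemf a C').mp hat]; exact hamk
      subst this
      intro w hw
      exact (hmemf w C').mp (hQt hw)
    · exfalso
      have : G.connectedComponentMk a = D := (hmemf a D).mp (hEsub hat)
      exact hCD (hamk ▸ this ▸ rfl)
  have hv'Q : v' ∉ Q := by
    intro h
    exact hCD ((hQC v' h ▸ hmkv' ▸ rfl))
  have hv'M : ∀ t' ∈ M, v' ∉ t' := by
    intro t' ht' hv
    have : v' ∈ M.biUnion id := Finset.mem_biUnion.mpr ⟨t', ht', hv⟩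
    rw [hM6] at this
    exact (Finset.mem_erase.mp this).1 rfl
  have hnoadj : ∀ w ∈ Q, ¬ G.Adj v' w := by
    intro w hw hadj
    have := SimpleGraph.ConnectedComponent.connectedComponentMk_eq_of_adj hadj
    rw [hmkv', hQC w hw] at this
    exact hCD this.symm
  -- build parts
  have hipos : 0 < i := by omega
  set l : List (Finset V) := (M.erase Q).toList with hl
  have hlen : l.length = i - 1 := by
    rw [hl, Finset.length_toList, Finset.card_erase_of_mem hQM, hM1]
  set parts : Fin i → Finset V := fun j =>
    if h : j.1 = 0 then insert v' Q else l.get ⟨j.1 - 1, by rw [hlen]; omega⟩ with hparts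
  have hparts0 : parts ⟨0, hipos⟩ = insert v' Q := by simp [hparts]
  have hpartsj : ∀ (j : Fin i), j.1 ≠ 0 → parts j ∈ M.erase Q := by
    intro j hj
    rw [hparts]
    simp only [dif_neg hj]
    rw [← Finset.mem_toList, ← hl]
    exact List.get_mem l _
  have hpartsM : ∀ (j : Fin i), j.1 ≠ 0 → parts j ∈ M := fun j hj =>
    Finset.mem_of_mem_erase (hpartsj j hj)
  have hzero : (⟨0, by omega⟩ : Fin i) = ⟨0, hipos⟩ := rfl
  refine ⟨parts, ?_, ?_, ?_, ?_, ?_⟩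
  · intro j
    by_cases hj : j.1 = 0
    · have : j = ⟨0, hipos⟩ := Fin.ext hj
      rw [this, hparts0]; exact Finset.insert_nonempty _ _
    · exact hM2 _ (hpartsM j hj)
  · intro j k hjk
    by_cases hj : j.1 = 0 <;> by_cases hk : k.1 = 0
    · exact absurd (Fin.ext (by omega)) hjk
    · have hj' : j = ⟨0, hipos⟩ := Fin.ext hj
      rw [hj', hparts0]
      rw [Finset.disjoint_insert_left]
      have hkM := hpartsj k hk
      refine ⟨hv'M _ (Finset.mem_of_mem_erase hkM), ?_⟩
      exact hM4 (Finset.mem_coe.mpr hQM) (Finset.mem_coe.mpr (Finset.mem_of_mem_erase hkM))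
        (Ne.symm (Finset.ne_of_mem_erase hkM))
    · have hk' : k = ⟨0, hipos⟩ := Fin.ext hk
      rw [hk', hparts0]
      rw [Finset.disjoint_insert_right]
      have hjM := hpartsj j hj
      refine ⟨hv'M _ (Finset.mem_of_mem_erase hjM), ?_⟩
      exact hM4 (Finset.mem_coe.mpr (Finset.mem_of_mem_erase hjM)) (Finset.mem_coe.mpr hQM)
        (Finset.ne_of_mem_erase hjM)
    · have hjg : parts j = l.get ⟨j.1 - 1, by rw [hlen]; omega⟩ := by
        rw [hparts]; simp only [dif_neg hj]
      have hkg : parts k = l.get ⟨k.1 - 1, by rw [hlen]; omega⟩ := by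
        rw [hparts]; simp only [dif_neg hk]
      have hne : parts j ≠ parts k := by
        rw [hjg, hkg]
        intro h
        have hnd : l.Nodup := Finset.nodup_toList _
        have := (List.Nodup.get_inj_iff hnd).mp h
        have hval : j.1 - 1 = k.1 - 1 := congrArg Fin.val this
        exact hjk (Fin.ext (by omega))
      exact hM4 (Finset.mem_coe.mpr (hpartsM j hj)) (Finset.mem_coe.mpr (hpartsM k hk)) hne
  · apply Finset.eq_univ_of_forall
    intro x
    rw [Finset.mem_biUnion]
    by_cases hxv : x = v'
    · exact ⟨⟨0, hipos⟩, Finset.mem_univ _, by rw [hparts0]; exact hxv ▸ Finset.mem_insert_self _ _⟩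
    · have hx : x ∈ M.biUnion id := by
        rw [hM6]; exact Finset.mem_erase.mpr ⟨hxv, Finset.mem_univ _⟩
      obtain ⟨t, htM, hxt⟩ := Finset.mem_biUnion.mp hx
      by_cases htQ : t = Q
      · subst htQ
        exact ⟨⟨0, hipos⟩, Finset.mem_univ _, by rw [hparts0]; exact Finset.mem_insert_of_mem hxt⟩
      · have htl : t ∈ l := by
          rw [hl, Finset.mem_toList]
          exact Finset.mem_erase.mpr ⟨htQ, htM⟩
        obtain ⟨idx, hidx⟩ := List.mem_iff_get.mp htl
        have hidxlt : idx.1 + 1 < i := by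
          have h9 := idx.2; omega
        refine ⟨⟨idx.1 + 1, hidxlt⟩, Finset.mem_univ _, ?_⟩
        have h8 : parts ⟨idx.1 + 1, hidxlt⟩ = l.get ⟨idx.1 + 1 - 1, by have := idx.2; omega⟩ := by
          rw [hparts]; simp only [dif_neg (Nat.succ_ne_zero idx.1)]
        rw [h8]
        have h7 : (⟨idx.1 + 1 - 1, by have := idx.2; omega⟩ : Fin l.length) = idx := Fin.ext (show idx.1 + 1 - 1 = idx.1 by omega)
        rw [h7, hidx]
        exact hxt
  · intro j hj
    have hj0 : j.1 ≠ 0 := by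
      intro h
      exact hj (Fin.ext h)
    exact hM3 _ (hpartsM j hj0)
  · rw [hzero, hparts0]
    refine ⟨v', Finset.mem_insert_self _ _, ?_, ?_, ?_⟩
    · intro w hw hwv
      rcases Finset.mem_insert.mp hw with rfl | hwQ
      · exact absurd rfl hwv
      · exact hnoadj w hwQ
    · rw [Finset.erase_insert hv'Q]
      exact ⟨a, haQ⟩
    · rw [Finset.erase_insert hv'Q]
      exact hM3 Q hQM
end

section
/- Let G = (V, E) be a simple graph of order n and u a vertex of G with neighbors u_1, …, u_d (d ≥ 1). For i = 1, …, d−1, let G_i be the graph obtained from G − u by adding all edges joining u_i to u_{i+1}, …, u_d (that are not already present). Then P(G, x) = (x − 1) P(G − u, x) − ∑_{i=1}^{d−1} P(G_i, x). -/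
open Polynomial

section AuxChrom

open Finset SimpleGraph

theorem count1'' {α β : Type*} [Fintype α] [LinearOrder α] [DecidableEq β] (g : α → β) :
    (univ.image g).card = Nat.card {i : α // ∀ j, i < j → g j ≠ g i} := by
  classical
  rw [Nat.card_eq_fintype_card, Fintype.card_subtype]
  symm
  apply Finset.card_nbij (i := g)
  · intro a _; exact mem_image_of_mem g (mem_univ a)
  · intro a ha b hb hab
    simp only [coe_filter, Set.mem_setOf_eq] at ha hb
    rcases lt_trichotomy a b with h | h | h
    · exact absurd hab.symm (ha.2 b h)
    · exact h
    · exact absurd hab (hb.2 a h)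
  · intro b hb
    simp only [coe_image, coe_univ, Set.image_univ, Set.mem_range] at hb
    obtain ⟨j, rfl⟩ := hb
    have hne : (univ.filter (fun i => g i = g j)).Nonempty := ⟨j, by simp⟩
    set m := (univ.filter (fun i => g i = g j)).max' hne with hm
    have hmem : m ∈ univ.filter (fun i => g i = g j) := Finset.max'_mem _ hne
    have hgm : g m = g j := (mem_filter.mp hmem).2
    refine ⟨m, ?_, hgm⟩
    simp only [coe_filter, Set.mem_setOf_eq]
    refine ⟨mem_univ m, fun j' hj' hcon => ?_⟩
    have : j' ∈ univ.filter (fun i => g i = g j) := by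
      simp only [mem_filter, mem_univ, true_and]; rw [hcon, hgm]
    exact absurd (Finset.le_max' _ _ this) (not_le.mpr hj')

theorem count2'' {β : Type*} {d : ℕ} (hd : 1 ≤ d) (g : Fin d → β) :
    Nat.card {i : Fin d // ∀ j, i < j → g j ≠ g i}
      = 1 + Nat.card {i : Fin d // (∀ j, i < j → g j ≠ g i) ∧ (i : ℕ) + 1 < d} := by
  classical
  rw [Nat.card_eq_fintype_card, Fintype.card_subtype,
    Nat.card_eq_fintype_card, Fintype.card_subtype]
  set p : Fin d → Prop := fun i => ∀ j, i < j → g j ≠ g i with hp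
  have hlast : (⟨d - 1, by omega⟩ : Fin d) ∈ univ.filter p := by
    simp only [mem_filter, mem_univ, true_and, hp]
    intro j hj
    exact absurd j.2 (by simp [Fin.lt_def] at hj; omega)
  have heq : univ.filter p
      = insert (⟨d - 1, by omega⟩ : Fin d) (univ.filter (fun i => p i ∧ (i : ℕ) + 1 < d)) := by
    ext i
    simp only [mem_filter, mem_univ, true_and, mem_insert]
    constructor
    · intro hi
      by_cases h : (i : ℕ) + 1 < d
      · exact Or.inr ⟨hi, h⟩
      · exact Or.inl (by apply Fin.ext; have := i.2; simp; omega)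
    · rintro (rfl | ⟨hi, _⟩)
      · exact (mem_filter.mp hlast).2
      · exact hi
  rw [heq, Finset.card_insert_of_notMem (by simp; omega), Nat.add_comm]


theorem cardLHS {V : Type*} [Fintype V] [DecidableEq V] (G : SimpleGraph V)
    (u : V) (d k : ℕ) (f : Fin d → V)
    (hf : ∀ v, G.Adj u v ↔ ∃ j, f j = v)
    (fs : Fin d → ({w : V | w ≠ u} : Set V)) (hfs : ∀ j, (fs j).1 = f j) :
    Nat.card (G.Coloring (Fin k)) =
      ∑ c : (G.induce {w | w ≠ u}).Coloring (Fin k),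
        (k - (univ.image (fun j => c (fs j))).card) := by
  classical
  set G' := G.induce {w | w ≠ u} with hG'
  let π : G.Coloring (Fin k) → G'.Coloring (Fin k) :=
    fun C => SimpleGraph.Coloring.mk (fun w => C w.1) (fun h => C.valid h)
  have e1 : G.Coloring (Fin k) ≃ Σ c : G'.Coloring (Fin k), {C // π C = c} :=
    (Equiv.sigmaFiberEquiv π).symm
  rw [Nat.card_congr e1, Nat.card_eq_fintype_card, Fintype.card_sigma]
  refine Finset.sum_congr rfl fun c _ => ?_
  have e2 : {C // π C = c} ≃ {a : Fin k // a ∉ univ.image (fun j => c (fs j))} := by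
    refine ⟨fun p => ⟨p.1 u, ?_⟩, fun a => ⟨SimpleGraph.Coloring.mk
      (fun v => if h : v = u then a.1 else c ⟨v, h⟩) ?_, ?_⟩, ?_, ?_⟩
    · obtain ⟨C, hC⟩ := p
      simp only [mem_image, mem_univ, true_and, not_exists]
      intro j hj
      have hadj : G.Adj u (f j) := (hf (f j)).mpr ⟨j, rfl⟩
      have : c (fs j) = C (f j) := by
        rw [← hC]
        show C (fs j).1 = C (f j)
        rw [hfs j]
      exact C.valid hadj (hj.symm.trans this)
    · intro v w hvw hcc
      by_cases hv : v = u <;> by_cases hw : w = u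
      · exact G.loopless.irrefl u (by rw [hv, hw] at hvw; exact hvw)
      · rw [dif_pos hv, dif_neg hw] at hcc
        obtain ⟨j, hj⟩ := (hf w).mp (by rw [hv] at hvw; exact hvw)
        have hwfs : (⟨w, hw⟩ : ({w : V | w ≠ u} : Set V)) = fs j :=
          Subtype.ext (by rw [hfs j, hj])
        exact a.2 (mem_image.mpr ⟨j, mem_univ j, by rw [← hwfs, ← hcc]⟩)
      · rw [dif_pos hw, dif_neg hv] at hcc
        obtain ⟨j, hj⟩ := (hf v).mp (by rw [hw] at hvw; exact hvw.symm)
        have hvfs : (⟨v, hv⟩ : ({w : V | w ≠ u} : Set V)) = fs j :=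
          Subtype.ext (by rw [hfs j, hj])
        exact a.2 (mem_image.mpr ⟨j, mem_univ j, by rw [← hvfs, hcc]⟩)
      · rw [dif_neg hv, dif_neg hw] at hcc
        exact c.valid (show G'.Adj ⟨v, hv⟩ ⟨w, hw⟩ from hvw) hcc
    · apply DFunLike.ext
      rintro ⟨v, hv⟩
      show (if h : v = u then a.1 else c ⟨v, h⟩) = c ⟨v, hv⟩
      rw [dif_neg hv]
    · rintro ⟨C, hC⟩
      apply Subtype.ext
      apply DFunLike.ext
      intro v
      show (if h : v = u then C u else c ⟨v, h⟩) = C v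
      by_cases hv : v = u
      · rw [dif_pos hv, hv]
      · rw [dif_neg hv, ← hC]; rfl
    · rintro ⟨a, ha⟩
      apply Subtype.ext
      show (if h : u = u then a else _) = a
      rw [dif_pos rfl]
  rw [Fintype.card_congr e2, Fintype.card_subtype_compl, Fintype.card_fin, Fintype.card_coe]


theorem cardGi'' {W : Type*} (G' : SimpleGraph W)
    (R : W → W → Prop) (k : ℕ) (Q : G'.Coloring (Fin k) → Prop)
    (hQ : ∀ c : G'.Coloring (Fin k), Q c ↔ ∀ a b, a ≠ b → R a b → c a ≠ c b) :
    Nat.card ((G' ⊔ SimpleGraph.fromRel R).Coloring (Fin k))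
      = Nat.card {c : G'.Coloring (Fin k) // Q c} := by
  apply Nat.card_congr
  refine ⟨fun C => ⟨SimpleGraph.Coloring.mk (fun w => C w)
      (fun h => C.valid ((sup_adj _ _ _ _).mpr (Or.inl h))), ?_⟩,
    fun c => SimpleGraph.Coloring.mk (fun w => c.1 w) ?_, fun C => ?_, fun c => ?_⟩
  · refine (hQ _).mpr fun a b hab hr => ?_
    exact C.valid ((sup_adj _ _ _ _).mpr (Or.inr ((fromRel_adj R a b).mpr ⟨hab, Or.inl hr⟩)))
  · intro v w hvw
    rcases (sup_adj _ _ _ _).mp hvw with h | h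
    · exact c.1.valid h
    · rcases (fromRel_adj R v w).mp h with ⟨hne, hr | hr⟩
      · exact (hQ c.1).mp c.2 v w hne hr
      · exact fun hc => (hQ c.1).mp c.2 w v hne.symm hr hc.symm
  · apply DFunLike.ext; intro v; rfl
  · apply Subtype.ext; apply DFunLike.ext; intro v; rfl

end AuxChrom

theorem stmt16 {V : Type*} [Fintype V] [DecidableEq V] (G : SimpleGraph V)
    (u : V) (d : ℕ) (hd : 1 ≤ d) (f : Fin d → V)
    (hinj : Function.Injective f)
    (hf : ∀ v : V, G.Adj u v ↔ ∃ j, f j = v)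
    (P Pu : Polynomial ℝ) (Pi : Fin d → Polynomial ℝ)
    (hP : IsChromPoly G P)
    (hPu : IsChromPoly (G.induce {w | w ≠ u}) Pu)
    (hPi : ∀ i : Fin d, IsChromPoly
      ((G.induce {w | w ≠ u}) ⊔ SimpleGraph.fromRel
        (fun a b : {w : V // w ≠ u} => a.1 = f i ∧ ∃ j, i < j ∧ b.1 = f j)) (Pi i)) :
    P = (Polynomial.X - 1) * Pu -
      ∑ i ∈ Finset.univ.filter (fun i : Fin d => (i : ℕ) + 1 < d), Pi i := by
  classical
  have hfs' : ∀ j : Fin d, f j ∈ {w : V | w ≠ u} := fun j h =>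
    (G.ne_of_adj ((hf (f j)).mpr ⟨j, rfl⟩)).symm h
  set fs : Fin d → ({w : V | w ≠ u} : Set V) := fun j => ⟨f j, hfs' j⟩ with hfsdef
  set G' := G.induce {w | w ≠ u} with hG'def
  set I : Finset (Fin d) := Finset.univ.filter (fun i : Fin d => (i : ℕ) + 1 < d) with hIdef
  apply Polynomial.eq_of_infinite_eval_eq
  apply Set.infinite_of_injective_forall_mem (f := fun k : ℕ => (k : ℝ)) Nat.cast_injective
  intro k
  simp only [Set.mem_setOf_eq, eval_sub, eval_mul, eval_X, eval_one, eval_finset_sum]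
  rw [hP k, hPu k]
  set Q : Fin d → G'.Coloring (Fin k) → Prop :=
    fun i c => ∀ j, i < j → c (fs j) ≠ c (fs i) with hQdef
  have hQ : ∀ (i : Fin d) (c : G'.Coloring (Fin k)), Q i c ↔
      ∀ a b : ({w : V | w ≠ u} : Set V), a ≠ b →
        (a.1 = f i ∧ ∃ j, i < j ∧ b.1 = f j) → c a ≠ c b := by
    intro i c
    constructor
    · rintro h a b hab ⟨ha, j, hj, hb⟩
      have ha' : a = fs i := Subtype.ext ha
      have hb' : b = fs j := Subtype.ext hb
      rw [ha', hb']
      exact (h j hj).symm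
    · intro h j hj
      have hne : fs i ≠ fs j := fun he =>
        absurd (hinj (congrArg Subtype.val he)) (Fin.ne_of_lt hj)
      exact (h (fs i) (fs j) hne ⟨rfl, j, hj, rfl⟩).symm
  have hGi : ∀ i ∈ I, (Pi i).eval (k : ℝ)
      = ((Nat.card {c : G'.Coloring (Fin k) // Q i c}) : ℝ) := by
    intro i _
    rw [hPi i k]
    norm_cast
    exact cardGi'' G' _ k (Q i) (hQ i)
  rw [Finset.sum_congr rfl hGi]
  have hL := cardLHS G u d k f hf fs (fun j => rfl)
  rw [hL]
  set t : G'.Coloring (Fin k) → ℕ :=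
    fun c => Nat.card {i : Fin d // Q i c ∧ (i : ℕ) + 1 < d} with htdef
  have h2 : ∀ c : G'.Coloring (Fin k),
      (Finset.univ.image (fun j => c (fs j))).card = 1 + t c := fun c =>
    (count1'' (fun j => c (fs j))).trans (count2'' hd (fun j => c (fs j)))
  have h3 : ∀ c : G'.Coloring (Fin k),
      (Finset.univ.image (fun j => c (fs j))).card ≤ k := fun c =>
    le_trans (Finset.card_le_univ _) (by simp)
  have hswap : ∑ c : G'.Coloring (Fin k), t c
      = ∑ i ∈ I, Nat.card {c : G'.Coloring (Fin k) // Q i c} := by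
    have step1 : ∀ c : G'.Coloring (Fin k),
        t c = (I.filter (fun i => Q i c)).card := by
      intro c
      simp only [htdef]
      rw [Nat.card_eq_fintype_card, Fintype.card_subtype]
      congr 1
      ext i
      simp only [Finset.mem_filter, Finset.mem_univ, true_and, hIdef]
      tauto
    have step2 : ∀ i : Fin d, Nat.card {c : G'.Coloring (Fin k) // Q i c}
        = (Finset.univ.filter (fun c => Q i c)).card := fun i => by
      rw [Nat.card_eq_fintype_card, Fintype.card_subtype]
    simp only [step1, step2, Finset.card_filter]
    exact Finset.sum_comm
  rw [Nat.cast_sum]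
  have hterm : ∀ c ∈ (Finset.univ : Finset (G'.Coloring (Fin k))),
      ((k - (Finset.univ.image (fun j => c (fs j))).card : ℕ) : ℝ)
        = ((k : ℝ) - 1) - (t c : ℝ) := fun c _ => by
    rw [Nat.cast_sub (h3 c), h2 c]
    push_cast
    ring
  rw [Finset.sum_congr rfl hterm, Finset.sum_sub_distrib, Finset.sum_const,
    Finset.card_univ, nsmul_eq_mul, ← Nat.card_eq_fintype_card, mul_comm]
  have hRR : (∑ i ∈ I, ((Nat.card {c : G'.Coloring (Fin k) // Q i c}) : ℝ))
      = ∑ c : G'.Coloring (Fin k), (t c : ℝ) := by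
    rw [← Nat.cast_sum, ← Nat.cast_sum, hswap]
  rw [hRR]
end

section
/- For any simple graph G = (V, E) of order n, (−1)^{n−1} ∑_{u∈V} P(G − u, −1) ≥ (−1)^n P(G, −1), with equality if and only if G is complete. Equivalently, the number of acyclic orientations of G is at most the total number of acyclic orientations of G − u summed over all u ∈ V, with equality iff G is complete. -/
open Polynomial

namespace Chrom17
open Relation

variable {W : Type*}

/-- acyclic orientation predicate -/
def IsAO (G : SimpleGraph W) (r : W → W → Prop) : Prop :=
  (∀ ⦃a b⦄, r a b → G.Adj a b) ∧ (∀ ⦃a b⦄, G.Adj a b → (r a b ↔ ¬ r b a)) ∧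
    ∀ a, ¬ TransGen r a a

def AO (G : SimpleGraph W) := {r : W → W → Prop // IsAO G r}

instance finAO [Finite W] (G : SimpleGraph W) : Finite (AO G) := by
  unfold AO; infer_instance

lemma tg_union {r : W → W → Prop} {u v x y : W}
    (h : TransGen (fun a b => r a b ∨ (a = u ∧ b = v)) x y) :
    TransGen r x y ∨ (ReflTransGen r x u ∧ ReflTransGen r v y) := by
  induction h with
  | single h =>
    rcases h with h | ⟨rfl, rfl⟩
    · exact .inl (.single h)
    · exact .inr ⟨.refl, .refl⟩
  | tail _ h ih =>
    rcases h with h | ⟨rfl, rfl⟩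
    · rcases ih with ih | ⟨h1, h2⟩
      · exact .inl (ih.tail h)
      · exact .inr ⟨h1, h2.tail h⟩
    · rcases ih with ih | ⟨h1, h2⟩
      · exact .inr ⟨ih.to_reflTransGen, .refl⟩
      · exact .inr ⟨h1, .refl⟩

lemma tg_dup {r : W → W → Prop} {u v : W}
    (hA : ∀ a, ¬ TransGen r a a) (h1 : ¬ ReflTransGen r u v) (h2 : ¬ ReflTransGen r v u)
    {x y : W}
    (h : TransGen (fun a b => r a b ∨ (b = u ∧ r a v) ∨ (a = u ∧ r v b)) x y) :
    TransGen r x y ∨ (ReflTransGen r x u ∧ ReflTransGen r v y) ∨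
      (ReflTransGen r x v ∧ ReflTransGen r u y) := by
  induction h with
  | single h =>
    rcases h with h | ⟨rfl, h⟩ | ⟨rfl, h⟩
    · exact .inl (.single h)
    · exact .inr (.inr ⟨.single h, .refl⟩)
    · exact .inr (.inl ⟨.refl, .single h⟩)
  | tail _ h ih =>
    rcases h with h | ⟨rfl, h⟩ | ⟨rfl, h⟩
    · rcases ih with ih | ⟨hx, hy⟩ | ⟨hx, hy⟩
      · exact .inl (ih.tail h)
      · exact .inr (.inl ⟨hx, hy.tail h⟩)
      · exact .inr (.inr ⟨hx, hy.tail h⟩)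
    · -- edge y → u  via r y v
      rcases ih with ih | ⟨hx, hy⟩ | ⟨hx, hy⟩
      · exact .inr (.inr ⟨(ih.tail h).to_reflTransGen, .refl⟩)
      · exact absurd (TransGen.tail' hy h) (hA v)
      · exact absurd (ReflTransGen.tail hy h) h1
    · -- edge u → z via r v z ; previous endpoint is u
      rcases ih with ih | ⟨hx, hy⟩ | ⟨hx, hy⟩
      · exact .inr (.inl ⟨ih.to_reflTransGen, .single h⟩)
      · exact absurd hy h2
      · exact .inl (TransGen.tail' hx h)

lemma dup_acyclic {r : W → W → Prop} {u v : W}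
    (hA : ∀ a, ¬ TransGen r a a) (h1 : ¬ ReflTransGen r u v) (h2 : ¬ ReflTransGen r v u) :
    ∀ a, ¬ TransGen (fun a b => r a b ∨ (b = u ∧ r a v) ∨ (a = u ∧ r v b)) a a := by
  intro a h
  rcases tg_dup hA h1 h2 h with h | ⟨hx, hy⟩ | ⟨hx, hy⟩
  · exact hA a h
  · exact h2 (hy.trans hx)
  · exact h1 (hy.trans hx)


/-! ### deletion and contraction -/

def contractG (G : SimpleGraph W) (u v : W) : SimpleGraph {w : W // w ≠ v} where
  Adj a b := a ≠ b ∧ (G.Adj a.1 b.1 ∨ (a.1 = u ∧ G.Adj v b.1) ∨ (b.1 = u ∧ G.Adj v a.1))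
  symm := by
    refine ⟨?_⟩; rintro a b ⟨hne, h | ⟨h1, h2⟩ | ⟨h1, h2⟩⟩
    · exact ⟨hne.symm, .inl h.symm⟩
    · exact ⟨hne.symm, .inr (.inr ⟨h1, h2⟩)⟩
    · exact ⟨hne.symm, .inr (.inl ⟨h1, h2⟩)⟩
  loopless := ⟨by rintro a ⟨hne, -⟩; exact hne rfl⟩

variable {G : SimpleGraph W} {u v : W}

lemma contractG_adj {a b : {w : W // w ≠ v}} :
    (contractG G u v).Adj a b ↔
      a ≠ b ∧ (G.Adj a.1 b.1 ∨ (a.1 = u ∧ G.Adj v b.1) ∨ (b.1 = u ∧ G.Adj v a.1)) :=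
  Iff.rfl

lemma deleteG_adj {a b : W} :
    (G.deleteEdges {s(u,v)}).Adj a b ↔
      G.Adj a b ∧ ¬(a = u ∧ b = v) ∧ ¬(a = v ∧ b = u) := by
  rw [SimpleGraph.deleteEdges_adj, Set.mem_singleton_iff, Sym2.eq_iff]
  tauto


open scoped Classical in
/-- the merging map -/
noncomputable def mmap (u : W) {v : W} (hne : u ≠ v) (w : W) : {x : W // x ≠ v} :=
  if h : w = v then ⟨u, hne⟩ else ⟨w, h⟩

lemma mmap_of_ne {hne : u ≠ v} {w : W} (h : w ≠ v) : mmap u hne w = ⟨w, h⟩ := by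
  unfold mmap; rw [dif_neg h]

lemma mmap_v {hne : u ≠ v} : mmap u hne v = ⟨u, hne⟩ := by
  unfold mmap; rw [dif_pos rfl]

lemma mmap_adj (huv : G.Adj u v) {a b : W} (h : (G.deleteEdges {s(u,v)}).Adj a b) :
    (contractG G u v).Adj (mmap u huv.ne a) (mmap u huv.ne b) := by
  rw [deleteG_adj] at h
  obtain ⟨hab, h1, h2⟩ := h
  by_cases ha : a = v
  · rw [ha] at hab
    have hbu : b ≠ u := fun hb => h2 ⟨ha, hb⟩
    have hbv : b ≠ v := fun hb => G.loopless.irrefl v (hb ▸ hab)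
    rw [ha, mmap_v, mmap_of_ne hbv]
    exact ⟨fun hh => hbu (congrArg Subtype.val hh).symm, .inr (.inl ⟨rfl, hab⟩)⟩
  · by_cases hb : b = v
    · rw [hb] at hab
      have hau : a ≠ u := fun h' => h1 ⟨h', hb⟩
      rw [hb, mmap_v, mmap_of_ne ha]
      exact ⟨fun hh => hau (congrArg Subtype.val hh), .inr (.inr ⟨rfl, hab.symm⟩)⟩
    · rw [mmap_of_ne ha, mmap_of_ne hb]
      exact ⟨fun hh => by cases congrArg Subtype.val hh; exact G.loopless.irrefl _ hab, .inl hab⟩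

/-! ### coloring count recurrence -/

noncomputable def colorEquivA (huv : G.Adj u v) (α : Type*) :
    {f : (G.deleteEdges {s(u,v)}).Coloring α // f u ≠ f v} ≃ G.Coloring α where
  toFun f := SimpleGraph.Coloring.mk f.1 (by
    intro a b hab
    by_cases h1 : a = u ∧ b = v
    · obtain ⟨rfl, rfl⟩ := h1; exact f.2
    · by_cases h2 : a = v ∧ b = u
      · obtain ⟨rfl, rfl⟩ := h2; exact fun hc => f.2 hc.symm
      · exact f.1.valid (deleteG_adj.2 ⟨hab, h1, h2⟩))
  invFun f := ⟨SimpleGraph.Coloring.mk f (fun hab => f.valid (deleteG_adj.1 hab).1),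
    f.valid huv⟩
  left_inv f := by ext; rfl
  right_inv f := by ext; rfl

noncomputable def colorEquivB (huv : G.Adj u v) (α : Type*) :
    {f : (G.deleteEdges {s(u,v)}).Coloring α // f u = f v} ≃ (contractG G u v).Coloring α where
  toFun f := SimpleGraph.Coloring.mk (fun w => f.1 w.1) (by
    rintro a b ⟨hne, hab | ⟨h1, h2⟩ | ⟨h1, h2⟩⟩
    · exact f.1.valid (deleteG_adj.2 ⟨hab, fun h => b.2 h.2, fun h => a.2 h.1⟩)
    · -- a.1 = u, G.Adj v b.1
      have hbu : b.1 ≠ u := fun hh => hne (Subtype.ext (h1.trans hh.symm))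
      have hvb : f.1 v ≠ f.1 b.1 := f.1.valid (deleteG_adj.2
        ⟨h2, fun h => b.2 h.2, fun h => hbu h.2⟩)
      intro hc
      replace hc : f.1 a.1 = f.1 b.1 := hc
      rw [show a.1 = u from h1] at hc
      exact hvb (f.2.symm.trans hc)
    · have hau : a.1 ≠ u := fun hh => hne (Subtype.ext (hh.trans h1.symm))
      have hav : f.1 a.1 ≠ f.1 v := f.1.valid (deleteG_adj.2
        ⟨h2.symm, fun h => hau h.1, fun h => a.2 h.1⟩)
      intro hc
      replace hc : f.1 a.1 = f.1 b.1 := hc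
      rw [show b.1 = u from h1] at hc
      exact hav (hc.trans f.2))
  invFun g := ⟨SimpleGraph.Coloring.mk (fun w => g (mmap u huv.ne w))
      (fun hab => g.valid (mmap_adj huv hab)), by
    show g (mmap u huv.ne u) = g (mmap u huv.ne v)
    rw [mmap_v, mmap_of_ne huv.ne]⟩
  left_inv f := by
    ext w
    show f.1 ((mmap u huv.ne w).1) = f.1 w
    by_cases h : w = v
    · subst h; rw [mmap_v]; exact f.2
    · rw [mmap_of_ne h]
  right_inv g := by
    ext w
    show g (mmap u huv.ne w.1) = g w
    rw [mmap_of_ne w.2]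

lemma coloring_finite (H : SimpleGraph W) [Finite W] (α : Type*) [Finite α] :
    Finite (H.Coloring α) :=
  Finite.of_injective (fun f => (f : W → α)) (fun f g h => by ext w; exact congrFun h w)

lemma card_coloring_rec [Finite W] (huv : G.Adj u v) (α : Type*) [Finite α] :
    Nat.card ((G.deleteEdges {s(u,v)}).Coloring α) =
      Nat.card (G.Coloring α) + Nat.card ((contractG G u v).Coloring α) := by
  classical
  have i1 : Finite ((G.deleteEdges {s(u,v)}).Coloring α) := coloring_finite _ _
  have i2 : Finite (G.Coloring α) := coloring_finite _ _
  have i3 : Finite ((contractG G u v).Coloring α) := coloring_finite _ _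
  have e1 : (G.deleteEdges {s(u,v)}).Coloring α ≃
      {f : (G.deleteEdges {s(u,v)}).Coloring α // f u ≠ f v} ⊕
      {f : (G.deleteEdges {s(u,v)}).Coloring α // ¬ f u ≠ f v} :=
    (Equiv.sumCompl _).symm
  have e2 : {f : (G.deleteEdges {s(u,v)}).Coloring α // ¬ f u ≠ f v} ≃
      {f : (G.deleteEdges {s(u,v)}).Coloring α // f u = f v} :=
    Equiv.subtypeEquivRight (fun f => by simp)
  rw [Nat.card_congr e1, Nat.card_sum, Nat.card_congr (colorEquivA huv α),
    Nat.card_congr (e2.trans (colorEquivB huv α))]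


/-! ### acyclic orientation recurrence -/

lemma rt_tg {r : W → W → Prop} {a b : W} (h : ReflTransGen r a b) (hne : a ≠ b) :
    TransGen r a b := by
  rcases reflTransGen_iff_eq_or_transGen.1 h with h | h
  · exact absurd h.symm hne
  · exact h

/-- orienting the edge `u → v` -/
noncomputable def aoExt (huv : G.Adj u v) :
    {r : AO G // r.1 u v} ≃
      {r' : AO (G.deleteEdges {s(u,v)}) // ¬ ReflTransGen r'.1 v u} where
  toFun r := by
    refine ⟨⟨fun a b => r.1.1 a b ∧ ¬(a = u ∧ b = v), ?_, ?_, ?_⟩, ?_⟩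
    · rintro a b ⟨hab, hne⟩
      refine deleteG_adj.2 ⟨r.1.2.1 hab, hne, ?_⟩
      rintro ⟨rfl, rfl⟩
      exact ((r.1.2.2.1 huv).1 r.2) hab
    · intro a b hab
      obtain ⟨hG, h1, h2⟩ := deleteG_adj.1 hab
      have := r.1.2.2.1 hG
      constructor
      · rintro ⟨hr, -⟩ ⟨hr', -⟩
        exact (this.1 hr) hr'
      · intro hn
        exact ⟨this.2 (fun hrba => hn ⟨hrba, fun hh => h2 ⟨hh.2, hh.1⟩⟩), h1⟩
    · intro a h
      exact r.1.2.2.2 a (TransGen.mono (fun x y hh => hh.1) _ _ h)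
    · intro h
      have : ReflTransGen r.1.1 v u := ReflTransGen.mono (fun x y hh => hh.1) _ _ h
      exact r.1.2.2.2 u (TransGen.head' r.2 this)
  invFun r' := by
    refine ⟨⟨fun a b => r'.1.1 a b ∨ (a = u ∧ b = v), ?_, ?_, ?_⟩, .inr ⟨rfl, rfl⟩⟩
    · rintro a b (h | ⟨rfl, rfl⟩)
      · exact (deleteG_adj.1 (r'.1.2.1 h)).1
      · exact huv
    · intro a b hab
      have hNadj : ∀ x y : W, x = u → y = v → ¬ r'.1.1 y x := by
        rintro x y rfl rfl h
        exact (deleteG_adj.1 (r'.1.2.1 h)).2.2 ⟨rfl, rfl⟩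
      have hNadj' : ∀ x y : W, x = u → y = v → ¬ r'.1.1 x y := by
        rintro x y rfl rfl h
        exact (deleteG_adj.1 (r'.1.2.1 h)).2.1 ⟨rfl, rfl⟩
      by_cases h1 : a = u ∧ b = v
      · obtain ⟨rfl, rfl⟩ := h1
        constructor
        · rintro - (h | ⟨rfl, -⟩)
          · exact hNadj _ _ rfl rfl h
          · exact G.loopless.irrefl _ huv
        · intro _; exact .inr ⟨rfl, rfl⟩
      · by_cases h2 : a = v ∧ b = u
        · obtain ⟨rfl, rfl⟩ := h2
          constructor
          · rintro (h | ⟨h, -⟩) -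
            · exact hNadj _ _ rfl rfl h
            · exact G.loopless.irrefl _ (h ▸ huv)
          · intro hn
            exact absurd (.inr ⟨rfl, rfl⟩) hn
        · have hd : (G.deleteEdges {s(u,v)}).Adj a b := deleteG_adj.2 ⟨hab, h1, h2⟩
          have := r'.1.2.2.1 hd
          constructor
          · rintro (h | hh) (h' | hh')
            · exact (this.1 h) h'
            · exact h2 ⟨hh'.2, hh'.1⟩
            · exact h1 hh
            · exact h1 hh
          · intro hn
            refine .inl (this.2 ?_)
            intro h'
            exact hn (.inl h')
    · intro a h
      rcases tg_union h with h | ⟨hx, hy⟩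
      · exact r'.1.2.2.2 a h
      · exact r'.2 (hy.trans hx)
  left_inv r := by
    refine Subtype.ext (Subtype.ext ?_)
    funext a b
    refine propext ⟨?_, ?_⟩
    · rintro (⟨h, -⟩ | ⟨rfl, rfl⟩)
      · exact h
      · exact r.2
    · intro h
      by_cases hp : a = u ∧ b = v
      · exact .inr hp
      · exact .inl ⟨h, hp⟩
  right_inv r' := by
    refine Subtype.ext (Subtype.ext ?_)
    funext a b
    refine propext ⟨?_, ?_⟩
    · rintro ⟨h | ⟨rfl, rfl⟩, hp⟩
      · exact h
      · exact absurd ⟨rfl, rfl⟩ hp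
    · intro h
      refine ⟨.inl h, ?_⟩
      rintro ⟨rfl, rfl⟩
      exact (deleteG_adj.1 (r'.1.2.1 h)).2.1 ⟨rfl, rfl⟩

noncomputable def aoExt2 (huv : G.Adj u v) :
    {r : AO G // r.1 v u} ≃
      {r' : AO (G.deleteEdges {s(u,v)}) // ¬ ReflTransGen r'.1 u v} := by
  have h : ({s(u,v)} : Set (Sym2 W)) = {s(v,u)} := by rw [Sym2.eq_swap]
  rw [h]
  exact aoExt huv.symm

lemma card_add_card {X : Type*} [Finite X] (p q : X → Prop) (h : ∀ x, p x ∨ q x) :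
    Nat.card {x // p x} + Nat.card {x // q x} =
      Nat.card X + Nat.card {x // p x ∧ q x} := by
  classical
  cases nonempty_fintype X
  have h1 : Nat.card X = Nat.card {x // p x} + Nat.card {x // ¬ p x} := by
    rw [← Nat.card_sum, Nat.card_congr (Equiv.sumCompl p)]
  have h2 : Nat.card {x // q x} =
      Nat.card {x // p x ∧ q x} + Nat.card {x // q x ∧ ¬ p x} := by
    rw [← Nat.card_sum]
    exact Nat.card_congr ((Equiv.sumCompl (fun y : {x // q x} => p y.1)).symm.trans
      (Equiv.sumCongr ((Equiv.subtypeSubtypeEquivSubtypeInter q p).trans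
          (Equiv.subtypeEquivRight fun x => and_comm))
        (Equiv.subtypeSubtypeEquivSubtypeInter q (fun x => ¬ p x))))
  have h3 : Nat.card {x // ¬ p x} = Nat.card {x // q x ∧ ¬ p x} :=
    Nat.card_congr (Equiv.subtypeEquivRight fun x =>
      ⟨fun hnp => ⟨(h x).resolve_left hnp, hnp⟩, fun hh => hh.2⟩)
  omega


/-- contraction equivalence for acyclic orientations -/
noncomputable def aoContract (huv : G.Adj u v) :
    {r' : AO (G.deleteEdges {s(u,v)}) //
        ¬ ReflTransGen r'.1 v u ∧ ¬ ReflTransGen r'.1 u v} ≃ AO (contractG G u v) where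
  toFun rp := by
    obtain ⟨⟨r, hadj, hiff, hacy⟩, hvu, huvp⟩ := rp
    refine ⟨fun a b => r a.1 b.1 ∨ (a.1 = u ∧ r v b.1) ∨ (b.1 = u ∧ r a.1 v), ?_, ?_, ?_⟩
    · rintro a b (h | ⟨hau, h⟩ | ⟨hbu, h⟩)
      · refine ⟨fun he => ?_, .inl (deleteG_adj.1 (hadj h)).1⟩
        rw [he] at h
        exact hacy _ (.single h)
      · refine ⟨fun he => ?_, .inr (.inl ⟨hau, (deleteG_adj.1 (hadj h)).1⟩)⟩
        have hbu : b.1 = u := by rw [← he]; exact hau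
        rw [hbu] at h
        exact hvu (.single h)
      · refine ⟨fun he => ?_, .inr (.inr ⟨hbu, ((deleteG_adj.1 (hadj h)).1).symm⟩)⟩
        have hau : a.1 = u := by rw [he]; exact hbu
        rw [hau] at h
        exact huvp (.single h)
    · rintro a b ⟨hne, hadj'⟩
      have hne1 : a.1 ≠ b.1 := fun h => hne (Subtype.ext h)
      have hboth : ¬ ((r a.1 b.1 ∨ (a.1 = u ∧ r v b.1) ∨ (b.1 = u ∧ r a.1 v)) ∧
          (r b.1 a.1 ∨ (b.1 = u ∧ r v a.1) ∨ (a.1 = u ∧ r b.1 v))) := by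
        rintro ⟨h | ⟨hau, h⟩ | ⟨hbu, h⟩, h' | ⟨hbu', h'⟩ | ⟨hau', h'⟩⟩
        · exact hacy _ ((TransGen.single h).tail h')
        · refine hvu ?_
          have : ReflTransGen r v b.1 := (ReflTransGen.single h').tail h
          rwa [hbu'] at this
        · refine huvp ?_
          have : ReflTransGen r a.1 v := (ReflTransGen.single h).tail h'
          rwa [hau'] at this
        · refine hvu ?_
          have : ReflTransGen r v a.1 := (ReflTransGen.single h).tail h'
          rwa [hau] at this
        · exact hne1 (hau.trans hbu'.symm)
        · exact hacy _ ((TransGen.single h).tail h')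
        · refine huvp ?_
          have : ReflTransGen r b.1 v := (ReflTransGen.single h').tail h
          rwa [hbu] at this
        · exact hacy _ ((TransGen.single h).tail h')
        · exact hne1 (hau'.trans hbu.symm)
      have hone : (r a.1 b.1 ∨ (a.1 = u ∧ r v b.1) ∨ (b.1 = u ∧ r a.1 v)) ∨
          (r b.1 a.1 ∨ (b.1 = u ∧ r v a.1) ∨ (a.1 = u ∧ r b.1 v)) := by
        rcases hadj' with hG | ⟨hau, hG⟩ | ⟨hbu, hG⟩
        · have hd : (G.deleteEdges {s(u,v)}).Adj a.1 b.1 :=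
            deleteG_adj.2 ⟨hG, fun hh => b.2 hh.2, fun hh => a.2 hh.1⟩
          by_cases hr : r a.1 b.1
          · exact .inl (.inl hr)
          · refine .inr (.inl ?_)
            by_contra hba
            exact hr ((hiff hd).2 hba)
        · have hbu : b.1 ≠ u := fun hh => hne (Subtype.ext (hau.trans hh.symm))
          have hd : (G.deleteEdges {s(u,v)}).Adj v b.1 :=
            deleteG_adj.2 ⟨hG, fun hh => huv.ne hh.1.symm, fun hh => hbu hh.2⟩
          by_cases hr : r v b.1
          · exact .inl (.inr (.inl ⟨hau, hr⟩))
          · refine .inr (.inr (.inr ⟨hau, ?_⟩))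
            by_contra hbv
            exact hr ((hiff hd).2 hbv)
        · have hau : a.1 ≠ u := fun hh => hne (Subtype.ext (hh.trans hbu.symm))
          have hd : (G.deleteEdges {s(u,v)}).Adj a.1 v :=
            deleteG_adj.2 ⟨hG.symm, fun hh => hau hh.1, fun hh => a.2 hh.1⟩
          by_cases hr : r a.1 v
          · exact .inl (.inr (.inr ⟨hbu, hr⟩))
          · refine .inr (.inr (.inl ⟨hbu, ?_⟩))
            by_contra hva
            exact hr ((hiff hd).2 hva)
      exact ⟨fun h h' => hboth ⟨h, h'⟩, fun h => hone.resolve_right h⟩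
    · intro a h
      have hlift : TransGen (fun x y => r x y ∨ (y = u ∧ r x v) ∨ (x = u ∧ r v y)) a.1 a.1 := by
        refine TransGen.lift Subtype.val ?_ _ _ h
        rintro x y (h | ⟨hxu, h⟩ | ⟨hyu, h⟩)
        · exact .inl h
        · exact .inr (.inr ⟨hxu, h⟩)
        · exact .inr (.inl ⟨hyu, h⟩)
      exact dup_acyclic hacy huvp hvu a.1 hlift
  invFun sp := by
    obtain ⟨s, sadj, siff, sacy⟩ := sp
    refine ⟨⟨fun a b => (G.deleteEdges {s(u,v)}).Adj a b ∧
        s (mmap u huv.ne a) (mmap u huv.ne b), fun a b h => h.1, ?_, ?_⟩, ?_, ?_⟩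
    · intro a b hd
      have hsiff := siff (mmap_adj huv hd)
      constructor
      · rintro ⟨-, hs⟩ ⟨-, hs'⟩
        exact (hsiff.1 hs) hs'
      · intro hn
        refine ⟨hd, hsiff.2 ?_⟩
        intro hs'
        exact hn ⟨hd.symm, hs'⟩
    · intro a h
      exact sacy _ (TransGen.lift (mmap u huv.ne) (fun x y hh => hh.2) _ _ h)
    · intro h
      have ht : TransGen s (mmap u huv.ne v) (mmap u huv.ne u) := TransGen.lift (mmap u huv.ne) (fun x y hh => hh.2) _ _ (rt_tg h huv.ne')
      rw [mmap_v, mmap_of_ne huv.ne] at ht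
      exact sacy _ ht
    · intro h
      have ht : TransGen s (mmap u huv.ne u) (mmap u huv.ne v) := TransGen.lift (mmap u huv.ne) (fun x y hh => hh.2) _ _ (rt_tg h huv.ne)
      rw [mmap_v, mmap_of_ne huv.ne] at ht
      exact sacy _ ht
  left_inv rp := by
    obtain ⟨⟨r, hadj, hiff, hacy⟩, hvu, huvp⟩ := rp
    refine Subtype.ext (Subtype.ext ?_)
    funext a b
    refine propext ⟨?_, ?_⟩
    · rintro ⟨hd, hs⟩
      by_cases ha : a = v
      · have hb : b ≠ v := fun hb => hd.ne (ha.trans hb.symm)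
        rw [ha, mmap_v, mmap_of_ne hb] at hs
        rw [ha] at hd ⊢
        rcases hs with hub | ⟨-, hvb⟩ | ⟨hbu, huv'⟩
        · -- r u b ; orient the edge v b
          by_contra hnvb
          have hbv : r b v := by
            by_contra h''
            exact hnvb ((hiff hd).2 h'')
          exact huvp ((ReflTransGen.single hub).tail hbv)
        · exact hvb
        · exact absurd (deleteG_adj.1 (hadj huv')).2.1 (fun hh => hh ⟨rfl, rfl⟩)
      · by_cases hb : b = v
        · rw [mmap_of_ne ha, hb, mmap_v] at hs
          rw [hb] at hd ⊢
          rcases hs with hau' | ⟨-, hvu'⟩ | ⟨-, hav⟩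
          · by_contra hnav
            have hva : r v a := by
              by_contra h''
              exact hnav ((hiff hd).2 h'')
            exact hvu ((ReflTransGen.single hva).tail hau')
          · exact absurd hvu' (fun h => hvu (.single h))
          · exact hav
        · rw [mmap_of_ne ha, mmap_of_ne hb] at hs
          rcases hs with h | ⟨hau, hvb⟩ | ⟨hbu, hav⟩
          · exact h
          · replace hau : a = u := hau
            rw [hau] at hd ⊢
            by_contra hnub
            have hbu : r b u := by
              by_contra h''
              exact hnub ((hiff hd).2 h'')
            exact hvu ((ReflTransGen.single hvb).tail hbu)
          · replace hbu : b = u := hbu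
            rw [hbu] at hd ⊢
            by_contra hnau
            have hua : r u a := by
              by_contra h''
              exact hnau ((hiff hd).2 h'')
            exact huvp ((ReflTransGen.single hua).tail hav)
    · intro hr
      refine ⟨hadj hr, ?_⟩
      by_cases ha : a = v
      · rw [ha] at hr
        have hb : b ≠ v := fun hb => hacy v (.single (hb ▸ hr))
        rw [ha, mmap_v, mmap_of_ne hb]
        exact .inr (.inl ⟨rfl, hr⟩)
      · by_cases hb : b = v
        · rw [hb] at hr
          rw [mmap_of_ne ha, hb, mmap_v]
          exact .inr (.inr ⟨rfl, hr⟩)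
        · rw [mmap_of_ne ha, mmap_of_ne hb]
          exact .inl hr
  right_inv sp := by
    obtain ⟨s, sadj, siff, sacy⟩ := sp
    refine Subtype.ext ?_
    funext a b
    refine propext ⟨?_, ?_⟩
    · rintro (⟨hd, hs⟩ | ⟨hau, hd, hs⟩ | ⟨hbu, hd, hs⟩)
      · rwa [mmap_of_ne a.2, mmap_of_ne b.2] at hs
      · rw [mmap_v, mmap_of_ne b.2] at hs
        rwa [show a = (⟨u, huv.ne⟩ : {w : W // w ≠ v}) from Subtype.ext hau]
      · rw [mmap_of_ne a.2, mmap_v] at hs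
        rwa [show b = (⟨u, huv.ne⟩ : {w : W // w ≠ v}) from Subtype.ext hbu]
    · intro hs
      obtain ⟨hne, hadj'⟩ := sadj hs
      rcases hadj' with hG | ⟨hau, hG⟩ | ⟨hbu, hG⟩
      · refine .inl ⟨deleteG_adj.2 ⟨hG, fun hh => b.2 hh.2, fun hh => a.2 hh.1⟩, ?_⟩
        rwa [mmap_of_ne a.2, mmap_of_ne b.2]
      · have hbu : b.1 ≠ u := fun hh => hne (Subtype.ext (hau.trans hh.symm))
        refine .inr (.inl ⟨hau, deleteG_adj.2 ⟨hG, fun hh => huv.ne hh.1.symm,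
          fun hh => hbu hh.2⟩, ?_⟩)
        rw [mmap_v, mmap_of_ne b.2]
        rwa [show a = (⟨u, huv.ne⟩ : {w : W // w ≠ v}) from Subtype.ext hau] at hs
      · have hau : a.1 ≠ u := fun hh => hne (Subtype.ext (hh.trans hbu.symm))
        refine .inr (.inr ⟨hbu, deleteG_adj.2 ⟨hG.symm, fun hh => hau hh.1,
          fun hh => a.2 hh.1⟩, ?_⟩)
        rw [mmap_of_ne a.2, mmap_v]
        rwa [show b = (⟨u, huv.ne⟩ : {w : W // w ≠ v}) from Subtype.ext hbu] at hs


lemma card_ao_rec [Finite W] (huv : G.Adj u v) :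
    Nat.card (AO G) =
      Nat.card (AO (G.deleteEdges {s(u,v)})) + Nat.card (AO (contractG G u v)) := by
  classical
  have hpart : Nat.card (AO G) =
      Nat.card {r : AO G // r.1 u v} + Nat.card {r : AO G // r.1 v u} := by
    rw [← Nat.card_sum]
    refine (Nat.card_congr ((Equiv.sumCompl (fun r : AO G => r.1 u v)).symm.trans
      ((Equiv.refl _).sumCongr (Equiv.subtypeEquivRight fun r => ?_))))
    constructor
    · intro h
      by_contra h'
      exact h ((r.2.2.1 huv).2 h')
    · intro h h'
      exact ((r.2.2.1 huv).1 h') h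
  have h1 := Nat.card_congr (aoExt huv)
  have h2 := Nat.card_congr (aoExt2 huv)
  have h3 := Nat.card_congr (aoContract huv)
  have tot : ∀ r : AO (G.deleteEdges {s(u,v)}),
      ¬ ReflTransGen r.1 v u ∨ ¬ ReflTransGen r.1 u v := by
    intro r
    by_contra hb
    push_neg at hb
    exact r.2.2.2 u (TransGen.trans_right hb.2 (rt_tg hb.1 huv.ne'))
  have hc := card_add_card (fun r : AO (G.deleteEdges {s(u,v)}) => ¬ ReflTransGen r.1 v u)
    (fun r => ¬ ReflTransGen r.1 u v) tot
  beta_reduce at hc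
  omega


/-! ### Stanley's theorem -/

lemma card_compl_singleton [Finite W] (v : W) :
    Nat.card {w : W // w ≠ v} = Nat.card W - 1 := by
  classical
  cases nonempty_fintype W
  rw [Nat.card_eq_fintype_card, Nat.card_eq_fintype_card,
    Fintype.card_subtype_compl (fun w => w = v), Fintype.card_subtype_eq]

lemma no_adj (G : SimpleGraph W) (hG : G.edgeSet = ∅) : ∀ a b : W, ¬ G.Adj a b := by
  intro a b h
  rw [← SimpleGraph.mem_edgeSet, hG] at h
  exact h

lemma tg_false {x y : W} (h : TransGen (fun _ _ : W => False) x y) : False := by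
  induction h with
  | single h => exact h
  | tail _ h => exact h

lemma ao_bot (G : SimpleGraph W) (hG : G.edgeSet = ∅) : Nat.card (AO G) = 1 := by
  rw [Nat.card_eq_one_iff_unique]
  constructor
  · constructor
    intro r r'
    refine Subtype.ext ?_
    funext a b
    exact propext ⟨fun h => absurd (r.2.1 h) (no_adj G hG a b),
      fun h => absurd (r'.2.1 h) (no_adj G hG a b)⟩
  · exact ⟨⟨fun _ _ => False, fun a b h => h.elim, fun a b h => absurd h (no_adj G hG a b),
      fun a h => tg_false h⟩⟩

lemma chrom_bot [Finite W] (G : SimpleGraph W) (hG : G.edgeSet = ∅) :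
    IsChromPoly G (Polynomial.X ^ (Nat.card W)) := by
  intro k
  have e : G.Coloring (Fin k) ≃ (W → Fin k) :=
    { toFun := fun f => f
      invFun := fun f => SimpleGraph.Coloring.mk f (fun h => absurd h (no_adj G hG _ _))
      left_inv := fun f => by ext; rfl
      right_inv := fun f => rfl }
  rw [Nat.card_congr e, Nat.card_fun, Nat.card_eq_fintype_card (α := Fin k), Fintype.card_fin]
  push_cast
  simp

lemma bot_full [Finite W] (G : SimpleGraph W) (hG : G.edgeSet = ∅) :
    ∃ P : Polynomial ℝ, IsChromPoly G P ∧
      (-1:ℝ)^(Nat.card W) * P.eval (-1) = (Nat.card (AO G) : ℝ) := by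
  refine ⟨Polynomial.X ^ (Nat.card W), chrom_bot G hG, ?_⟩
  rw [ao_bot G hG]
  rw [eval_pow, eval_X, ← pow_add, Even.neg_one_pow ⟨Nat.card W, rfl⟩]
  norm_num

universe u

theorem stanley_aux : ∀ (n m : ℕ) (W : Type u) [Finite W] (G : SimpleGraph W),
    Nat.card W ≤ n → G.edgeSet.ncard ≤ m →
    ∃ P : Polynomial ℝ, IsChromPoly G P ∧
      (-1:ℝ)^(Nat.card W) * P.eval (-1) = (Nat.card (AO G) : ℝ) := by
  intro n
  induction n with
  | zero =>
    intro m W _ G hn _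
    have hemp : IsEmpty W := by
      rcases Nat.card_eq_zero.1 (Nat.le_zero.1 hn) with h | h
      · exact h
      · exact absurd h (not_infinite_iff_finite.2 ‹Finite W›)
    refine bot_full G ?_
    ext e
    induction e using Sym2.ind with
    | _ x y => exact (hemp.false x).elim
  | succ n ihn =>
    intro m
    induction m with
    | zero =>
      intro W _ G hn hm
      refine bot_full G ?_
      exact (Set.ncard_eq_zero (Set.toFinite _)).1 (Nat.le_zero.1 hm)
    | succ m ihm =>
      intro W _ G hn hm
      by_cases hE : G.edgeSet = ∅
      · exact bot_full G hE
      · obtain ⟨u, v, huv⟩ : ∃ u v, G.Adj u v := by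
          by_contra h
          push_neg at h
          apply hE
          ext e
          induction e using Sym2.ind with
          | _ x y => simp [SimpleGraph.mem_edgeSet, h x y]
        have hfinE : G.edgeSet.Finite := Set.toFinite _
        have hEpos : 1 ≤ G.edgeSet.ncard :=
          (Set.ncard_pos hfinE).2 ⟨_, (G.mem_edgeSet).2 huv⟩
        have hEd : (G.deleteEdges {s(u,v)}).edgeSet.ncard ≤ m := by
          rw [SimpleGraph.edgeSet_deleteEdges]
          have h1 : (G.edgeSet \ {s(u,v)}).ncard = G.edgeSet.ncard - 1 :=
            Set.ncard_diff_singleton_of_mem ((G.mem_edgeSet).2 huv)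
          omega
        obtain ⟨Pd, hPd, hSd⟩ := ihm W (G.deleteEdges {s(u,v)}) hn hEd
        have : Nonempty W := ⟨u⟩
        have hWpos : 1 ≤ Nat.card W := Nat.card_pos (α := W)
        have hcW' : Nat.card {w : W // w ≠ v} ≤ n := by
          rw [card_compl_singleton]
          omega
        obtain ⟨Pc, hPc, hSc⟩ := ihn (contractG G u v).edgeSet.ncard
          {w : W // w ≠ v} (contractG G u v) hcW' le_rfl
        refine ⟨Pd - Pc, ?_, ?_⟩
        · intro k
          have hrec := card_coloring_rec huv (Fin k)
          have hcast : (Nat.card ((G.deleteEdges {s(u,v)}).Coloring (Fin k)) : ℝ) =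
              (Nat.card (G.Coloring (Fin k)) : ℝ) +
              (Nat.card ((contractG G u v).Coloring (Fin k)) : ℝ) := by
            exact_mod_cast congrArg (Nat.cast : ℕ → ℝ) hrec
          rw [eval_sub, hPd k, hPc k]
          linarith
        · have hWc : Nat.card W = (Nat.card {w : W // w ≠ v}) + 1 := by
            rw [card_compl_singleton]
            omega
          have hrec := card_ao_rec huv
          rw [eval_sub, mul_sub, hSd, hWc, pow_succ, hrec]
          push_cast
          rw [mul_comm ((-1:ℝ)^(Nat.card {w : W // w ≠ v})) (-1)]
          have : (-1:ℝ) ^ Nat.card { w : W // w ≠ v } * Polynomial.eval (-1) Pc =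
              (Nat.card (AO (contractG G u v)) : ℝ) := hSc
          nlinarith [this]


/-! ### uniqueness of the chromatic polynomial -/

lemma chrom_unique {G : SimpleGraph W} {P Q : Polynomial ℝ}
    (hP : IsChromPoly G P) (hQ : IsChromPoly G Q) : P = Q := by
  have h : P - Q = 0 := by
    apply Polynomial.eq_zero_of_infinite_isRoot
    refine Set.Infinite.mono ?_ (Set.infinite_range_of_injective
      (Nat.cast_injective (R := ℝ)))
    rintro x ⟨k, rfl⟩
    simp only [Set.mem_setOf_eq, Polynomial.IsRoot, eval_sub, hP k, hQ k, sub_self]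
  have := sub_eq_zero.1 h
  exact this

lemma eval_val [Finite W] (G : SimpleGraph W) (P : Polynomial ℝ) (hP : IsChromPoly G P) :
    (-1:ℝ)^(Nat.card W) * P.eval (-1) = (Nat.card (AO G) : ℝ) := by
  obtain ⟨Q, hQ, hS⟩ := stanley_aux (Nat.card W) (G.edgeSet.ncard) W G le_rfl le_rfl
  rw [chrom_unique hP hQ]
  exact hS

/-! ### the source injection -/

section Inequality

variable [Finite W] (G : SimpleGraph W)

def sources (r : AO G) : Set W := {w | ∀ x, ¬ r.1 x w}

lemma sources_nonempty [Nonempty W] (r : AO G) : (sources G r).Nonempty := by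
  letI : IsTrans W (TransGen r.1) := ⟨fun a b c h h' => TransGen.trans h h'⟩
  letI : IsIrrefl W (TransGen r.1) := ⟨r.2.2.2⟩
  have wf := Finite.wellFounded_of_trans_of_irrefl (TransGen r.1)
  obtain ⟨m, -, hm⟩ := wf.has_min Set.univ Set.univ_nonempty
  exact ⟨m, fun x hx => hm x (Set.mem_univ x) (.single hx)⟩

noncomputable def minSource [Nonempty W] (r : AO G) : W :=
  (IsWellFounded.wf (r := (WellOrderingRel : W → W → Prop))).min
    (sources G r) (sources_nonempty G r)

lemma minSource_mem [Nonempty W] (r : AO G) : ∀ x, ¬ r.1 x (minSource G r) :=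
  WellFounded.min_mem _ (sources G r) (sources_nonempty G r)

lemma minSource_min [Nonempty W] (r : AO G) {x : W} (hx : x ∈ sources G r) :
    ¬ WellOrderingRel x (minSource G r) :=
  WellFounded.not_lt_min _ (sources G r) hx

def restrictAO (u : W) (r : AO G) : AO (G.induce {v' | v' ≠ u}) := by
  refine ⟨fun a b => r.1 a.1 b.1, fun a b h => r.2.1 h, fun a b h => ?_, fun a h => ?_⟩
  · exact r.2.2.1 h
  · exact r.2.2.2 a.1 (TransGen.lift Subtype.val (fun x y hh => hh) _ _ h)

noncomputable def Phi [Nonempty W] : AO G → Σ u : W, AO (G.induce {v' | v' ≠ u}) :=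
  fun r => ⟨minSource G r, restrictAO G (minSource G r) r⟩

lemma phi_inj [Nonempty W] : Function.Injective (Phi G) := by
  have key : ∀ (u : W) (s s' : AO G), (∀ x, ¬ s.1 x u) → (∀ x, ¬ s'.1 x u) →
      restrictAO G u s = restrictAO G u s' → ∀ a b, s.1 a b → s'.1 a b := by
    intro u s s' hs hs' hre a b hab
    have hadj := s.2.1 hab
    by_cases hb : b = u
    · exact absurd (hb ▸ hab) (hs a)
    · by_cases ha : a = u
      · refine (s'.2.2.1 hadj).2 ?_
        intro h'
        exact hs' b (ha ▸ h')
      · have hc := congrFun (congrFun (congrArg Subtype.val hre)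
          (⟨a, ha⟩ : {v' // v' ≠ u})) (⟨b, hb⟩ : {v' // v' ≠ u})
        exact hc ▸ hab
  intro r r' h
  obtain ⟨h1, h2⟩ := Sigma.ext_iff.mp h
  replace h1 : minSource G r = minSource G r' := h1
  replace h2 : HEq (restrictAO G (minSource G r) r) (restrictAO G (minSource G r') r') := h2
  rw [← h1] at h2
  replace h2 := eq_of_heq h2
  have hsr : ∀ x, ¬ r.1 x (minSource G r) := minSource_mem G r
  have hsr' : ∀ x, ¬ r'.1 x (minSource G r) := by
    rw [h1]
    exact minSource_mem G r'
  exact Subtype.ext (funext fun a => funext fun b => propext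
    ⟨key _ r r' hsr hsr' h2 a b, key _ r' r hsr' hsr h2.symm a b⟩)

/-- extending an orientation by making `u` a source -/
def extendAO (u : W) (r' : AO (G.induce {v' | v' ≠ u})) : AO G := by
  refine ⟨fun a b => (∃ (ha : a ≠ u) (hb : b ≠ u), r'.1 ⟨a, ha⟩ ⟨b, hb⟩) ∨
    (a = u ∧ G.Adj u b), ?_, ?_, ?_⟩
  · rintro a b (⟨ha, hb, hr⟩ | ⟨rfl, hadj⟩)
    · exact r'.2.1 hr
    · exact hadj
  · intro a b hadj
    by_cases ha : a = u
    · constructor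
      · rintro - (⟨hb, hu, -⟩ | ⟨hbu, -⟩)
        · exact hu ha
        · exact hadj.ne (ha.trans hbu.symm)
      · intro _
        exact .inr ⟨ha, ha ▸ hadj⟩
    · by_cases hb : b = u
      · constructor
        · rintro (⟨ha', hu, -⟩ | ⟨hau, -⟩) -
          · exact hu hb
          · exact ha hau
        · intro hn
          exact absurd (.inr ⟨hb, hb ▸ hadj.symm⟩) hn
      · have := r'.2.2.1 (show (G.induce {v' | v' ≠ u}).Adj ⟨a, ha⟩ ⟨b, hb⟩ from hadj)
        constructor
        · rintro (⟨ha', hb', hr⟩ | ⟨hau, -⟩) (⟨hb'', ha'', hr'⟩ | ⟨hbu, -⟩)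
          · exact (this.1 hr) hr'
          · exact hb hbu
          · exact ha hau
          · exact ha hau
        · intro hn
          refine .inl ⟨ha, hb, this.2 ?_⟩
          intro h'
          exact hn (.inl ⟨hb, ha, h'⟩)
  · -- acyclicity
    have hup : ∀ {x y : W}, TransGen (fun a b : W => ∃ (ha : a ≠ u) (hb : b ≠ u),
        r'.1 ⟨a, ha⟩ ⟨b, hb⟩) x y → ∀ (hx : x ≠ u) (hy : y ≠ u),
        TransGen r'.1 ⟨x, hx⟩ ⟨y, hy⟩ := by
      intro x y h
      induction h with
      | single h =>
        intro hx hy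
        obtain ⟨ha, hb, hr⟩ := h
        exact .single hr
      | tail _ h ih =>
        intro hx hy
        obtain ⟨ha, hb, hr⟩ := h
        exact (ih hx ha).tail hr
    have hinv : ∀ {x y : W}, TransGen (fun a b =>
        (∃ (ha : a ≠ u) (hb : b ≠ u), r'.1 ⟨a, ha⟩ ⟨b, hb⟩) ∨ (a = u ∧ G.Adj u b)) x y →
        y ≠ u ∧ (x ≠ u → TransGen (fun a b : W => ∃ (ha : a ≠ u) (hb : b ≠ u),
          r'.1 ⟨a, ha⟩ ⟨b, hb⟩) x y) := by
      intro x y h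
      induction h with
      | single h =>
        rcases h with ⟨ha, hb, hr⟩ | ⟨rfl, hadj⟩
        · exact ⟨hb, fun _ => .single ⟨ha, hb, hr⟩⟩
        · exact ⟨hadj.ne', fun hx => absurd rfl hx⟩
      | tail _ h ih =>
        rcases h with ⟨ha, hb, hr⟩ | ⟨rfl, hadj⟩
        · exact ⟨hb, fun hx => (ih.2 hx).tail ⟨ha, hb, hr⟩⟩
        · exact absurd rfl ih.1
    intro a h
    obtain ⟨hane, hf⟩ := hinv h
    exact r'.2.2.2 ⟨a, hane⟩ (hup (hf hane) hane hane)

end Inequality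


section Inequality2

variable [Finite W] [Nonempty W] (G : SimpleGraph W)

lemma phi_surj_of_top (hG : G = ⊤) : Function.Surjective (Phi G) := by
  subst hG
  rintro ⟨u, r'⟩
  refine ⟨extendAO ⊤ u r', ?_⟩
  have hmin : minSource ⊤ (extendAO ⊤ u r') = u := by
    have hmem := minSource_mem ⊤ (extendAO ⊤ u r')
    by_contra hne
    have hadj : (⊤ : SimpleGraph W).Adj u (minSource ⊤ (extendAO ⊤ u r')) :=
      fun h => hne h.symm
    exact hmem u (.inr ⟨rfl, hadj⟩)
  have hres : restrictAO ⊤ u (extendAO ⊤ u r') = r' := by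
    refine Subtype.ext ?_
    funext a b
    refine propext ⟨?_, ?_⟩
    · rintro (⟨ha, hb, hr⟩ | ⟨hau, -⟩)
      · exact hr
      · exact absurd hau a.2
    · intro h
      exact .inl ⟨a.2, b.2, h⟩
  show (⟨minSource ⊤ (extendAO ⊤ u r'),
      restrictAO ⊤ (minSource ⊤ (extendAO ⊤ u r')) (extendAO ⊤ u r')⟩ :
      Σ u : W, AO (SimpleGraph.induce {v' | v' ≠ u} ⊤)) = ⟨u, r'⟩
  rw [hmin, hres]

lemma phi_not_surj (hG : G ≠ ⊤) : ∃ p, p ∉ Set.range (Phi G) := by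
  letI : IsIrrefl W WellOrderingRel :=
    (IsWellFounded.wf (r := (WellOrderingRel : W → W → Prop))).isIrrefl
  obtain ⟨a, b, hab, hnadj0⟩ : ∃ a b, a ≠ b ∧ ¬ G.Adj a b := by
    by_contra hc
    push_neg at hc
    apply hG
    refine SimpleGraph.ext ?_
    funext x y
    refine propext ⟨fun h => h.ne, fun h => hc x y h⟩
  obtain ⟨u, v, hvu, hne, hnadj⟩ :
      ∃ u v, WellOrderingRel v u ∧ v ≠ u ∧ ¬ G.Adj u v := by
    rcases trichotomous_of WellOrderingRel a b with h | h | h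
    · exact ⟨b, a, h, hab, fun hh => hnadj0 hh.symm⟩
    · exact absurd h hab
    · exact ⟨a, b, h, fun hh => hab hh.symm, hnadj0⟩
  have hvmem : v ∈ {v' | v' ≠ u} := hne
  set vv : ↥{v' | v' ≠ u} := ⟨v, hvmem⟩ with hvv
  set κ : ↥{v' | v' ≠ u} → ↥{v' | v' ≠ u} → Prop :=
    fun x y => (x = vv ∧ y ≠ vv) ∨ (x ≠ vv ∧ y ≠ vv ∧ WellOrderingRel x.1 y.1) with hκ
  have hκtrans : Transitive κ := by
    rintro x y z (⟨hx, hy⟩ | ⟨hx, hy, hxy⟩) (⟨hy', hz⟩ | ⟨hy', hz, hyz⟩)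
    · exact absurd hy' hy
    · exact .inl ⟨hx, hz⟩
    · exact absurd hy' hy
    · exact .inr ⟨hx, hz, trans_of WellOrderingRel hxy hyz⟩
  have hκirr : ∀ x, ¬ κ x x := by
    rintro x (⟨hx, hx'⟩ | ⟨-, -, h⟩)
    · exact hx' hx
    · exact irrefl_of WellOrderingRel x.1 h
  have hprops : IsAO (G.induce {v' | v' ≠ u})
      (fun x y => (G.induce {v' | v' ≠ u}).Adj x y ∧ κ x y) := by
    refine ⟨fun x y h => h.1, ?_, ?_⟩
    · intro x y hadj
      have hxy : x ≠ y := hadj.ne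
      constructor
      · rintro ⟨-, h⟩ ⟨-, h'⟩
        exact hκirr x (hκtrans h h')
      · intro hn
        by_cases hx : x = vv
        · exact ⟨hadj, .inl ⟨hx, fun hy => hxy (hx.trans hy.symm)⟩⟩
        · by_cases hy : y = vv
          · exact absurd ⟨hadj.symm, .inl ⟨hy, hx⟩⟩ hn
          · rcases trichotomous_of WellOrderingRel x.1 y.1 with h | h | h
            · exact ⟨hadj, .inr ⟨hx, hy, h⟩⟩
            · exact absurd (Subtype.ext h) hxy
            · exact absurd ⟨hadj.symm, .inr ⟨hy, hx, h⟩⟩ hn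
    · intro x h
      have : TransGen κ x x := TransGen.mono (fun a b hh => hh.2) _ _ h
      rw [(haveI : IsTrans _ κ := ⟨fun a b c => @hκtrans a b c⟩; transGen_eq_self)] at this
      exact hκirr x this
  set O' : AO (G.induce {v' | v' ≠ u}) :=
    ⟨fun x y => (G.induce {v' | v' ≠ u}).Adj x y ∧ κ x y, hprops⟩ with hO'
  have hvsrc : ∀ x, ¬ O'.1 x vv := by
    rintro x ⟨-, (⟨-, hvv'⟩ | ⟨-, hvv', -⟩)⟩ <;> exact hvv' rfl
  refine ⟨⟨u, O'⟩, ?_⟩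
  rintro ⟨r, hr⟩
  obtain ⟨h1, h2⟩ := Sigma.ext_iff.mp hr
  replace h1 : minSource G r = u := h1
  replace h2 : HEq (restrictAO G (minSource G r) r) O' := h2
  rw [h1] at h2
  replace h2 := eq_of_heq h2
  have hvsrcr : v ∈ sources G r := by
    intro x hx
    have hxu : x ≠ u := by
      rintro rfl
      exact hnadj (r.2.1 hx)
    have : (restrictAO G u r).1 ⟨x, hxu⟩ vv := hx
    rw [h2] at this
    exact hvsrc _ this
  have := minSource_min G r hvsrcr
  rw [h1] at this
  exact this hvu

end Inequality2

section Counting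

variable [Fintype W] [Nonempty W] (G : SimpleGraph W)

lemma card_sigma_eq :
    Nat.card (Σ u : W, AO (G.induce {v' | v' ≠ u})) =
      ∑ u : W, Nat.card (AO (G.induce {v' | v' ≠ u})) := by
  classical
  letI : ∀ u : W, Fintype (AO (G.induce {v' | v' ≠ u})) := fun u => Fintype.ofFinite _
  rw [Nat.card_eq_fintype_card, Fintype.card_sigma]
  exact Finset.sum_congr rfl fun u _ => (Nat.card_eq_fintype_card).symm

lemma card_ao_le :
    Nat.card (AO G) ≤ ∑ u : W, Nat.card (AO (G.induce {v' | v' ≠ u})) := by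
  rw [← card_sigma_eq]
  exact Nat.card_le_card_of_injective _ (phi_inj G)

lemma card_ao_eq_of_top (hG : G = ⊤) :
    Nat.card (AO G) = ∑ u : W, Nat.card (AO (G.induce {v' | v' ≠ u})) := by
  rw [← card_sigma_eq]
  exact Nat.card_congr (Equiv.ofBijective _ ⟨phi_inj G, phi_surj_of_top G hG⟩)

lemma card_ao_lt_of_ne (hG : G ≠ ⊤) :
    Nat.card (AO G) < ∑ u : W, Nat.card (AO (G.induce {v' | v' ≠ u})) := by
  classical
  rw [← card_sigma_eq]
  letI : Fintype (AO G) := Fintype.ofFinite _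
  letI : Fintype (Σ u : W, AO (G.induce {v' | v' ≠ u})) := Fintype.ofFinite _
  rw [Nat.card_eq_fintype_card, Nat.card_eq_fintype_card]
  obtain ⟨p, hp⟩ := phi_not_surj G hG
  exact Fintype.card_lt_of_injective_of_notMem _ (phi_inj G) hp

end Counting

end Chrom17

theorem stmt17 {V : Type*} [Fintype V] [Nonempty V] (G : SimpleGraph V)
    (P : Polynomial ℝ) (Pu : V → Polynomial ℝ) (hP : IsChromPoly G P)
    (hPu : ∀ u : V, IsChromPoly (G.induce {v | v ≠ u}) (Pu u)) :
    (-1 : ℝ) ^ (Fintype.card V + 1) * ∑ u : V, (Pu u).eval (-1) ≥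
      (-1 : ℝ) ^ (Fintype.card V) * P.eval (-1) ∧
    ((-1 : ℝ) ^ (Fintype.card V + 1) * ∑ u : V, (Pu u).eval (-1) =
      (-1 : ℝ) ^ (Fintype.card V) * P.eval (-1) ↔ G = ⊤) := by
  classical
  have hn : Fintype.card V = Nat.card V := Nat.card_eq_fintype_card.symm
  have hV1 : 1 ≤ Nat.card V := Nat.card_pos
  have hR : (-1 : ℝ) ^ (Fintype.card V) * P.eval (-1) = (Nat.card (Chrom17.AO G) : ℝ) := by
    rw [hn]
    exact Chrom17.eval_val G P hP
  have hu : ∀ u : V, (-1:ℝ) ^ (Fintype.card V + 1) * (Pu u).eval (-1) =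
      (Nat.card (Chrom17.AO (G.induce {v | v ≠ u})) : ℝ) := by
    intro u
    have h0 := Chrom17.eval_val (G.induce {v | v ≠ u}) (Pu u) (hPu u)
    have hcard : Nat.card ↥{v | v ≠ u} = Nat.card V - 1 := Chrom17.card_compl_singleton u
    rw [hcard] at h0
    have hexp : Fintype.card V + 1 = 2 + (Nat.card V - 1) := by
      rw [hn]
      omega
    rw [hexp, pow_add, neg_one_sq, one_mul]
    exact h0
  have hL : (-1 : ℝ) ^ (Fintype.card V + 1) * ∑ u : V, (Pu u).eval (-1) =
      ((∑ u : V, Nat.card (Chrom17.AO (G.induce {v | v ≠ u})) : ℕ) : ℝ) := by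
    rw [Finset.mul_sum]
    push_cast
    exact Finset.sum_congr rfl fun u _ => hu u
  constructor
  · rw [hL, hR]
    exact_mod_cast Chrom17.card_ao_le G
  · rw [hL, hR]
    constructor
    · intro h
      by_contra hne
      have hlt := Chrom17.card_ao_lt_of_ne G hne
      have heq : (∑ u : V, Nat.card (Chrom17.AO (G.induce {v | v ≠ u}))) =
          Nat.card (Chrom17.AO G) := Nat.cast_injective h
      omega
    · intro h
      rw [Chrom17.card_ao_eq_of_top G h]
end
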